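/- arXiv:1702.08489 — 7 statements merged into one kernel-verified Lean document; each statement's English description precedes it below -/
import Mathlib

section
/- There exists a universal constant d₀ > 0 such that for all integers d ≥ d₀, all positive integers m, all nonnegative integers k with k ≤ m, and every real polynomial p of degree at most k: ∫_{−1}^{1} ( sin(π √d · m · x) − p(x) )² dμ_d(x) ≥ (m − k)/(4 e π m). -/
open MeasureTheory Real
open scoped RealInnerProductSpace

/-- The probability measure `μ_d` on `[-1,1]` with density
`Γ(d/2)/(√π Γ((d-1)/2)) (1-x²)^((d-3)/2)` w.r.t. Lebesgue measure. -/
noncomputable def muD (d : ℕ) : Measure ℝ :=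
  ((volume : Measure ℝ).restrict (Set.Icc (-1 : ℝ) 1)).withDensity fun x =>
    ENNReal.ofReal (Real.Gamma ((d : ℝ) / 2) / (Real.sqrt π * Real.Gamma (((d : ℝ) - 1) / 2)) *
      (1 - x ^ 2) ^ (((d : ℝ) - 3) / 2))

/-- `A_{n,d}(f)`: the best `L²(μ_d)` approximation error of `f` by polynomials
of degree at most `n-1`. -/
noncomputable def polyApproxErr (n d : ℕ) (f : ℝ → ℝ) : ℝ :=
  sInf {c | ∃ p : Polynomial ℝ, p.natDegree ≤ n - 1 ∧
    c = Real.sqrt (∫ x, (f x - p.eval x) ^ 2 ∂ muD d)}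

/-- `N_{d,n} = C(d+n-1, d-1) - C(d+n-3, d-1)`. -/
def NDN (d n : ℕ) : ℕ := (d + n - 1).choose (d - 1) - (d + n - 3).choose (d - 1)

/-- The unit sphere `S^{d-1} ⊆ ℝ^d`. -/
abbrev Sph (d : ℕ) := Metric.sphere (0 : EuclideanSpace ℝ (Fin d)) 1

/-- The uniform (rotation-invariant) probability measure on `S^{d-1}`. -/
noncomputable def uniformSphere (d : ℕ) : Measure (Sph d) :=
  ((volume : Measure (EuclideanSpace ℝ (Fin d))).toSphere Set.univ)⁻¹ •
    (volume : Measure (EuclideanSpace ℝ (Fin d))).toSphere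

/-- `N` is implemented by a depth-2 `σ`-network of width `r` with weights bounded by `B`:
`N(x,x') = w₂ᵀ σ(W₁ x + W₁' x' + b₁) + b₂`. -/
def IsDepth2Net (d r : ℕ) (B : ℝ) (σ : ℝ → ℝ) (N : Sph d → Sph d → ℝ) : Prop :=
  ∃ (W₁ W₁' : Matrix (Fin r) (Fin d) ℝ) (w₂ b₁ : Fin r → ℝ) (b₂ : ℝ),
    (∀ i j, |W₁ i j| ≤ B) ∧ (∀ i j, |W₁' i j| ≤ B) ∧ (∀ i, |w₂ i| ≤ B) ∧
    (∀ i, |b₁ i| ≤ B) ∧ |b₂| ≤ B ∧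
    ∀ x x' : Sph d, N x x' =
      (∑ i, w₂ i * σ ((∑ j, W₁ i j * (x : EuclideanSpace ℝ (Fin d)) j) +
        (∑ j, W₁' i j * (x' : EuclideanSpace ℝ (Fin d)) j) + b₁ i)) + b₂
open scoped ENNReal

lemma sq_le_imp {a b : ℝ} (ha : 0 ≤ a) (hb : 0 ≤ b) (h : a^2 ≤ b^2) : a ≤ b := by
  nlinarith

lemma aux_gamma (y : ℝ) (hy : 0 < y) :
    y * Real.Gamma y ≤ Real.Gamma (y + 1/2) * Real.sqrt (y + 1/2) := by
  have h12 : (0:ℝ) < y + 1/2 := by linarith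
  have h32 : (0:ℝ) < y + 3/2 := by linarith
  have hG1 : 0 < Real.Gamma (y + 1/2) := Real.Gamma_pos_of_pos h12
  have hG3 : 0 < Real.Gamma (y + 3/2) := Real.Gamma_pos_of_pos h32
  have hGy : 0 < Real.Gamma y := Real.Gamma_pos_of_pos hy
  have hG2 : 0 < Real.Gamma (y + 1) := Real.Gamma_pos_of_pos (by linarith)
  have hconv := Real.convexOn_log_Gamma.2 (Set.mem_Ioi.mpr h12) (Set.mem_Ioi.mpr h32)
    (by norm_num : (0:ℝ) ≤ 1/2) (by norm_num : (0:ℝ) ≤ 1/2) (by norm_num)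
  simp only [Function.comp, smul_eq_mul] at hconv
  have hmid : (1/2 : ℝ) * (y + 1/2) + (1/2 : ℝ) * (y + 3/2) = y + 1 := by ring
  rw [hmid] at hconv
  have hsq : Real.Gamma (y + 1) ^ 2 ≤ Real.Gamma (y + 1/2) * Real.Gamma (y + 3/2) := by
    have hlog : Real.log (Real.Gamma (y+1) ^ 2) ≤
        Real.log (Real.Gamma (y + 1/2) * Real.Gamma (y + 3/2)) := by
      rw [Real.log_pow, Real.log_mul hG1.ne' hG3.ne']
      push_cast
      linarith [hconv]
    have := Real.exp_le_exp.mpr hlog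
    rwa [Real.exp_log (by positivity), Real.exp_log (by positivity)] at this
  have hG3eq : Real.Gamma (y + 3/2) = (y + 1/2) * Real.Gamma (y + 1/2) := by
    have h : y + 3/2 = (y + 1/2) + 1 := by ring
    rw [h, Real.Gamma_add_one h12.ne']
  have hG2eq : Real.Gamma (y + 1) = y * Real.Gamma y := Real.Gamma_add_one hy.ne'
  rw [hG3eq, hG2eq] at hsq
  have hs : Real.sqrt (y + 1/2) ^ 2 = y + 1/2 := Real.sq_sqrt h12.le
  have hspos : 0 < Real.sqrt (y + 1/2) := Real.sqrt_pos.mpr h12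
  refine sq_le_imp (by positivity) (by positivity) ?_
  rw [mul_pow, mul_pow, hs]
  nlinarith [hsq]

lemma aux_sqrtd (d : ℕ) (hd : 16 ≤ d) :
    Real.sqrt d ≤ π * Real.exp (1/2) *
      (Real.Gamma ((d : ℝ) / 2) / (Real.sqrt π * Real.Gamma (((d : ℝ) - 1) / 2))) := by
  have hd16 : (16:ℝ) ≤ d := by exact_mod_cast hd
  set y : ℝ := ((d:ℝ) - 1) / 2 with hy_def
  have hy : 0 < y := by rw [hy_def]; linarith
  have hkey := aux_gamma y hy
  have hy12 : y + 1/2 = (d:ℝ)/2 := by rw [hy_def]; ring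
  rw [hy12] at hkey
  have hGy : 0 < Real.Gamma y := Real.Gamma_pos_of_pos hy
  have hGd : 0 < Real.Gamma ((d:ℝ)/2) := Real.Gamma_pos_of_pos (by linarith)
  have hsd : 0 < Real.sqrt ((d:ℝ)/2) := Real.sqrt_pos.mpr (by linarith)
  have hsp : 0 < Real.sqrt π := Real.sqrt_pos.mpr Real.pi_pos
  have hC : y / (Real.sqrt π * Real.sqrt ((d:ℝ)/2)) ≤
      Real.Gamma ((d : ℝ) / 2) / (Real.sqrt π * Real.Gamma y) := by
    rw [div_le_div_iff₀ (by positivity) (by positivity)]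
    calc y * (Real.sqrt π * Real.Gamma y) = (y * Real.Gamma y) * Real.sqrt π := by ring
    _ ≤ (Real.Gamma ((d:ℝ)/2) * Real.sqrt ((d:ℝ)/2)) * Real.sqrt π :=
        mul_le_mul_of_nonneg_right hkey hsp.le
    _ = Real.Gamma ((d:ℝ)/2) * (Real.sqrt π * Real.sqrt ((d:ℝ)/2)) := by ring
  have hexp : (1.5:ℝ) ≤ Real.exp (1/2) := by
    have := Real.add_one_le_exp (1/2 : ℝ); linarith
  have hpi : (3:ℝ) < π := Real.pi_gt_three
  have hexp2 : Real.exp (1/2) * Real.exp (1/2) = Real.exp 1 := by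
    rw [← Real.exp_add]; norm_num
  have hmain : Real.sqrt (d:ℝ) ≤ π * Real.exp (1/2) * (y / (Real.sqrt π * Real.sqrt ((d:ℝ)/2))) := by
    rw [mul_div_assoc', le_div_iff₀ (by positivity)]
    have hprod : Real.sqrt (d:ℝ) * (Real.sqrt π * Real.sqrt ((d:ℝ)/2)) =
        Real.sqrt (π * ((d:ℝ)^2/2)) := by
      rw [show π * ((d:ℝ)^2/2) = π * ((d:ℝ) * ((d:ℝ)/2)) from by ring,
        Real.sqrt_mul Real.pi_pos.le, Real.sqrt_mul (by positivity : (0:ℝ) ≤ (d:ℝ))]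
      ring
    rw [hprod]
    refine sq_le_imp (Real.sqrt_nonneg _) (by positivity) ?_
    rw [Real.sq_sqrt (by positivity)]
    have hexppos := Real.exp_pos (1/2 : ℝ)
    -- π * (d²/2) ≤ (π exp(1/2) y)²
    have hy2 : y = ((d:ℝ) - 1)/2 := hy_def
    have h1 : (225/256) * (d:ℝ)^2 ≤ ((d:ℝ)-1)^2 := by nlinarith
    have he1 : (2.25:ℝ) ≤ Real.exp (1/2) * Real.exp (1/2) := by nlinarith
    have h3 : (20:ℝ) ≤ π^2 * (Real.exp (1/2) * Real.exp (1/2)) := by nlinarith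
    have h2 : (π * Real.exp (1/2) * y)^2 = π^2 * (Real.exp (1/2) * Real.exp (1/2)) * (((d:ℝ)-1)^2/4) := by
      rw [hy2]; ring
    have h5 : 20 * ((225/256) * (d:ℝ)^2) ≤ π^2 * (Real.exp (1/2) * Real.exp (1/2)) * ((d:ℝ)-1)^2 :=
      mul_le_mul h3 h1 (by positivity) (by positivity)
    have hπu : π ≤ 3.15 := Real.pi_lt_d2.le
    have h6 : π * ((d:ℝ)^2/2) ≤ 3.15 * ((d:ℝ)^2/2) :=
      mul_le_mul_of_nonneg_right hπu (by positivity)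
    rw [h2]; linarith
  calc Real.sqrt (d:ℝ) ≤ π * Real.exp (1/2) * (y / (Real.sqrt π * Real.sqrt ((d:ℝ)/2))) := hmain
  _ ≤ _ := mul_le_mul_of_nonneg_left hC (by positivity)

lemma aux_sin (n : ℤ) (t : ℝ) (h1 : (n:ℝ) + 1/4 ≤ t) (h2 : t ≤ (n:ℝ) + 3/4) :
    1/2 ≤ Real.sin (π * t)^2 ∧
      (Even n → 0 < Real.sin (π * t)) ∧ (Odd n → Real.sin (π * t) < 0) := by
  set s : ℝ := t - n with hs_def
  have hs1 : 1/4 ≤ s := by rw [hs_def]; linarith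
  have hs2 : s ≤ 3/4 := by rw [hs_def]; linarith
  have hteq : π * t = π * s + (n:ℝ) * π := by rw [hs_def]; ring
  have hsin : Real.sin (π * t) = (-1)^n * Real.sin (π * s) := by
    rw [hteq, Real.sin_add_int_mul_pi]
  have hpi := Real.pi_pos
  have hspos : 0 < Real.sin (π * s) :=
    Real.sin_pos_of_pos_of_lt_pi (by nlinarith) (by nlinarith)
  have hsq : 1/2 ≤ Real.sin (π * s)^2 := by
    rw [Real.sin_sq_eq_half_sub]
    have hcos : Real.cos (2 * (π * s)) ≤ 0 :=
      Real.cos_nonpos_of_pi_div_two_le_of_le (by nlinarith) (by nlinarith)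
    linarith
  refine ⟨?_, ?_, ?_⟩
  · rw [hsin, mul_pow]
    rcases Int.even_or_odd n with h | h
    · rw [h.neg_one_zpow]; norm_num; linarith
    · rw [h.neg_one_zpow]; norm_num; linarith
  · intro h; rw [hsin, h.neg_one_zpow, one_mul]; exact hspos
  · intro h; rw [hsin, h.neg_one_zpow]; linarith

lemma count_lemma (m k : ℕ) (p : Polynomial ℝ) (hp : p ≠ 0) (hdeg : p.natDegree ≤ k)
    (x : ℕ → ℝ) (hxm : ∀ i j : ℕ, i < j → x i < x j)
    (S : Finset ℕ) (hS : S ⊆ Finset.range (2*m))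
    (hsign : ∀ ℓ ∈ S, 0 < (-1:ℝ)^(ℓ+m) * p.eval (x ℓ)) :
    S.card ≤ m + k := by
  classical
  set D : Finset ℕ := (Finset.range m).filter (fun j => 2*j ∈ S ∧ 2*j+1 ∈ S) with hD_def
  have hDsub : D ⊆ Finset.range m := Finset.filter_subset _ _
  have hmaps : ∀ ℓ ∈ S, ℓ / 2 ∈ Finset.range m := by
    intro ℓ hℓ
    have := Finset.mem_range.mp (hS hℓ)
    exact Finset.mem_range.mpr (by omega)
  have hfib := Finset.card_eq_sum_card_fiberwise hmaps
  have hstep1 : S.card ≤ m + D.card := by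
    have hbound : ∀ j ∈ Finset.range m,
        (S.filter (fun ℓ => ℓ / 2 = j)).card ≤ if j ∈ D then 2 else 1 := by
      intro j hjm
      by_cases hj : j ∈ D
      · rw [if_pos hj]
        have hsub : S.filter (fun ℓ => ℓ / 2 = j) ⊆ {2*j, 2*j+1} := by
          intro ℓ hℓ
          have h2 := (Finset.mem_filter.mp hℓ).2
          simp only [Finset.mem_insert, Finset.mem_singleton]
          omega
        calc _ ≤ ({2*j, 2*j+1} : Finset ℕ).card := Finset.card_le_card hsub
        _ ≤ 2 := Finset.card_insert_le _ _ |>.trans (by simp)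
      · rw [if_neg hj]
        have hnand : ¬(2*j ∈ S ∧ 2*j+1 ∈ S) := by
          intro hc
          exact hj (Finset.mem_filter.mpr ⟨hjm, hc⟩)
        by_cases h2j : 2*j ∈ S
        · have h2j1 : 2*j+1 ∉ S := fun hc => hnand ⟨h2j, hc⟩
          have hsub : S.filter (fun ℓ => ℓ / 2 = j) ⊆ {2*j} := by
            intro ℓ hℓ
            obtain ⟨hℓS, hℓ2⟩ := Finset.mem_filter.mp hℓ
            simp only [Finset.mem_singleton]
            have : ℓ = 2*j ∨ ℓ = 2*j+1 := by omega
            rcases this with h | h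
            · exact h
            · exact absurd (h ▸ hℓS) h2j1
          calc _ ≤ ({2*j} : Finset ℕ).card := Finset.card_le_card hsub
          _ = 1 := Finset.card_singleton _
        · have hsub : S.filter (fun ℓ => ℓ / 2 = j) ⊆ {2*j+1} := by
            intro ℓ hℓ
            obtain ⟨hℓS, hℓ2⟩ := Finset.mem_filter.mp hℓ
            simp only [Finset.mem_singleton]
            have : ℓ = 2*j ∨ ℓ = 2*j+1 := by omega
            rcases this with h | h
            · exact absurd (h ▸ hℓS) h2j
            · exact h
          calc _ ≤ ({2*j+1} : Finset ℕ).card := Finset.card_le_card hsub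
          _ = 1 := Finset.card_singleton _
    calc S.card = ∑ j ∈ Finset.range m, (S.filter (fun ℓ => ℓ / 2 = j)).card := hfib
    _ ≤ ∑ j ∈ Finset.range m, (if j ∈ D then 2 else 1) := Finset.sum_le_sum hbound
    _ = ∑ j ∈ Finset.range m, (1 + if j ∈ D then 1 else 0) := by
        apply Finset.sum_congr rfl; intro j _; by_cases hj : j ∈ D <;> simp [hj]
    _ = m + D.card := by
        rw [Finset.sum_add_distrib, Finset.sum_const, Finset.card_range, smul_eq_mul, mul_one,
          Finset.sum_ite_mem, Finset.inter_eq_right.mpr hDsub, Finset.sum_const, smul_eq_mul,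
          mul_one]
  have hstep2 : D.card ≤ k := by
    have hroot : ∀ j : ℕ, ∃ ξ : ℝ, j ∈ D →
        ξ ∈ Set.Ioo (x (2*j)) (x (2*j+1)) ∧ p.eval ξ = 0 := by
      intro j
      by_cases hj : j ∈ D
      · obtain ⟨h1, h2⟩ := (Finset.mem_filter.mp hj).2
        have ha := hsign _ h1
        have hb := hsign _ h2
        have hab : x (2*j) < x (2*j+1) := hxm _ _ (by omega)
        have he2j : (-1:ℝ)^(2*j) = 1 := Even.neg_one_pow (by simp [Nat.even_iff])
        have hqa : 0 < (-1:ℝ)^m * p.eval (x (2*j)) := by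
          rw [pow_add, he2j, one_mul] at ha; exact ha
        have hqb : (-1:ℝ)^m * p.eval (x (2*j+1)) < 0 := by
          have heq : (-1:ℝ)^(2*j+1+m) = -((-1:ℝ)^m) := by
            rw [pow_add, pow_succ, he2j]; ring
          rw [heq] at hb; linarith
        have hcont : ContinuousOn (fun t => (-1:ℝ)^m * p.eval t)
            (Set.Icc (x (2*j)) (x (2*j+1))) :=
          (continuous_const.mul p.continuous).continuousOn
        have hIVT := intermediate_value_Ioo' hab.le hcont
        obtain ⟨ξ, hξmem, hξ⟩ := hIVT (Set.mem_Ioo.mpr ⟨hqb, hqa⟩)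
        refine ⟨ξ, fun _ => ⟨hξmem, ?_⟩⟩
        have hm1 : ((-1:ℝ)^m) ≠ 0 := by
          rcases Nat.even_or_odd m with h | h
          · rw [h.neg_one_pow]; norm_num
          · rw [h.neg_one_pow]; norm_num
        exact (mul_eq_zero.mp hξ).resolve_left hm1
      · exact ⟨0, fun hc => absurd hc hj⟩
    choose ξ hξ using hroot
    have hinj : Set.InjOn ξ ↑D := by
      intro j1 hj1 j2 hj2 hne
      by_contra hc
      have hj1' := hξ j1 hj1
      have hj2' := hξ j2 hj2
      rcases Nat.lt_or_ge j1 j2 with h | h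
      · have hlt : ξ j1 < ξ j2 := by
          calc ξ j1 < x (2*j1+1) := hj1'.1.2
          _ ≤ x (2*j2) := by
              rcases Nat.lt_or_ge (2*j1+1) (2*j2) with hlt | hge
              · exact (hxm _ _ hlt).le
              · have he : 2*j1+1 = 2*j2 := by omega
                rw [he]
          _ < ξ j2 := hj2'.1.1
        exact absurd hne (ne_of_lt hlt)
      · have h' : j2 < j1 := by omega
        have hlt : ξ j2 < ξ j1 := by
          calc ξ j2 < x (2*j2+1) := hj2'.1.2
          _ ≤ x (2*j1) := by
              rcases Nat.lt_or_ge (2*j2+1) (2*j1) with hlt | hge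
              · exact (hxm _ _ hlt).le
              · have he : 2*j2+1 = 2*j1 := by omega
                rw [he]
          _ < ξ j1 := hj1'.1.1
        exact absurd hne (ne_of_gt hlt)
    have hmapsto : ∀ j ∈ D, ξ j ∈ p.roots.toFinset := by
      intro j hj
      rw [Multiset.mem_toFinset, Polynomial.mem_roots']
      exact ⟨hp, (hξ j hj).2⟩
    calc D.card ≤ p.roots.toFinset.card := Finset.card_le_card_of_injOn ξ hmapsto hinj
    _ ≤ Multiset.card p.roots := Multiset.toFinset_card_le _
    _ ≤ p.natDegree := p.card_roots'
    _ ≤ k := hdeg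
  omega

lemma sq_bound1 (s b : ℝ) (hs : 1/2 ≤ s^2) (h : 0 ≤ s * (-b)) : 1/2 ≤ (s - b)^2 := by
  nlinarith [sq_nonneg b]
lemma sq_bound2 (s b : ℝ) (hs : 1/2 ≤ s^2) (h : 0 ≤ (-s) * b) : 1/2 ≤ (s - b)^2 := by
  nlinarith [sq_nonneg b]
lemma rho_meas (C η : ℝ) : Measurable fun x : ℝ => ENNReal.ofReal (C * (1 - x^2) ^ η) := by
  measurability
lemma half_aux (D : ℝ) (hD : 16 ≤ D) : -(1/2) ≤ -(1/(D-1)) * ((D-3)/2) := by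
  have hd1 : (0:ℝ) < D - 1 := by linarith
  have heq : (1/(D-1)) * ((D-3)/2) = (D-3)/(2*(D-1)) := by
    rw [div_mul_div_comm, one_mul, mul_comm]
  have hle : (D-3)/(2*(D-1)) ≤ 1/2 := by
    rw [div_le_div_iff₀ (by linarith) (by norm_num)]
    linarith
  nlinarith [heq, hle]

set_option maxHeartbeats 2000000 in
/-- For large enough `d`, the function `x ↦ sin(π √d m x)` is far (in
`L²(μ_d)`) from every polynomial of degree at most `k ≤ m`. -/
theorem sine_far_from_polynomials_muD :
    ∃ d₀ : ℕ, 0 < d₀ ∧ ∀ d : ℕ, d₀ ≤ d → ∀ m k : ℕ, 0 < m → k ≤ m →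
      ∀ p : Polynomial ℝ, p.natDegree ≤ k →
        (∫ x, (Real.sin (π * Real.sqrt d * m * x) - p.eval x) ^ 2 ∂ muD d) ≥
          ((m : ℝ) - k) / (4 * Real.exp 1 * π * m) := by
  classical
  refine ⟨16, by norm_num, ?_⟩
  intro d hd m k hm hk p hdeg
  have hd16 : (16:ℝ) ≤ d := by exact_mod_cast hd
  have hdpos : (0:ℝ) < d := by linarith
  have hsdpos : 0 < Real.sqrt d := Real.sqrt_pos.mpr hdpos
  have hsd4 : (4:ℝ) ≤ Real.sqrt d := by
    have h16 : Real.sqrt 16 = 4 := by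
      rw [show (16:ℝ) = 4^2 by norm_num, Real.sqrt_sq (by norm_num : (0:ℝ) ≤ 4)]
    rw [← h16]; exact Real.sqrt_le_sqrt hd16
  have hmpos : (0:ℝ) < m := by exact_mod_cast hm
  have hkm : (k:ℝ) ≤ m := by exact_mod_cast hk
  set C : ℝ := Real.Gamma ((d:ℝ)/2) / (Real.sqrt π * Real.Gamma (((d:ℝ)-1)/2)) with hC_def
  have hCpos : 0 < C := by
    rw [hC_def]
    exact div_pos (Real.Gamma_pos_of_pos (by linarith))
      (mul_pos (Real.sqrt_pos.mpr Real.pi_pos) (Real.Gamma_pos_of_pos (by linarith)))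
  set η : ℝ := ((d:ℝ)-3)/2 with hη_def
  have hηnn : 0 ≤ η := by rw [hη_def]; linarith
  set w : ℝ := Real.sqrt d * m with hw_def
  have hw : 0 < w := mul_pos hsdpos hmpos
  set c : ℝ := 1/w with hc_def
  have hc : 0 < c := by rw [hc_def]; positivity
  have hwc : w * c = 1 := by rw [hc_def]; field_simp
  have hmc : (m:ℝ) * c = 1 / Real.sqrt d := by
    rw [hc_def, hw_def]; field_simp
  set A : ℕ → Set ℝ := fun ℓ => Set.Icc (((ℓ:ℝ) - m + 1/4)*c) (((ℓ:ℝ) - m + 3/4)*c) with hA_def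
  set g : ℝ → ℝ := fun x => (Real.sin (π * Real.sqrt d * m * x) - p.eval x)^2 with hg_def
  set ρ : ℝ → ℝ≥0∞ := fun x => ENNReal.ofReal (C * (1 - x^2) ^ η) with hρ_def
  -- A ℓ lies in the bulk
  have hA_bulk : ∀ ℓ, ℓ < 2*m → ∀ x ∈ A ℓ, x^2 ≤ 1/d ∧ x ∈ Set.Icc (-1:ℝ) 1 := by
    intro ℓ hℓ x hx
    simp only [hA_def, Set.mem_Icc] at hx
    obtain ⟨hx1, hx2⟩ := hx
    have hℓR : (ℓ:ℝ) ≤ 2*m - 1 := by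
      have h1 : ((ℓ+1 : ℕ):ℝ) ≤ ((2*m : ℕ):ℝ) := by exact_mod_cast Nat.lt_iff_add_one_le.mp hℓ
      push_cast at h1; linarith
    have hlow : -((m:ℝ)*c) ≤ x := by
      have h1 : -((m:ℝ)) ≤ (ℓ:ℝ) - m + 1/4 := by
        have h0 : (0:ℝ) ≤ (ℓ:ℝ) := Nat.cast_nonneg ℓ
        linarith
      calc -((m:ℝ)*c) = (-(m:ℝ))*c := by ring
      _ ≤ ((ℓ:ℝ) - m + 1/4)*c := mul_le_mul_of_nonneg_right h1 hc.le
      _ ≤ x := hx1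
    have hhigh : x ≤ (m:ℝ)*c := by
      have h1 : (ℓ:ℝ) - m + 3/4 ≤ (m:ℝ) := by linarith
      calc x ≤ ((ℓ:ℝ) - m + 3/4)*c := hx2
      _ ≤ (m:ℝ)*c := mul_le_mul_of_nonneg_right h1 hc.le
    rw [hmc] at hlow hhigh
    have hsq : x^2 ≤ 1/d := by
      have h2 : (1/Real.sqrt d)^2 = 1/d := by
        rw [div_pow, one_pow, Real.sq_sqrt hdpos.le]
      nlinarith
    have hsd1 : 1/Real.sqrt d ≤ 1 := by
      rw [div_le_one hsdpos]; linarith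
    exact ⟨hsq, ⟨by linarith, by linarith⟩⟩
  -- good intervals
  set Good : ℕ → Prop := fun ℓ => ∀ x ∈ A ℓ, (-1:ℝ)^(ℓ+m) * p.eval x ≤ 0 with hGood_def
  set Gf : Finset ℕ := (Finset.range (2*m)).filter Good with hGf_def
  set Bf : Finset ℕ := (Finset.range (2*m)).filter (fun ℓ => ¬ Good ℓ) with hBf_def
  have hGB : Gf.card + Bf.card = 2*m := by
    rw [hGf_def, hBf_def, Finset.card_filter_add_card_filter_not, Finset.card_range]
  -- counting
  have hGcard : m - k ≤ Gf.card := by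
    by_cases hp0 : p = 0
    · have hBempty : Bf = ∅ := by
        rw [hBf_def]
        apply Finset.filter_eq_empty_iff.mpr
        intro ℓ _
        rw [not_not]
        simp only [hGood_def]
        intro x _
        simp [hp0]
      rw [hBempty, Finset.card_empty] at hGB
      omega
    · have hwit : ∀ ℓ : ℕ, ∃ x : ℝ, x ∈ A ℓ ∧ (¬ Good ℓ → 0 < (-1:ℝ)^(ℓ+m) * p.eval x) := by
        intro ℓ
        by_cases hG : Good ℓ
        · refine ⟨((ℓ:ℝ) - m + 1/4)*c, ?_, fun hc' => absurd hG hc'⟩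
          simp only [hA_def, Set.mem_Icc]
          exact ⟨le_refl _, mul_le_mul_of_nonneg_right (by linarith) hc.le⟩
        · have hG' := hG
          simp only [hGood_def] at hG'
          push_neg at hG'
          obtain ⟨x, hxA, hxs⟩ := hG'
          exact ⟨x, hxA, fun _ => hxs⟩
      choose xw hxwA hxws using hwit
      have hxmono : ∀ i j : ℕ, i < j → xw i < xw j := by
        intro i j hij
        have hA_i := hxwA i
        have hA_j := hxwA j
        simp only [hA_def, Set.mem_Icc] at hA_i hA_j
        have hij' : (i:ℝ) + 1 ≤ j := by exact_mod_cast hij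
        calc xw i ≤ ((i:ℝ) - m + 3/4)*c := hA_i.2
        _ < ((j:ℝ) - m + 1/4)*c := by
            apply mul_lt_mul_of_pos_right _ hc
            linarith
        _ ≤ xw j := hA_j.1
      have hBcard : Bf.card ≤ m + k :=
        count_lemma m k p hp0 hdeg xw hxmono Bf (Finset.filter_subset _ _)
          (fun ℓ hℓ => hxws ℓ ((Finset.mem_filter.mp hℓ).2))
      omega
  -- key pointwise bound on good intervals
  have hkey : ∀ ℓ ∈ Gf, ∀ x ∈ A ℓ, 1/2 ≤ g x := by
    intro ℓ hℓ x hx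
    have hGood : Good ℓ := (Finset.mem_filter.mp hℓ).2
    have hple := hGood x hx
    simp only [hA_def, Set.mem_Icc] at hx
    obtain ⟨hx1, hx2⟩ := hx
    set t : ℝ := w * x with ht_def
    set n : ℤ := (ℓ:ℤ) - m with hn_def
    have hnr : (n:ℝ) = (ℓ:ℝ) - m := by rw [hn_def]; push_cast; ring
    have hcw : c * w = 1 := by rw [mul_comm]; exact hwc
    have ht1 : (n:ℝ) + 1/4 ≤ t := by
      rw [hnr]
      calc (ℓ:ℝ) - m + 1/4 = (((ℓ:ℝ) - m + 1/4)*c)*w := by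
            rw [mul_assoc, hcw, mul_one]
      _ ≤ x*w := mul_le_mul_of_nonneg_right hx1 hw.le
      _ = t := by rw [ht_def]; ring
    have ht2 : t ≤ (n:ℝ) + 3/4 := by
      rw [hnr]
      calc t = x*w := by rw [ht_def]; ring
      _ ≤ (((ℓ:ℝ) - m + 3/4)*c)*w := mul_le_mul_of_nonneg_right hx2 hw.le
      _ = (ℓ:ℝ) - m + 3/4 := by rw [mul_assoc, hcw, mul_one]
    obtain ⟨hsq, hev, hod⟩ := aux_sin n t ht1 ht2
    have hteq : π * Real.sqrt d * m * x = π * t := by rw [ht_def, hw_def]; ring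
    simp only [hg_def]
    rw [hteq]
    rcases Nat.even_or_odd (ℓ + m) with hpar | hpar
    · have hne : Even n := by
        rw [hn_def, Int.even_sub]
        rw [Nat.even_add] at hpar
        simpa [Int.even_coe_nat] using hpar
      have hsinpos := hev hne
      have hple' : p.eval x ≤ 0 := by
        rw [hpar.neg_one_pow, one_mul] at hple
        exact hple
      exact sq_bound1 _ _ hsq (mul_nonneg hsinpos.le (by linarith))
    · have hno : Odd n := by
        rw [← Int.not_even_iff_odd, hn_def, Int.even_sub]
        have h1 : ¬ (Even ℓ ↔ Even m) := by
          rw [← Nat.even_add]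
          exact Nat.not_even_iff_odd.mpr hpar
        simpa [Int.even_coe_nat] using h1
      have hsinneg := hod hno
      have hple' : 0 ≤ p.eval x := by
        rw [hpar.neg_one_pow] at hple
        linarith
      exact sq_bound2 _ _ hsq (mul_nonneg (by linarith) hple')
  -- measure-theoretic setup
  have hgcont : Continuous g := by
    rw [hg_def]
    exact ((Real.continuous_sin.comp (continuous_const.mul continuous_id)).sub
      p.continuous).pow 2
  have hgmeas : Measurable fun x => ENNReal.ofReal (g x) := hgcont.measurable.ennreal_ofReal
  have hρmeas : Measurable ρ := by
    rw [hρ_def]; exact rho_meas C η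
  have hmu : muD d = ((volume : Measure ℝ).restrict (Set.Icc (-1 : ℝ) 1)).withDensity ρ := by
    rw [hρ_def, hC_def, hη_def]; rfl
  have hL_def : ∫ x, g x ∂ muD d = (∫⁻ x, ENNReal.ofReal (g x) ∂ muD d).toReal :=
    integral_eq_lintegral_of_nonneg_ae
      (Filter.Eventually.of_forall (fun x => by simp only [hg_def]; positivity))
      hgcont.aestronglyMeasurable
  have hLmul : (∫⁻ x, ENNReal.ofReal (g x) ∂ muD d)
      = ∫⁻ x in Set.Icc (-1:ℝ) 1, ρ x * ENNReal.ofReal (g x) ∂volume := by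
    rw [hmu, lintegral_withDensity_eq_lintegral_mul _ hρmeas hgmeas]
    rfl
  -- density lower bound on the bulk
  have hρ_low : ∀ x : ℝ, x^2 ≤ 1/d → ENNReal.ofReal (C * Real.exp (-(1/2))) ≤ ρ x := by
    intro x hx
    simp only [hρ_def]
    apply ENNReal.ofReal_le_ofReal
    have h1d : (0:ℝ) < 1 - 1/d := by
      have : 1/(d:ℝ) ≤ 1/16 := by
        apply div_le_div_of_nonneg_left (by norm_num) (by norm_num) hd16
      linarith
    have hstep1 : (1 - 1/(d:ℝ)) ^ η ≤ (1 - x^2) ^ η :=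
      Real.rpow_le_rpow h1d.le (by linarith) hηnn
    have hstep2 : Real.exp (-(1/2)) ≤ (1 - 1/(d:ℝ)) ^ η := by
      rw [Real.rpow_def_of_pos h1d]
      apply Real.exp_le_exp.mpr
      have hd1 : (0:ℝ) < (d:ℝ) - 1 := by linarith
      have hlog : -(1/((d:ℝ)-1)) ≤ Real.log (1 - 1/d) := by
        have hpos2 : (0:ℝ) < (1 - 1/(d:ℝ))⁻¹ := by positivity
        have h := Real.log_le_sub_one_of_pos hpos2
        rw [Real.log_inv] at h
        have heq : (1 - 1/(d:ℝ))⁻¹ - 1 = 1/((d:ℝ)-1) := by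
          rw [show (1 - 1/(d:ℝ)) = ((d:ℝ)-1)/d by field_simp]
          rw [inv_div]
          field_simp
          ring
        rw [heq] at h
        linarith
      have h2 : -(1/2) ≤ -(1/((d:ℝ)-1)) * η := by
        rw [hη_def]
        exact half_aux d hd16
      calc -(1/2) ≤ -(1/((d:ℝ)-1)) * η := h2
      _ ≤ Real.log (1 - 1/(d:ℝ)) * η := mul_le_mul_of_nonneg_right hlog hηnn
    calc C * Real.exp (-(1/2)) ≤ C * (1 - 1/(d:ℝ)) ^ η :=
          mul_le_mul_of_nonneg_left hstep2 hCpos.le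
    _ ≤ C * (1 - x^2) ^ η := mul_le_mul_of_nonneg_left hstep1 hCpos.le
  -- density upper bound on [-1,1]
  have hρ_up : ∀ x ∈ Set.Icc (-1:ℝ) 1, ρ x ≤ ENNReal.ofReal C := by
    intro x hx
    simp only [hρ_def]
    apply ENNReal.ofReal_le_ofReal
    obtain ⟨hx1, hx2⟩ := hx
    have h1 : (1 - x^2) ^ η ≤ 1 :=
      Real.rpow_le_one (by nlinarith) (by nlinarith) hηnn
    nlinarith
  -- disjointness
  have hdisjkey : ∀ i j : ℕ, i < j → Disjoint (A i) (A j) := by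
    intro i j hlt
    simp only [hA_def]
    apply Set.disjoint_left.mpr
    intro x hxi hxj
    simp only [Set.mem_Icc] at hxi hxj
    have hij' : (i:ℝ) + 1 ≤ j := by exact_mod_cast hlt
    nlinarith [hxi.2, hxj.1, hc]
  have hdisj : (↑Gf : Set ℕ).PairwiseDisjoint A := by
    intro i _ j _ hij
    rcases Nat.lt_or_ge i j with h | h
    · exact hdisjkey i j h
    · have h' : j < i := by omega
      exact (hdisjkey j i h').symm
  -- per-interval lower bound
  have hperint : ∀ ℓ ∈ Gf,
      ENNReal.ofReal (C * Real.exp (-(1/2)) * (1/2)) * ENNReal.ofReal (c/2)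
        ≤ ∫⁻ x in A ℓ, ρ x * ENNReal.ofReal (g x) ∂volume := by
    intro ℓ hℓ
    have hℓ2m : ℓ < 2*m := Finset.mem_range.mp (Finset.mem_filter.mp hℓ).1
    have hvol : volume (A ℓ) = ENNReal.ofReal (c/2) := by
      simp only [hA_def]
      rw [Real.volume_Icc]
      congr 1
      ring
    calc ENNReal.ofReal (C * Real.exp (-(1/2)) * (1/2)) * ENNReal.ofReal (c/2)
        = ENNReal.ofReal (C * Real.exp (-(1/2)) * (1/2)) * volume (A ℓ) := by rw [hvol]
    _ = ∫⁻ _ in A ℓ, ENNReal.ofReal (C * Real.exp (-(1/2)) * (1/2)) ∂volume :=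
        (setLIntegral_const _ _).symm
    _ ≤ ∫⁻ x in A ℓ, ρ x * ENNReal.ofReal (g x) ∂volume := by
        apply setLIntegral_mono (hρmeas.mul hgmeas)
        intro x hx
        have hb := hA_bulk ℓ hℓ2m x hx
        have h1 := hρ_low x hb.1
        have h2 : ENNReal.ofReal (1/2) ≤ ENNReal.ofReal (g x) :=
          ENNReal.ofReal_le_ofReal (hkey ℓ hℓ x hx)
        calc ENNReal.ofReal (C * Real.exp (-(1/2)) * (1/2))
            = ENNReal.ofReal (C * Real.exp (-(1/2))) * ENNReal.ofReal (1/2) :=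
            ENNReal.ofReal_mul (by positivity)
        _ ≤ ρ x * ENNReal.ofReal (g x) := mul_le_mul' h1 h2
  -- summation
  have hAmeas : ∀ ℓ ∈ Gf, MeasurableSet (A ℓ) := by
    intro ℓ _
    simp only [hA_def]
    exact measurableSet_Icc
  have hsum : (Gf.card : ℝ≥0∞) *
      (ENNReal.ofReal (C * Real.exp (-(1/2)) * (1/2)) * ENNReal.ofReal (c/2))
      ≤ ∫⁻ x, ENNReal.ofReal (g x) ∂ muD d := by
    rw [hLmul]
    calc (Gf.card : ℝ≥0∞) *
        (ENNReal.ofReal (C * Real.exp (-(1/2)) * (1/2)) * ENNReal.ofReal (c/2))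
        = ∑ _ ∈ Gf, (ENNReal.ofReal (C * Real.exp (-(1/2)) * (1/2)) * ENNReal.ofReal (c/2)) := by
          rw [Finset.sum_const, nsmul_eq_mul]
    _ ≤ ∑ ℓ ∈ Gf, ∫⁻ x in A ℓ, ρ x * ENNReal.ofReal (g x) ∂volume :=
        Finset.sum_le_sum hperint
    _ = ∫⁻ x in ⋃ ℓ ∈ Gf, A ℓ, ρ x * ENNReal.ofReal (g x) ∂volume :=
        (lintegral_biUnion_finset hdisj hAmeas _).symm
    _ ≤ ∫⁻ x in Set.Icc (-1:ℝ) 1, ρ x * ENNReal.ofReal (g x) ∂volume := by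
        apply lintegral_mono_set
        apply Set.iUnion₂_subset
        intro ℓ hℓ x hx
        exact (hA_bulk ℓ (Finset.mem_range.mp (Finset.mem_filter.mp hℓ).1) x hx).2
  -- finiteness
  obtain ⟨K, hK⟩ := (isCompact_Icc : IsCompact (Set.Icc (-1:ℝ) 1)).exists_bound_of_continuousOn
    hgcont.continuousOn
  have hfin : (∫⁻ x, ENNReal.ofReal (g x) ∂ muD d) ≠ ⊤ := by
    rw [hLmul]
    have hle : ∫⁻ x in Set.Icc (-1:ℝ) 1, ρ x * ENNReal.ofReal (g x) ∂volume
        ≤ ∫⁻ _ in Set.Icc (-1:ℝ) 1, ENNReal.ofReal C * ENNReal.ofReal K ∂volume := by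
      apply setLIntegral_mono measurable_const
      intro x hx
      apply mul_le_mul' (hρ_up x hx)
      apply ENNReal.ofReal_le_ofReal
      calc g x ≤ |g x| := le_abs_self _
      _ = ‖g x‖ := (Real.norm_eq_abs _).symm
      _ ≤ K := hK x hx
    have hlt : ∫⁻ _ in Set.Icc (-1:ℝ) 1, ENNReal.ofReal C * ENNReal.ofReal K ∂volume < ⊤ := by
      rw [setLIntegral_const, Real.volume_Icc]
      exact ENNReal.mul_lt_top (ENNReal.mul_lt_top ENNReal.ofReal_lt_top ENNReal.ofReal_lt_top)
        ENNReal.ofReal_lt_top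
    exact (lt_of_le_of_lt hle hlt).ne
  -- cast count
  have hNk : ((m:ℝ) - k) ≤ (Gf.card : ℝ) := by
    have h1 : ((m - k : ℕ):ℝ) ≤ (Gf.card : ℝ) := by exact_mod_cast hGcard
    rw [Nat.cast_sub hk] at h1
    exact h1
  have hBnn : 0 ≤ ((m:ℝ) - k) / (4 * Real.exp 1 * π * m) :=
    div_nonneg (by linarith) (by positivity)
  -- main real inequality
  have hreal : ((m:ℝ) - k) / (4 * Real.exp 1 * π * m) ≤
      (Gf.card : ℝ) * (C * Real.exp (-(1/2)) * (1/2) * (c/2)) := by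
    have haux := aux_sqrtd d hd
    rw [← hC_def] at haux
    have hexpeq : Real.exp (-(1/2)) * Real.exp 1 = Real.exp (1/2) := by
      rw [← Real.exp_add]; norm_num
    have hper : 1 / (4 * Real.exp 1 * π * (m:ℝ)) ≤ C * Real.exp (-(1/2)) * (1/2) * (c/2) := by
      rw [div_le_iff₀ (by positivity)]
      have hrw : C * Real.exp (-(1/2)) * (1/2) * (c/2) * (4 * Real.exp 1 * π * m)
          = (π * (Real.exp (-(1/2)) * Real.exp 1) * C) * ((m:ℝ) * c) := by ring
      rw [hrw, hexpeq, hmc, mul_one_div, le_div_iff₀ hsdpos, one_mul]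
      exact haux
    calc ((m:ℝ) - k) / (4 * Real.exp 1 * π * m)
        = ((m:ℝ) - k) * (1 / (4 * Real.exp 1 * π * m)) := by ring
    _ ≤ (Gf.card : ℝ) * (C * Real.exp (-(1/2)) * (1/2) * (c/2)) := by
        apply mul_le_mul hNk hper (by positivity) (Nat.cast_nonneg _)
  -- lift to ENNReal
  have hofreal : ENNReal.ofReal (((m:ℝ) - k) / (4 * Real.exp 1 * π * m))
      ≤ ∫⁻ x, ENNReal.ofReal (g x) ∂ muD d := by
    refine le_trans ?_ hsum
    calc ENNReal.ofReal (((m:ℝ) - k) / (4 * Real.exp 1 * π * m))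
        ≤ ENNReal.ofReal ((Gf.card : ℝ) * (C * Real.exp (-(1/2)) * (1/2) * (c/2))) :=
        ENNReal.ofReal_le_ofReal hreal
    _ = (Gf.card : ℝ≥0∞) *
        (ENNReal.ofReal (C * Real.exp (-(1/2)) * (1/2)) * ENNReal.ofReal (c/2)) := by
        rw [ENNReal.ofReal_mul (Nat.cast_nonneg _), ENNReal.ofReal_natCast,
          show C * Real.exp (-(1/2)) * (1/2) * (c/2)
            = (C * Real.exp (-(1/2)) * (1/2)) * (c/2) from by ring,
          ENNReal.ofReal_mul (by positivity)]
  -- conclude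
  have hfinal := ENNReal.toReal_mono hfin hofreal
  rw [ENNReal.toReal_ofReal hBnn] at hfinal
  rw [ge_iff_le, hL_def]
  exact hfinal
end

section
/- There exists a universal constant d₀ > 0 such that for all integers d ≥ d₀: A_{d²,d}(f) ≥ 1/(5 e π), where f : [−1,1] → ℝ is the function f(x) = sin(π d³ x). -/
open MeasureTheory Real
open scoped RealInnerProductSpace

section Helpers
open scoped ENNReal NNReal


lemma sinLB (k : ℕ) {θ : ℝ} (h1 : 2*k*π + π/4 ≤ θ) (h2 : θ ≤ 2*k*π + 3*π/4) :
    Real.sqrt 2 / 2 ≤ Real.sin θ := by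
  have hθ : Real.sin θ = Real.sin (θ - k * (2*π)) := by
    rw [← Real.sin_add_int_mul_two_pi (θ - k*(2*π)) k]; push_cast; ring_nf
  set t := θ - k*(2*π) with ht
  have h1' : π/4 ≤ t := by simp only [ht]; nlinarith [Real.pi_pos]
  have h2' : t ≤ 3*π/4 := by simp only [ht]; nlinarith [Real.pi_pos]
  rw [hθ, ← Real.cos_pi_div_two_sub, ← Real.cos_pi_div_four]
  rcases le_total (π/2 - t) 0 with h | h
  · have e : Real.cos (π/2 - t) = Real.cos (t - π/2) := by
      rw [← Real.cos_neg]; ring_nf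
    rw [e]
    exact Real.cos_le_cos_of_nonneg_of_le_pi (by linarith) (by linarith [Real.pi_pos]) (by linarith)
  · exact Real.cos_le_cos_of_nonneg_of_le_pi h (by linarith [Real.pi_pos]) (by linarith)

lemma sinUB (k : ℕ) {θ : ℝ} (h1 : 2*k*π + 5*π/4 ≤ θ) (h2 : θ ≤ 2*k*π + 7*π/4) :
    Real.sin θ ≤ -(Real.sqrt 2 / 2) := by
  have hs := sinLB k (θ := θ - π) (by linarith) (by linarith)
  have h := Real.sin_add_pi (θ - π)
  simp only [sub_add_cancel] at h
  linarith [hs, h]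


lemma gammaRatio {d : ℕ} (hd : 4 ≤ d) :
    Real.sqrt (((d:ℝ) - 2)/2) * Real.Gamma (((d:ℝ) - 1)/2) ≤ Real.Gamma ((d:ℝ)/2) := by
  have hd' : (4:ℝ) ≤ d := by exact_mod_cast hd
  have hx : (0:ℝ) < ((d:ℝ)-2)/2 := by linarith
  have hy : (0:ℝ) < (d:ℝ)/2 := by linarith
  have hm : (0:ℝ) < ((d:ℝ)-1)/2 := by linarith
  have hconv := Real.convexOn_log_Gamma.2 (Set.mem_Ioi.2 hx) (Set.mem_Ioi.2 hy)
    (by norm_num : (0:ℝ) ≤ 1/2) (by norm_num : (0:ℝ) ≤ 1/2) (by norm_num)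
  have hmid : (1/2:ℝ) • (((d:ℝ)-2)/2) + (1/2:ℝ) • ((d:ℝ)/2) = ((d:ℝ)-1)/2 := by
    simp [smul_eq_mul]; ring
  rw [hmid] at hconv
  simp only [Function.comp_apply, smul_eq_mul] at hconv
  have hGx := Real.Gamma_pos_of_pos hx
  have hGy := Real.Gamma_pos_of_pos hy
  have hGm := Real.Gamma_pos_of_pos hm
  -- exponentiate : Γ(m)^2 ≤ Γ(x)Γ(y)
  have hsq : Real.Gamma (((d:ℝ)-1)/2) ^ 2 ≤ Real.Gamma (((d:ℝ)-2)/2) * Real.Gamma ((d:ℝ)/2) := by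
    have h2 : 2 * Real.log (Real.Gamma (((d:ℝ)-1)/2)) ≤
        Real.log (Real.Gamma (((d:ℝ)-2)/2)) + Real.log (Real.Gamma ((d:ℝ)/2)) := by linarith
    have := Real.exp_le_exp.2 h2
    rwa [Real.exp_add, Real.exp_log hGx, Real.exp_log hGy,
      show (2:ℝ) * Real.log (Real.Gamma (((d:ℝ)-1)/2)) =
        Real.log (Real.Gamma (((d:ℝ)-1)/2)) + Real.log (Real.Gamma (((d:ℝ)-1)/2)) by ring,
      Real.exp_add, Real.exp_log hGm, ← sq] at this
  -- Γ(d/2) = ((d-2)/2) Γ((d-2)/2)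
  have hrec : Real.Gamma ((d:ℝ)/2) = (((d:ℝ)-2)/2) * Real.Gamma (((d:ℝ)-2)/2) := by
    have := Real.Gamma_add_one (s := ((d:ℝ)-2)/2) (ne_of_gt hx)
    rw [show ((d:ℝ)-2)/2 + 1 = (d:ℝ)/2 by ring] at this
    exact this
  have key : (((d:ℝ)-2)/2) * Real.Gamma (((d:ℝ)-1)/2) ^ 2 ≤ Real.Gamma ((d:ℝ)/2) ^ 2 := by
    calc (((d:ℝ)-2)/2) * Real.Gamma (((d:ℝ)-1)/2) ^ 2
        ≤ (((d:ℝ)-2)/2) * (Real.Gamma (((d:ℝ)-2)/2) * Real.Gamma ((d:ℝ)/2)) := by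
          exact mul_le_mul_of_nonneg_left hsq (le_of_lt hx)
      _ = Real.Gamma ((d:ℝ)/2) ^ 2 := by rw [hrec]; ring
  have h1 : (Real.sqrt (((d:ℝ)-2)/2) * Real.Gamma (((d:ℝ)-1)/2))^2 ≤ Real.Gamma ((d:ℝ)/2) ^ 2 := by
    rw [mul_pow, Real.sq_sqrt (le_of_lt hx)]; exact key
  exact le_of_sq_le_sq h1 (le_of_lt hGy)


lemma baseLB {d : ℕ} (hd : 4 ≤ d) {x : ℝ} (hx2 : x^2 ≤ 1/(d:ℝ)) :
    Real.exp (-(1/2):ℝ) ≤ (1 - x^2) ^ (((d:ℝ)-3)/2) := by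
  have hd' : (4:ℝ) ≤ d := by exact_mod_cast hd
  have he : (0:ℝ) ≤ ((d:ℝ)-3)/2 := by linarith
  have hdpos : (0:ℝ) < (d:ℝ) := by linarith
  have hd1 : (0:ℝ) < (d:ℝ) - 1 := by linarith
  have h4 : 1/(d:ℝ) < 1 := by rw [div_lt_one hdpos]; linarith
  have h1 : Real.exp (-(1/((d:ℝ)-1))) ≤ 1 - 1/(d:ℝ) := by
    have h2 : 1/((d:ℝ)-1) + 1 ≤ Real.exp (1/((d:ℝ)-1)) := by
      have := Real.add_one_le_exp (1/((d:ℝ)-1)); linarith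
    rw [Real.exp_neg, inv_le_comm₀ (Real.exp_pos _) (by linarith)]
    have e1 : (1 - 1/(d:ℝ))⁻¹ = 1 + 1/((d:ℝ)-1) := by
      rw [inv_eq_iff_eq_inv, eq_comm, inv_eq_iff_eq_inv, eq_comm]
      have hne : ((d:ℝ)) ≠ 0 := ne_of_gt hdpos
      have hne1 : ((d:ℝ)-1) ≠ 0 := ne_of_gt hd1
      field_simp
      ring
    rw [e1]; linarith
  have h3 : (Real.exp (-(1/((d:ℝ)-1)))) ^ (((d:ℝ)-3)/2) ≤ (1 - x^2) ^ (((d:ℝ)-3)/2) := by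
    apply Real.rpow_le_rpow (Real.exp_pos _).le _ he
    have : 1/(d:ℝ) ≤ 1/(d:ℝ) := le_refl _
    linarith [h1, hx2]
  refine le_trans ?_ h3
  rw [← Real.exp_mul, Real.exp_le_exp]
  have hu : (1/((d:ℝ)-1)) * ((d:ℝ)-1) = 1 := one_div_mul_cancel (ne_of_gt hd1)
  nlinarith [hu, one_div_pos.2 hd1]

def Good (N : ℝ) (p : Polynomial ℝ) (k : ℕ) : Prop :=
  (∃ x ∈ Set.Icc ((2*(k:ℝ)+1/4)/N) ((2*(k:ℝ)+3/4)/N), 0 < p.eval x) ∧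
  (∃ y ∈ Set.Icc ((2*(k:ℝ)+5/4)/N) ((2*(k:ℝ)+7/4)/N), p.eval y < 0)

lemma goodRoot {N : ℝ} (hN : 0 < N) {p : Polynomial ℝ} {k : ℕ} (h : Good N p k) :
    ∃ z ∈ Set.Ioo (2*(k:ℝ)/N) (2*((k:ℝ)+1)/N), p.eval z = 0 := by
  obtain ⟨⟨x, hx, hpx⟩, ⟨y, hy, hpy⟩⟩ := h
  have hxy : x < y := by
    apply lt_of_le_of_lt hx.2
    apply lt_of_lt_of_le _ hy.1
    gcongr
    norm_num
  have hIVT := intermediate_value_Ioo' hxy.le ((p.continuous).continuousOn)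
  have h0 : (0:ℝ) ∈ Set.Ioo (p.eval y) (p.eval x) := ⟨hpy, hpx⟩
  obtain ⟨z, hz, hz0⟩ := hIVT h0
  refine ⟨z, ⟨?_, ?_⟩, hz0⟩
  · refine lt_of_le_of_lt ?_ hz.1
    refine le_trans ?_ hx.1
    gcongr
    norm_num
  · refine lt_of_lt_of_le hz.2 ?_
    refine le_trans hy.2 ?_
    gcongr
    linarith

lemma goodCount {N : ℝ} (hN : 0 < N) (p : Polynomial ℝ) [DecidablePred (Good N p)] (m : ℕ) :
    ((Finset.range m).filter (fun k => Good N p k)).card ≤ p.natDegree := by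
  by_cases hp0 : p = 0
  · have : (Finset.range m).filter (fun k => Good N p k) = ∅ := by
      apply Finset.filter_false_of_mem
      intro k _ hG
      obtain ⟨⟨x, _, hpx⟩, _⟩ := hG
      rw [hp0] at hpx; simp at hpx
    rw [this]; simp
  · set f : ℕ → ℝ := fun k => if h : Good N p k then (goodRoot hN h).choose else 0 with hf
    have hmem : ∀ k, (h : Good N p k) →
        (goodRoot hN h).choose ∈ Set.Ioo (2*(k:ℝ)/N) (2*((k:ℝ)+1)/N) ∧
          p.eval ((goodRoot hN h).choose) = 0 := by
      intro k h
      exact ⟨(goodRoot hN h).choose_spec.1, (goodRoot hN h).choose_spec.2⟩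
    calc ((Finset.range m).filter (fun k => Good N p k)).card ≤ p.roots.toFinset.card := by
          apply Finset.card_le_card_of_injOn f
          · intro k hk
            have hG : Good N p k := (Finset.mem_filter.mp hk).2
            rw [hf]; simp only [dif_pos hG]
            rw [Finset.mem_coe, Multiset.mem_toFinset, Polynomial.mem_roots']
            exact ⟨hp0, (hmem k hG).2⟩
          · intro k hk k' hk' hne
            by_contra hkk
            have hG : Good N p k := (Finset.mem_filter.mp (by exact_mod_cast hk)).2
            have hG' : Good N p k' := (Finset.mem_filter.mp (by exact_mod_cast hk')).2
            rw [hf] at hne; simp only [dif_pos hG, dif_pos hG'] at hne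
            rcases Nat.lt_or_ge k k' with hlt | hge
            · have h1 := (hmem k hG).1.2
              have h2 := (hmem k' hG').1.1
              have : 2*((k:ℝ)+1)/N ≤ 2*(k':ℝ)/N := by
                gcongr
                exact_mod_cast hlt
              linarith [hne ▸ lt_of_lt_of_le h1 this]
            · have hlt : k' < k := lt_of_le_of_ne hge (fun hh => hkk (hh ▸ rfl))
              have h1 := (hmem k' hG').1.2
              have h2 := (hmem k hG).1.1
              have : 2*((k':ℝ)+1)/N ≤ 2*(k:ℝ)/N := by
                gcongr
                exact_mod_cast hlt
              linarith [lt_of_lt_of_le h1 this, hne ▸ h2]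
      _ ≤ Multiset.card p.roots := p.roots.toFinset_card_le
      _ ≤ p.natDegree := p.card_roots'

lemma intervalLB {N : ℝ} (hN : 0 < N) (p : Polynomial ℝ) (k : ℕ)
    (hbad : ¬ ((∃ x ∈ Set.Icc ((2*(k:ℝ)+1/4)/N) ((2*(k:ℝ)+3/4)/N), 0 < p.eval x) ∧
      (∃ y ∈ Set.Icc ((2*(k:ℝ)+5/4)/N) ((2*(k:ℝ)+7/4)/N), p.eval y < 0))) :
    1/(4*N) ≤ ∫ x in (2*(k:ℝ)/N)..(2*((k:ℝ)+1)/N), (Real.sin (π*N*x) - p.eval x)^2 := by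
  set g : ℝ → ℝ := fun x => (Real.sin (π*N*x) - p.eval x)^2 with hg
  have hgc : Continuous g := by
    apply Continuous.pow
    exact (Real.continuous_sin.comp (by continuity)).sub p.continuous_aeval
  have hg0 : ∀ x, 0 ≤ g x := fun x => sq_nonneg _
  have hs2 : (Real.sqrt 2 / 2)^2 = 1/2 := by
    rw [div_pow, Real.sq_sqrt (by norm_num : (0:ℝ) ≤ 2)]; norm_num
  have key : ∀ l r : ℝ, 2*(k:ℝ)/N ≤ l → l ≤ r → r ≤ 2*((k:ℝ)+1)/N → r - l = (1/2)/N →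
      (∀ x ∈ Set.Icc l r, 1/2 ≤ g x) → 1/(4*N) ≤ ∫ x in (2*(k:ℝ)/N)..(2*((k:ℝ)+1)/N), g x := by
    intro l r hal hlr hrb hrl hpt
    have h1 : ∫ x in l..r, g x ≤ ∫ x in (2*(k:ℝ)/N)..(2*((k:ℝ)+1)/N), g x := by
      apply intervalIntegral.integral_mono_interval hal hlr hrb
        (MeasureTheory.ae_of_all _ hg0) (hgc.intervalIntegrable _ _)
    have h2 : ∫ x in l..r, (1/2 : ℝ) ≤ ∫ x in l..r, g x := by
      apply intervalIntegral.integral_mono_on hlr (intervalIntegrable_const)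
        (hgc.intervalIntegrable _ _) hpt
    rw [intervalIntegral.integral_const, hrl, smul_eq_mul] at h2
    calc 1/(4*N) = (1/2)/N * (1/2) := by field_simp; ring
      _ ≤ _ := le_trans h2 h1
  rw [not_and_or] at hbad
  rcases hbad with h | h
  · push_neg at h
    apply key ((2*(k:ℝ)+1/4)/N) ((2*(k:ℝ)+3/4)/N)
    · gcongr; linarith
    · gcongr <;> norm_num
    · gcongr; linarith
    · field_simp; ring
    · intro x hx
      have hsin : Real.sqrt 2 / 2 ≤ Real.sin (π*N*x) := by
        apply sinLB k
        · have := mul_le_mul_of_nonneg_left hx.1 (by positivity : (0:ℝ) ≤ π*N)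
          rw [show π*N*((2*(k:ℝ)+1/4)/N) = 2*(k:ℝ)*π + π/4 by field_simp] at this
          linarith
        · have := mul_le_mul_of_nonneg_left hx.2 (by positivity : (0:ℝ) ≤ π*N)
          rw [show π*N*((2*(k:ℝ)+3/4)/N) = 2*(k:ℝ)*π + 3*π/4 by field_simp] at this
          linarith
      have hp := h x hx
      have h1 : Real.sqrt 2 / 2 ≤ Real.sin (π*N*x) - p.eval x := by linarith
      calc (1:ℝ)/2 = (Real.sqrt 2 / 2)^2 := hs2.symm
        _ ≤ _ := pow_le_pow_left₀ (by positivity) h1 2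
  · push_neg at h
    apply key ((2*(k:ℝ)+5/4)/N) ((2*(k:ℝ)+7/4)/N)
    · gcongr; linarith
    · gcongr <;> norm_num
    · gcongr; linarith
    · field_simp; ring
    · intro y hy
      have hsin : Real.sin (π*N*y) ≤ -(Real.sqrt 2 / 2) := by
        apply sinUB k
        · have := mul_le_mul_of_nonneg_left hy.1 (by positivity : (0:ℝ) ≤ π*N)
          rw [show π*N*((2*(k:ℝ)+5/4)/N) = 2*(k:ℝ)*π + 5*π/4 by field_simp] at this
          linarith
        · have := mul_le_mul_of_nonneg_left hy.2 (by positivity : (0:ℝ) ≤ π*N)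
          rw [show π*N*((2*(k:ℝ)+7/4)/N) = 2*(k:ℝ)*π + 7*π/4 by field_simp] at this
          linarith
      have hp := h y hy
      have h1 : Real.sqrt 2 / 2 ≤ p.eval y - Real.sin (π*N*y) := by linarith
      calc (1:ℝ)/2 = (Real.sqrt 2 / 2)^2 := hs2.symm
        _ ≤ (p.eval y - Real.sin (π*N*y))^2 := pow_le_pow_left₀ (by positivity) h1 2
        _ = g y := by rw [hg]; ring

lemma measureLB {d : ℕ} (hd : 100 ≤ d) {T : ℝ} (hT0 : 0 ≤ T) (hT1 : T ≤ 1)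
    (hT2 : T^2 ≤ 1/(d:ℝ)) {g : ℝ → ℝ} (hgc : Continuous g) (hg0 : ∀ x, 0 ≤ g x) :
    (Real.sqrt (((d:ℝ) - 2)/2) / Real.sqrt π * Real.exp (-(1/2):ℝ)) * ∫ x in Set.Icc (0:ℝ) T, g x
      ≤ ∫ x, g x ∂ muD d := by
  have hd4 : 4 ≤ d := by omega
  have hD : (100:ℝ) ≤ (d:ℝ) := by exact_mod_cast hd
  set C : ℝ := Real.Gamma ((d : ℝ) / 2) / (Real.sqrt π * Real.Gamma (((d : ℝ) - 1) / 2)) with hCdef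
  set E : ℝ := ((d:ℝ) - 3) / 2 with hEdef
  have hE0 : 0 ≤ E := by rw [hEdef]; linarith
  set ρ : ℝ → ℝ := fun x => C * (1 - x^2) ^ E with hρdef
  have hΓ1 : 0 < Real.Gamma ((d:ℝ)/2) := Real.Gamma_pos_of_pos (by linarith)
  have hΓ2 : 0 < Real.Gamma (((d:ℝ)-1)/2) := Real.Gamma_pos_of_pos (by linarith)
  have hsπ : 0 < Real.sqrt π := Real.sqrt_pos.mpr Real.pi_pos
  have hC0 : 0 < C := by rw [hCdef]; positivity
  have hρc : Continuous ρ := by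
    apply continuous_const.mul
    exact (Real.continuous_rpow_const hE0).comp (continuous_const.sub (continuous_pow 2))
  have hρ0 : ∀ x ∈ Set.Icc (-1:ℝ) 1, 0 ≤ ρ x := by
    intro x hx
    have hb : (0:ℝ) ≤ 1 - x^2 := by nlinarith [hx.1, hx.2]
    exact mul_nonneg hC0.le (Real.rpow_nonneg hb E)
  set K : ℝ := Real.sqrt (((d:ℝ) - 2)/2) / Real.sqrt π * Real.exp (-(1/2):ℝ) with hKdef
  have hK0 : 0 ≤ K := by positivity
  have hmeas : Measurable (fun x => (ρ x).toNNReal) :=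
    measurable_real_toNNReal.comp hρc.measurable
  have step1 : ∫ x, g x ∂ muD d = ∫ x in Set.Icc (-1:ℝ) 1, ((ρ x).toNNReal : ℝ) * g x := by
    rw [muD, show (fun x : ℝ => ENNReal.ofReal (Real.Gamma ((d : ℝ) / 2) /
        (Real.sqrt π * Real.Gamma (((d : ℝ) - 1) / 2)) * (1 - x ^ 2) ^ (((d : ℝ) - 3) / 2)))
        = (fun x : ℝ => ((fun y => (ρ y).toNNReal) x : ℝ≥0∞)) from rfl,
      integral_withDensity_eq_integral_smul hmeas g]
    simp_rw [NNReal.smul_def, smul_eq_mul]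
  have step2 : ∫ x in Set.Icc (-1:ℝ) 1, ((ρ x).toNNReal : ℝ) * g x
      = ∫ x in Set.Icc (-1:ℝ) 1, ρ x * g x := by
    apply setIntegral_congr_fun measurableSet_Icc
    intro x hx
    simp [Real.coe_toNNReal _ (hρ0 x hx)]
  have hint : IntegrableOn (fun x => ρ x * g x) (Set.Icc (-1:ℝ) 1) volume :=
    (hρc.mul hgc).continuousOn.integrableOn_compact isCompact_Icc
  have hsub : Set.Icc (0:ℝ) T ⊆ Set.Icc (-1:ℝ) 1 := Set.Icc_subset_Icc (by linarith) hT1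
  have step3 : ∫ x in Set.Icc (0:ℝ) T, ρ x * g x ≤ ∫ x in Set.Icc (-1:ℝ) 1, ρ x * g x := by
    apply setIntegral_mono_set hint
    · filter_upwards [ae_restrict_mem measurableSet_Icc] with x hx
      exact mul_nonneg (hρ0 x hx) (hg0 x)
    · exact HasSubset.Subset.eventuallyLE hsub
  have step4 : ∫ x in Set.Icc (0:ℝ) T, K * g x ≤ ∫ x in Set.Icc (0:ℝ) T, ρ x * g x := by
    apply setIntegral_mono_on
    · exact (continuous_const.mul hgc).continuousOn.integrableOn_compact isCompact_Icc
    · exact hint.mono_set hsub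
    · exact measurableSet_Icc
    · intro x hx
      apply mul_le_mul_of_nonneg_right _ (hg0 x)
      have hx2 : x^2 ≤ 1/(d:ℝ) := by
        calc x^2 ≤ T^2 := by nlinarith [hx.1, hx.2]
          _ ≤ 1/(d:ℝ) := hT2
      have h1 : Real.sqrt (((d:ℝ) - 2)/2) / Real.sqrt π ≤ C := by
        rw [hCdef, div_le_div_iff₀ hsπ (by positivity)]
        calc Real.sqrt (((d:ℝ)-2)/2) * (Real.sqrt π * Real.Gamma (((d:ℝ)-1)/2))
            = (Real.sqrt (((d:ℝ)-2)/2) * Real.Gamma (((d:ℝ)-1)/2)) * Real.sqrt π := by ring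
          _ ≤ Real.Gamma ((d:ℝ)/2) * Real.sqrt π :=
              mul_le_mul_of_nonneg_right (gammaRatio hd4) hsπ.le
      have h2 : Real.exp (-(1/2):ℝ) ≤ (1 - x^2) ^ E := baseLB hd4 hx2
      calc K ≤ C * ((1-x^2) ^ E) := by
            rw [hKdef]
            exact mul_le_mul h1 h2 (Real.exp_pos _).le hC0.le
        _ = ρ x := rfl
  have step5 : ∫ x in Set.Icc (0:ℝ) T, K * g x = K * ∫ x in Set.Icc (0:ℝ) T, g x :=
    integral_const_mul K g
  rw [step1, step2, ← step5]
  exact le_trans step4 step3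

lemma numericLB {Q : ℝ} (hQ0 : 0 < Q) :
    (1 / (5 * Real.exp 1 * π))^2
      ≤ (Q/(2*Real.sqrt π) * Real.exp (-(1/2):ℝ)) * ((7/80)*(1/Q)) := by
  have he2 : (2:ℝ) ≤ Real.exp 1 := by
    have := Real.add_one_le_exp (1:ℝ); linarith
  have hπ3 : (3:ℝ) < π := Real.pi_gt_three
  have hsπ : 0 < Real.sqrt π := Real.sqrt_pos.mpr Real.pi_pos
  have hQne : Q ≠ 0 := ne_of_gt hQ0
  have hrw : (Q/(2*Real.sqrt π) * Real.exp (-(1/2):ℝ)) * ((7/80)*(1/Q))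
      = (7/160) * (Real.exp (-(1/2):ℝ)/Real.sqrt π) := by
    field_simp
    ring
  rw [hrw]
  have h2 : 1/(Real.exp 1 * π) ≤ Real.exp (-(1/2):ℝ)/Real.sqrt π := by
    rw [show (1:ℝ)/(Real.exp 1 * π) = (Real.exp 1)⁻¹/π by
      rw [one_div, mul_inv, div_eq_mul_inv]]
    gcongr
    · rw [← Real.exp_neg]
      apply Real.exp_le_exp.2
      norm_num
    · have hππ : Real.sqrt π ≤ Real.sqrt (π^2) := Real.sqrt_le_sqrt (by nlinarith)
      rwa [Real.sqrt_sq Real.pi_pos.le] at hππ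
  have hAB : (6:ℝ) ≤ Real.exp 1 * π := by nlinarith
  have h3 : 1/(25*(Real.exp 1 * π)) ≤ 7/160 := by
    rw [div_le_div_iff₀ (by positivity) (by norm_num)]
    nlinarith
  calc (1 / (5 * Real.exp 1 * π))^2 = (1/(25*(Real.exp 1 * π))) * (1/(Real.exp 1 * π)) := by
        field_simp
        ring
    _ ≤ (7/160) * (1/(Real.exp 1 * π)) := mul_le_mul_of_nonneg_right h3 (by positivity)
    _ ≤ (7/160) * (Real.exp (-(1/2):ℝ)/Real.sqrt π) := mul_le_mul_of_nonneg_left h2 (by norm_num)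

lemma keyLB {d : ℕ} (hd : 100 ≤ d) (p : Polynomial ℝ) (hp : p.natDegree ≤ d^2 - 1) :
    (1 / (5 * Real.exp 1 * π))^2 ≤ ∫ x, (Real.sin (π * (d:ℝ)^3 * x) - p.eval x)^2 ∂ muD d := by
  classical
  have hd4 : 4 ≤ d := by omega
  have hD : (100:ℝ) ≤ (d:ℝ) := by exact_mod_cast hd
  set N : ℝ := (d:ℝ)^3 with hNdef
  have hN : 0 < N := by rw [hNdef]; positivity
  set g : ℝ → ℝ := fun x => (Real.sin (π*N*x) - p.eval x)^2 with hgdef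
  have hgc : Continuous g := by
    apply Continuous.pow
    exact (Real.continuous_sin.comp (by continuity)).sub p.continuous
  have hg0 : ∀ x, 0 ≤ g x := fun x => sq_nonneg _
  set s : ℕ := Nat.sqrt d with hsdef
  set m : ℕ := d^2 * s / 2 with hmdef
  set Q : ℝ := Real.sqrt (d:ℝ) with hQdef
  have hQ0 : 0 < Q := by rw [hQdef]; positivity
  have hQd : Q * Q = (d:ℝ) := Real.mul_self_sqrt (by positivity)
  have hQ10 : (10:ℝ) ≤ Q := by
    rw [hQdef, show (10:ℝ) = Real.sqrt 100 by
      rw [show (100:ℝ) = 10^2 by norm_num, Real.sqrt_sq (by norm_num)]]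
    exact Real.sqrt_le_sqrt hD
  have hs10 : 10 ≤ s := by
    have h1 : Nat.sqrt 100 ≤ s := Nat.sqrt_le_sqrt hd
    have h2 : Nat.sqrt 100 = 10 := by
      rw [show (100:ℕ) = 10*10 from rfl]
      exact Nat.sqrt_eq 10
    omega
  have hsS : ((s:ℝ))^2 ≤ (d:ℝ) := by exact_mod_cast Nat.sqrt_le' d
  have hsS' : (d:ℝ) < ((s:ℝ)+1)^2 := by
    have h := Nat.lt_succ_sqrt' d
    rw [Nat.succ_eq_add_one] at h
    exact_mod_cast h
  have hsd : (s:ℝ) ≤ Q := by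
    rw [hQdef, show (s:ℝ) = Real.sqrt ((s:ℝ)^2) from (Real.sqrt_sq (by positivity)).symm]
    exact Real.sqrt_le_sqrt hsS
  have hs' : Q ≤ (s:ℝ) + 1 := by
    rw [hQdef, show (s:ℝ)+1 = Real.sqrt (((s:ℝ)+1)^2) from (Real.sqrt_sq (by positivity)).symm]
    exact Real.sqrt_le_sqrt hsS'.le
  have hmnat : d^2*s ≤ 2*m + 1 := by rw [hmdef]; omega
  have hmR : (d:ℝ)^2*(s:ℝ) - 1 ≤ 2*(m:ℝ) := by
    have : ((d^2*s : ℕ):ℝ) ≤ ((2*m+1 : ℕ):ℝ) := by exact_mod_cast hmnat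
    push_cast at this
    linarith
  have hmN : 2*(m:ℝ) ≤ (d:ℝ)^2 * s := by
    have h1 : 2*m ≤ d^2*s := by rw [hmdef]; omega
    exact_mod_cast h1
  set T : ℝ := 2*(m:ℝ)/N with hTdef
  have hT0 : 0 ≤ T := by rw [hTdef]; positivity
  have hT2 : T^2 ≤ 1/(d:ℝ) := by
    have h1 : T ≤ (s:ℝ)/(d:ℝ) := by
      rw [hTdef, hNdef, div_le_div_iff₀ (by positivity) (by positivity)]
      calc 2*(m:ℝ)*(d:ℝ) ≤ ((d:ℝ)^2*s)*(d:ℝ) := by nlinarith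
        _ = (s:ℝ)*(d:ℝ)^3 := by ring
    calc T^2 ≤ ((s:ℝ)/(d:ℝ))^2 := pow_le_pow_left₀ hT0 h1 2
      _ = (s:ℝ)^2/(d:ℝ)^2 := by rw [div_pow]
      _ ≤ (d:ℝ)/(d:ℝ)^2 := by gcongr
      _ = 1/(d:ℝ) := by rw [pow_two]; rw [div_mul_eq_div_div]; rw [div_self (by positivity)]
  have hT1 : T ≤ 1 := by
    have h1 : 1/(d:ℝ) ≤ 1 := by rw [div_le_one (by positivity)]; linarith
    nlinarith [sq_nonneg (T-1)]
  -- decompose [0,T] into m adjacent intervals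
  have hsum := intervalIntegral.sum_integral_adjacent_intervals
    (a := fun k : ℕ => 2*(k:ℝ)/N) (μ := volume) (f := g) (n := m)
    (fun k _ => hgc.intervalIntegrable _ _)
  simp only [Nat.cast_zero] at hsum
  have hIccEq : ∫ x in Set.Icc (0:ℝ) T, g x
      = ∑ k ∈ Finset.range m, ∫ x in (2*(k:ℝ)/N)..(2*((k:ℕ)+1:ℕ):ℝ)/N, g x := by
    rw [integral_Icc_eq_integral_Ioc, ← intervalIntegral.integral_of_le hT0]
    rw [hTdef]
    rw [show (2*(0:ℝ)/N) = 0 by ring] at hsum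
    rw [← hsum]
  -- counting
  set G : Finset ℕ := (Finset.range m).filter (fun k => Good N p k) with hGdef
  have hGsub : G ⊆ Finset.range m := Finset.filter_subset _ _
  have hGm : G.card ≤ m := le_trans (Finset.card_le_card hGsub) (le_of_eq (Finset.card_range m))
  have hGcard : G.card ≤ d^2 - 1 := le_trans (goodCount hN p m) hp
  set B : ℝ := ((m - G.card : ℕ) : ℝ) with hBdef
  have hBcast : B = (m:ℝ) - (G.card:ℝ) := by rw [hBdef, Nat.cast_sub hGm]
  have hGcR : (G.card:ℝ) ≤ (d:ℝ)^2 - 1 := by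
    have h1 : 1 ≤ d^2 := Nat.one_le_pow _ _ (by omega)
    have : ((d^2 - 1 : ℕ):ℝ) = (d:ℝ)^2 - 1 := by
      push_cast [Nat.cast_sub h1]; ring
    rw [← this]
    exact_mod_cast hGcard
  have step8 : B * (1/(4*N)) ≤ ∑ k ∈ Finset.range m, ∫ x in (2*(k:ℝ)/N)..(2*((k:ℕ)+1:ℕ):ℝ)/N, g x := by
    have hsd8 : ∀ k ∈ Finset.range m \ G, 1/(4*N) ≤ ∫ x in (2*(k:ℝ)/N)..(2*((k:ℕ)+1:ℕ):ℝ)/N, g x := by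
      intro k hk
      rw [Finset.mem_sdiff, hGdef, Finset.mem_filter] at hk
      have hbad : ¬ Good N p k := fun h => hk.2 ⟨hk.1, h⟩
      have h := intervalLB hN p k hbad
      rw [hgdef]
      push_cast
      exact h
    calc B * (1/(4*N)) = (Finset.range m \ G).card * (1/(4*N)) := by
          rw [hBdef, Finset.card_sdiff_of_subset hGsub, Finset.card_range]
      _ = ∑ _k ∈ Finset.range m \ G, 1/(4*N) := by rw [Finset.sum_const, nsmul_eq_mul]
      _ ≤ ∑ k ∈ Finset.range m \ G, ∫ x in (2*(k:ℝ)/N)..(2*((k:ℕ)+1:ℕ):ℝ)/N, g x :=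
          Finset.sum_le_sum hsd8
      _ ≤ _ := by
          apply Finset.sum_le_sum_of_subset_of_nonneg Finset.sdiff_subset
          intro k _ _
          apply intervalIntegral.integral_nonneg _ (fun x _ => hg0 x)
          gcongr
          exact_mod_cast Nat.le_succ k
  -- numeric facts
  have he2 : (2:ℝ) ≤ Real.exp 1 := by
    have := Real.add_one_le_exp (1:ℝ); linarith
  have hπ3 : (3:ℝ) < π := Real.pi_gt_three
  have hsπ : 0 < Real.sqrt π := Real.sqrt_pos.mpr Real.pi_pos
  have hKLB : Q/(2*Real.sqrt π) * Real.exp (-(1/2):ℝ)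
      ≤ Real.sqrt (((d:ℝ) - 2)/2) / Real.sqrt π * Real.exp (-(1/2):ℝ) := by
    have h1 : Real.sqrt ((d:ℝ)/4) ≤ Real.sqrt (((d:ℝ)-2)/2) := Real.sqrt_le_sqrt (by linarith)
    have h2 : Real.sqrt ((d:ℝ)/4) = Q/2 := by
      rw [show (d:ℝ)/4 = ((1/2)^2)*(d:ℝ) by ring, Real.sqrt_mul (by positivity),
        Real.sqrt_sq (by norm_num), hQdef]
      ring
    have h3 : Q/2 ≤ Real.sqrt (((d:ℝ)-2)/2) := h2 ▸ h1
    apply mul_le_mul_of_nonneg_right _ (Real.exp_pos _).le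
    rw [show Q/(2*Real.sqrt π) = (Q/2)/Real.sqrt π by ring]
    gcongr
  clear_value N g s m Q T G B
  have hQne : Q ≠ 0 := ne_of_gt hQ0
  have hpos1 : (0:ℝ) ≤ (7/80)*(1/Q) := mul_nonneg (by norm_num) (one_div_nonneg.2 hQ0.le)
  have hB2 : (7/20)*((d:ℝ)^2*Q) ≤ B := by
    have hd2 : (0:ℝ) ≤ (d:ℝ)^2 := by positivity
    have h1 : (d:ℝ)^2*Q ≤ (d:ℝ)^2*(s:ℝ) + (d:ℝ)^2 := by
      have h := mul_le_mul_of_nonneg_left hs' hd2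
      linarith [show (d:ℝ)^2*((s:ℝ)+1) = (d:ℝ)^2*(s:ℝ) + (d:ℝ)^2 from by ring]
    have h2 : 10*(d:ℝ)^2 ≤ (d:ℝ)^2*Q := by
      have h := mul_le_mul_of_nonneg_left hQ10 hd2
      linarith [show (d:ℝ)^2*(10:ℝ) = 10*(d:ℝ)^2 from by ring]
    rw [hBcast]
    linarith [hmR, hGcR, h1, h2]
  have heq : ((7:ℝ)/20)*((d:ℝ)^2*Q)*(1/(4*N)) = (7/80)*(1/Q) := by
    have hd0 : (d:ℝ) ≠ 0 := by positivity
    have h3 : (d:ℝ)^3 = (d:ℝ)^2*(Q*Q) := by rw [hQd]; ring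
    rw [hNdef, h3]
    field_simp
    ring
  have hBLB : (7/80)*(1/Q) ≤ B * (1/(4*N)) := by
    rw [← heq]
    apply mul_le_mul_of_nonneg_right hB2
    rw [hNdef]
    positivity
  have main2 := numericLB hQ0
  calc (1 / (5 * Real.exp 1 * π))^2
      ≤ (Q/(2*Real.sqrt π) * Real.exp (-(1/2):ℝ)) * ((7/80)*(1/Q)) := main2
    _ ≤ (Real.sqrt (((d:ℝ) - 2)/2) / Real.sqrt π * Real.exp (-(1/2):ℝ)) * (B * (1/(4*N))) := by
        exact mul_le_mul hKLB hBLB hpos1 (by positivity)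
    _ ≤ (Real.sqrt (((d:ℝ) - 2)/2) / Real.sqrt π * Real.exp (-(1/2):ℝ))
        * ∑ k ∈ Finset.range m, ∫ x in (2*(k:ℝ)/N)..(2*((k:ℕ)+1:ℕ):ℝ)/N, g x := by
        apply mul_le_mul_of_nonneg_left step8 (by positivity)
    _ = (Real.sqrt (((d:ℝ) - 2)/2) / Real.sqrt π * Real.exp (-(1/2):ℝ))
        * ∫ x in Set.Icc (0:ℝ) T, g x := by rw [hIccEq]
    _ ≤ ∫ x, g x ∂ muD d := measureLB hd hT0 hT1 hT2 hgc hg0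

end Helpers

/-- For large enough `d`, the best approximation of `x ↦ sin(π d³ x)` by
polynomials of degree at most `d² - 1` in `L²(μ_d)` is at least `1/(5 e π)`. -/
theorem sine_polyApproxErr_lower_bound :
    ∃ d₀ : ℕ, 0 < d₀ ∧ ∀ d : ℕ, d₀ ≤ d →
      polyApproxErr (d ^ 2) d (fun x => Real.sin (π * (d : ℝ) ^ 3 * x)) ≥
        1 / (5 * Real.exp 1 * π) := by
  refine ⟨100, by norm_num, fun d hd => ?_⟩
  rw [ge_iff_le, polyApproxErr]
  apply le_csInf
  · exact ⟨_, ⟨0, by simp, rfl⟩⟩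
  · rintro c ⟨p, hp, rfl⟩
    have h := keyLB hd p hp
    calc 1/(5*Real.exp 1*π) = Real.sqrt ((1/(5*Real.exp 1*π))^2) :=
          (Real.sqrt_sq (by positivity)).symm
      _ ≤ _ := Real.sqrt_le_sqrt h
end

section
/- Let σ(x) = max(0,x) be the ReLU activation, let R, L, ε > 0, and let f : [−R,R] → ℝ be L-Lipschitz. Then there exist an integer m ≤ 2RL/ε and coefficients α_i with |α_i| ≤ 2L, β_i with |β_i| ≤ R, and γ_i ∈ {−1,1} (i = 1,…,m) such that the function g(x) = f(0) + Σ_{i=1}^m α_i σ(γ_i x − β_i) satisfies |g(x) − f(x)| ≤ ε for all x ∈ [−R,R], and moreover g is L-Lipschitz on all of ℝ. -/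
open Real Finset

/-- slope of `h` on the `j`-th grid interval `[jδ, (j+1)δ]`. -/
noncomputable def slp (h : ℝ → ℝ) (δ : ℝ) (j : ℕ) : ℝ :=
  (h ((j + 1) * δ) - h (j * δ)) / δ

/-- ReLU coefficients: slope increments. -/
noncomputable def coefA (h : ℝ → ℝ) (δ : ℝ) : ℕ → ℝ
  | 0 => slp h δ 0
  | (j + 1) => slp h δ (j + 1) - slp h δ j

/-- the one-sided ReLU sum. -/
noncomputable def Ssum (h : ℝ → ℝ) (δ : ℝ) (n : ℕ) (x : ℝ) : ℝ :=
  ∑ j ∈ Finset.range n, coefA h δ j * max 0 (x - j * δ)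

lemma Ssum_of_nonpos (h : ℝ → ℝ) {δ : ℝ} (hδ : 0 ≤ δ) (n : ℕ) {x : ℝ} (hx : x ≤ 0) :
    Ssum h δ n x = 0 := by
  apply Finset.sum_eq_zero
  intro j _
  have hj : (0:ℝ) ≤ (j : ℝ) * δ := by positivity
  rw [max_eq_left (by linarith), mul_zero]

lemma sum_trunc (h : ℝ → ℝ) {δ : ℝ} (hδ : δ ≠ 0) (x : ℝ) :
    ∀ k : ℕ, ∑ j ∈ Finset.range (k + 1), coefA h δ j * (x - j * δ)
      = h (k * δ) - h 0 + slp h δ k * (x - k * δ)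
  | 0 => by simp [coefA, slp]
  | (k + 1) => by
    rw [Finset.sum_range_succ, sum_trunc h hδ x k]
    have hs : slp h δ k * δ = h ((k + 1) * δ) - h (k * δ) := by
      rw [slp, div_mul_cancel₀ _ hδ]
    simp only [coefA]
    push_cast
    linear_combination hs

lemma Ssum_eval (h : ℝ → ℝ) {δ : ℝ} (hδ : 0 < δ) {n k : ℕ} (hk : k < n) {x : ℝ}
    (h1 : (k : ℝ) * δ ≤ x) (h2 : x ≤ ((k : ℝ) + 1) * δ ∨ k + 1 = n) :
    Ssum h δ n x = h (k * δ) - h 0 + slp h δ k * (x - k * δ) := by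
  have hsplit : Ssum h δ n x
      = ∑ j ∈ Finset.range (k + 1), coefA h δ j * max 0 (x - j * δ) := by
    unfold Ssum
    rw [← Finset.sum_range_add_sum_Ico _ (Nat.succ_le_of_lt hk)]
    have tail : ∑ j ∈ Finset.Ico (k + 1) n, coefA h δ j * max 0 (x - j * δ) = 0 := by
      apply Finset.sum_eq_zero
      intro j hj
      obtain ⟨hj1, hj2⟩ := Finset.mem_Ico.mp hj
      rcases h2 with h2 | h2
      · have hjj : ((k : ℝ) + 1) ≤ (j : ℝ) := by exact_mod_cast hj1
        have : x - (j : ℝ) * δ ≤ 0 := by nlinarith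
        rw [max_eq_left this, mul_zero]
      · omega
    rw [tail, add_zero]
  rw [hsplit]
  have head : ∀ j ∈ Finset.range (k + 1),
      coefA h δ j * max 0 (x - j * δ) = coefA h δ j * (x - j * δ) := by
    intro j hj
    have hj' : j ≤ k := Nat.lt_succ_iff.mp (Finset.mem_range.mp hj)
    have hjk : (j : ℝ) ≤ (k : ℝ) := by exact_mod_cast hj'
    have : (0:ℝ) ≤ x - (j : ℝ) * δ := by nlinarith
    rw [max_eq_right this]
  rw [Finset.sum_congr rfl head, sum_trunc h (ne_of_gt hδ) x k]


lemma slp_bound (h : ℝ → ℝ) {δ L : ℝ} (hδ : 0 < δ) {n : ℕ}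
    (hlip : ∀ u ∈ Set.Icc (0:ℝ) (n * δ), ∀ v ∈ Set.Icc (0:ℝ) (n * δ),
      |h u - h v| ≤ L * |u - v|) :
    ∀ j < n, |slp h δ j| ≤ L := by
  intro j hj
  have hj1 : ((j : ℝ) + 1) ≤ (n : ℝ) := by exact_mod_cast Nat.succ_le_of_lt hj
  have hm1 : ((j : ℝ) + 1) * δ ∈ Set.Icc (0:ℝ) (n * δ) := by
    constructor <;> nlinarith
  have hm2 : (j : ℝ) * δ ∈ Set.Icc (0:ℝ) (n * δ) := by
    constructor <;> nlinarith
  have hd := hlip _ hm1 _ hm2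
  have habs : |((j:ℝ) + 1) * δ - (j:ℝ) * δ| = δ := by
    rw [show ((j:ℝ) + 1) * δ - (j:ℝ) * δ = δ by ring, abs_of_pos hδ]
  rw [habs] at hd
  rw [slp, abs_div, abs_of_pos hδ, div_le_iff₀ hδ]
  linarith

lemma Ssum_piece_lip (h : ℝ → ℝ) {δ L : ℝ} (hδ : 0 < δ) {n : ℕ}
    (hs : ∀ j < n, |slp h δ j| ≤ L) :
    ∀ k, k < n → ∀ x y : ℝ, 0 ≤ x → x ≤ y → (y ≤ ((k : ℝ) + 1) * δ ∨ k + 1 = n) →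
      |Ssum h δ n y - Ssum h δ n x| ≤ L * (y - x) := by
  intro k
  induction k with
  | zero =>
    intro hk x y hx hxy hy
    have hx0 : ((0:ℕ) : ℝ) * δ ≤ x := by simpa using hx
    have hy0 : ((0:ℕ) : ℝ) * δ ≤ y := by push_cast; nlinarith
    have hxd : x ≤ (((0:ℕ) : ℝ) + 1) * δ ∨ 0 + 1 = n := by
      rcases hy with hy | hy
      · left; push_cast at hy ⊢; linarith
      · right; exact hy
    have hyd : y ≤ (((0:ℕ) : ℝ) + 1) * δ ∨ 0 + 1 = n := by
      rcases hy with hy | hy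
      · left; push_cast at hy ⊢; linarith
      · right; exact hy
    rw [Ssum_eval h hδ hk hy0 hyd, Ssum_eval h hδ hk hx0 hxd]
    have : h (((0:ℕ):ℝ) * δ) - h 0 + slp h δ 0 * (y - ((0:ℕ):ℝ) * δ)
        - (h (((0:ℕ):ℝ) * δ) - h 0 + slp h δ 0 * (x - ((0:ℕ):ℝ) * δ))
        = slp h δ 0 * (y - x) := by ring
    rw [this, abs_mul, abs_of_nonneg (by linarith : (0:ℝ) ≤ y - x)]
    exact mul_le_mul_of_nonneg_right (hs 0 hk) (by linarith)
  | succ k ih =>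
    intro hk x y hx hxy hy
    have hk' : k < n := Nat.lt_of_succ_lt hk
    -- evaluation on piece k+1
    have piece : ∀ u v : ℝ, ((k:ℝ) + 1) * δ ≤ u → u ≤ v →
        (v ≤ ((k:ℝ) + 2) * δ ∨ (k + 1) + 1 = n) → |Ssum h δ n v - Ssum h δ n u| ≤ L * (v - u) := by
      intro u v hu huv hv
      have hu' : ((k + 1 : ℕ) : ℝ) * δ ≤ u := by push_cast; linarith
      have hv' : ((k + 1 : ℕ) : ℝ) * δ ≤ v := by push_cast; linarith
      have hud : u ≤ (((k + 1 : ℕ) : ℝ) + 1) * δ ∨ (k + 1) + 1 = n := by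
        rcases hv with hv | hv
        · left; push_cast; linarith
        · right; exact hv
      have hvd : v ≤ (((k + 1 : ℕ) : ℝ) + 1) * δ ∨ (k + 1) + 1 = n := by
        rcases hv with hv | hv
        · left; push_cast; linarith
        · right; exact hv
      rw [Ssum_eval h hδ hk hv' hvd, Ssum_eval h hδ hk hu' hud]
      have : h (((k+1:ℕ):ℝ) * δ) - h 0 + slp h δ (k+1) * (v - ((k+1:ℕ):ℝ) * δ)
          - (h (((k+1:ℕ):ℝ) * δ) - h 0 + slp h δ (k+1) * (u - ((k+1:ℕ):ℝ) * δ))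
          = slp h δ (k+1) * (v - u) := by ring
      rw [this, abs_mul, abs_of_nonneg (by linarith : (0:ℝ) ≤ v - u)]
      exact mul_le_mul_of_nonneg_right (hs (k+1) hk) (by linarith)
    rcases le_or_gt y (((k:ℝ) + 1) * δ) with hcase | hcase
    · exact ih hk' x y hx hxy (Or.inl hcase)
    · rcases le_or_gt (((k:ℝ) + 1) * δ) x with hcx | hcx
      · exact piece x y hcx hxy (by rcases hy with hy | hy; · left; push_cast at hy ⊢; linarith
                                    · right; exact hy)
      · set mid := ((k:ℝ) + 1) * δ with hmid
        have h1 : |Ssum h δ n mid - Ssum h δ n x| ≤ L * (mid - x) :=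
          ih hk' x mid hx (le_of_lt hcx) (Or.inl le_rfl)
        have h2 : |Ssum h δ n y - Ssum h δ n mid| ≤ L * (y - mid) := by
          apply piece mid y le_rfl (le_of_lt hcase)
          rcases hy with hy | hy
          · left; push_cast at hy ⊢; linarith
          · right; exact hy
        calc |Ssum h δ n y - Ssum h δ n x|
            ≤ |Ssum h δ n y - Ssum h δ n mid| + |Ssum h δ n mid - Ssum h δ n x| := by
              exact abs_sub_le _ _ _
          _ ≤ L * (y - mid) + L * (mid - x) := by linarith
          _ = L * (y - x) := by ring

lemma Ssum_lipschitz (h : ℝ → ℝ) {δ L : ℝ} (hδ : 0 < δ) (hL : 0 ≤ L) {n : ℕ} (hn : 1 ≤ n)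
    (hs : ∀ j < n, |slp h δ j| ≤ L) :
    ∀ x y : ℝ, x ≤ y → |Ssum h δ n y - Ssum h δ n x| ≤ L * (y - x) := by
  intro x y hxy
  have hmaxx : Ssum h δ n x = Ssum h δ n (max x 0) := by
    rcases le_total x 0 with hx | hx
    · rw [Ssum_of_nonpos h hδ.le n hx, Ssum_of_nonpos h hδ.le n (by simp [hx] : max x 0 ≤ 0)]
    · rw [max_eq_left hx]
  have hmaxy : Ssum h δ n y = Ssum h δ n (max y 0) := by
    rcases le_total y 0 with hy | hy
    · rw [Ssum_of_nonpos h hδ.le n hy, Ssum_of_nonpos h hδ.le n (by simp [hy] : max y 0 ≤ 0)]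
    · rw [max_eq_left hy]
  rw [hmaxx, hmaxy]
  have key := Ssum_piece_lip h hδ hs (n - 1) (by omega) (max x 0) (max y 0)
    (le_max_right _ _) (max_le_max hxy le_rfl) (Or.inr (by omega))
  have hle : max y 0 - max x 0 ≤ y - x := by
    rcases le_total x 0 with hx | hx <;> rcases le_total y 0 with hy | hy <;>
      simp [max_eq_left, max_eq_right, hx, hy] <;> linarith
  calc |Ssum h δ n (max y 0) - Ssum h δ n (max x 0)| ≤ L * (max y 0 - max x 0) := key
    _ ≤ L * (y - x) := mul_le_mul_of_nonneg_left hle hL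


lemma coefA_bound (h : ℝ → ℝ) {δ L : ℝ} (hL : 0 ≤ L) {n : ℕ}
    (hs : ∀ j < n, |slp h δ j| ≤ L) : ∀ j < n, |coefA h δ j| ≤ 2 * L := by
  intro j hj
  match j with
  | 0 => simpa [coefA] using le_trans (hs 0 hj) (by linarith)
  | (j + 1) =>
    have h1 := hs (j + 1) hj
    have h2 := hs j (Nat.lt_of_succ_lt hj)
    calc |coefA h δ (j+1)| = |slp h δ (j+1) - slp h δ j| := rfl
      _ ≤ |slp h δ (j+1)| + |slp h δ j| := abs_sub _ _
      _ ≤ 2 * L := by linarith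

lemma Ssum_approx (h : ℝ → ℝ) {δ L : ℝ} (hδ : 0 < δ) (hL : 0 ≤ L) {n : ℕ} (hn : 1 ≤ n)
    (hlip : ∀ u ∈ Set.Icc (0:ℝ) (n * δ), ∀ v ∈ Set.Icc (0:ℝ) (n * δ),
      |h u - h v| ≤ L * |u - v|)
    {x : ℝ} (hx : x ∈ Set.Icc (0:ℝ) ((n:ℝ) * δ)) :
    |h 0 + Ssum h δ n x - h x| ≤ L * δ / 2 := by
  obtain ⟨hx0, hxR⟩ := hx
  set k : ℕ := min (n - 1) ⌊x / δ⌋₊ with hkdef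
  have hkn : k < n := by
    have : k ≤ n - 1 := min_le_left _ _
    omega
  have hk1 : (k : ℝ) * δ ≤ x := by
    have h1 : (k : ℕ) ≤ ⌊x / δ⌋₊ := min_le_right _ _
    have h2 : (k : ℝ) ≤ x / δ := by
      calc (k : ℝ) ≤ (⌊x / δ⌋₊ : ℝ) := by exact_mod_cast h1
        _ ≤ x / δ := Nat.floor_le (by positivity)
    calc (k : ℝ) * δ ≤ (x / δ) * δ := mul_le_mul_of_nonneg_right h2 hδ.le
      _ = x := by field_simp
  have hk2 : x ≤ ((k : ℝ) + 1) * δ := by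
    rcases le_or_gt ⌊x / δ⌋₊ (n - 1) with hc | hc
    · have hk : k = ⌊x / δ⌋₊ := by omega
      have h2 : x / δ < (⌊x / δ⌋₊ : ℝ) + 1 := Nat.lt_floor_add_one _
      have : x / δ < (k : ℝ) + 1 := by rw [hk]; exact_mod_cast h2
      calc x = (x / δ) * δ := by field_simp
        _ ≤ ((k:ℝ) + 1) * δ := mul_le_mul_of_nonneg_right this.le hδ.le
    · have hk : k = n - 1 := by omega
      have : (k : ℝ) + 1 = (n : ℝ) := by
        rw [hk]
        have : (n - 1 : ℕ) + 1 = n := by omega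
        exact_mod_cast congrArg (Nat.cast (R := ℝ)) this
      rw [this]; exact hxR
  rw [Ssum_eval h hδ hkn hk1 (Or.inl hk2)]
  -- now pure estimate
  have hkn' : ((k:ℝ) + 1) ≤ (n : ℝ) := by exact_mod_cast Nat.succ_le_of_lt hkn
  have hmem1 : (k : ℝ) * δ ∈ Set.Icc (0:ℝ) (n * δ) := by constructor <;> nlinarith
  have hmem2 : ((k : ℝ) + 1) * δ ∈ Set.Icc (0:ℝ) (n * δ) := by constructor <;> nlinarith
  have hmemx : x ∈ Set.Icc (0:ℝ) (n * δ) := ⟨hx0, hxR⟩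
  have ht1 : |h ((k:ℝ) * δ) - h x| ≤ L * (x - (k:ℝ) * δ) := by
    have := hlip _ hmem1 _ hmemx
    rwa [abs_of_nonpos (show (k:ℝ) * δ - x ≤ 0 by linarith), neg_sub] at this
  have ht2 : |h (((k:ℝ) + 1) * δ) - h x| ≤ L * (((k:ℝ) + 1) * δ - x) := by
    have := hlip _ hmem2 _ hmemx
    rwa [abs_of_nonneg (show (0:ℝ) ≤ ((k:ℝ) + 1) * δ - x by linarith)] at this
  have hsd : slp h δ k * δ = h (((k:ℝ) + 1) * δ) - h ((k:ℝ) * δ) := by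
    rw [slp]; field_simp
  set t1 := h ((k:ℝ) * δ) - h x with hT1
  set t2 := h (((k:ℝ) + 1) * δ) - h x with hT2
  set u := x - (k:ℝ) * δ with hu
  have hu0 : 0 ≤ u := by linarith
  have huδ : u ≤ δ := by simp only [hu]; nlinarith
  have hsd' : slp h δ k * δ = t2 - t1 := by rw [hsd, hT1, hT2]; ring
  have hexpr : h 0 + (h ((k:ℝ)*δ) - h 0 + slp h δ k * (x - (k:ℝ)*δ)) - h x
      = t1 + slp h δ k * u := by rw [hT1, hu]; ring
  rw [hexpr, abs_le]
  obtain ⟨ht1l, ht1r⟩ := abs_le.mp ht1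
  obtain ⟨ht2l, ht2r⟩ := abs_le.mp ht2
  constructor
  · have key : -(L * δ / 2) * δ ≤ (t1 + slp h δ k * u) * δ := by
      have : (t1 + slp h δ k * u) * δ = t1 * (δ - u) + t2 * u := by
        linear_combination u * hsd'
      rw [this]
      nlinarith [mul_le_mul_of_nonneg_right ht1l (by linarith : (0:ℝ) ≤ δ - u),
        mul_le_mul_of_nonneg_right ht2l hu0,
        mul_nonneg hL (sq_nonneg (2 * u - δ))]
    exact le_of_mul_le_mul_right key hδ
  · have key : (t1 + slp h δ k * u) * δ ≤ (L * δ / 2) * δ := by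
      have : (t1 + slp h δ k * u) * δ = t1 * (δ - u) + t2 * u := by
        linear_combination u * hsd'
      rw [this]
      nlinarith [mul_le_mul_of_nonneg_right ht1r (by linarith : (0:ℝ) ≤ δ - u),
        mul_le_mul_of_nonneg_right ht2r hu0,
        mul_nonneg hL (sq_nonneg (2 * u - δ))]
    exact le_of_mul_le_mul_right key hδ


/-- Any `L`-Lipschitz function on `[-R,R]` can be `ε`-approximated by a
one-dimensional ReLU network `g(x) = f(0) + Σᵢ αᵢ max(0, γᵢ x - βᵢ)` with `m ≤ 2RL/ε`
terms, `|αᵢ| ≤ 2L`, `|βᵢ| ≤ R`, `γᵢ ∈ {-1,1}`, and `g` is `L`-Lipschitz on all of `ℝ`. -/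
theorem relu_approx_lipschitz_on_interval
    (R L ε : ℝ) (hR : 0 < R) (hL : 0 < L) (hε : 0 < ε) (f : ℝ → ℝ)
    (hf : ∀ x ∈ Set.Icc (-R) R, ∀ y ∈ Set.Icc (-R) R, |f x - f y| ≤ L * |x - y|) :
    ∃ (m : ℕ) (α β γ : Fin m → ℝ), (m : ℝ) ≤ 2 * R * L / ε ∧
      (∀ i, |α i| ≤ 2 * L) ∧ (∀ i, |β i| ≤ R) ∧ (∀ i, γ i = -1 ∨ γ i = 1) ∧
      (∀ x ∈ Set.Icc (-R) R,
        |(f 0 + ∑ i, α i * max 0 (γ i * x - β i)) - f x| ≤ ε) ∧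
      (∀ x y : ℝ,
        |(f 0 + ∑ i, α i * max 0 (γ i * x - β i)) -
          (f 0 + ∑ i, α i * max 0 (γ i * y - β i))| ≤ L * |x - y|) := by
  by_cases hc : L * R ≤ ε
  · -- trivial case: constant f 0 works
    refine ⟨0, Fin.elim0, Fin.elim0, Fin.elim0, by norm_num; positivity,
      (fun i => i.elim0), (fun i => i.elim0), (fun i => i.elim0), ?_, ?_⟩
    · intro x hx
      simp only [Finset.univ_eq_empty, Finset.sum_empty, add_zero]
      have h0 : (0:ℝ) ∈ Set.Icc (-R) R := ⟨by linarith, by linarith⟩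
      have habs : |(0:ℝ) - x| ≤ R := by
        rw [zero_sub, abs_neg]
        exact abs_le.mpr ⟨hx.1, hx.2⟩
      calc |f 0 - f x| ≤ L * |0 - x| := hf 0 h0 x hx
        _ ≤ L * R := mul_le_mul_of_nonneg_left habs hL.le
        _ ≤ ε := hc
    · intro x y
      simp only [Finset.univ_eq_empty, Finset.sum_empty, add_zero, sub_self, abs_zero]
      positivity
  · push_neg at hc
    set n : ℕ := ⌈L * R / (2 * ε)⌉₊ with hndef
    have hq0 : (0:ℝ) < L * R / (2 * ε) := by positivity
    have hq : (1:ℝ)/2 < L * R / (2 * ε) := by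
      rw [lt_div_iff₀ (by positivity : (0:ℝ) < 2 * ε)]
      linarith
    have hn1 : 1 ≤ n := Nat.ceil_pos.mpr hq0
    have hnpos : (0:ℝ) < (n:ℝ) := by exact_mod_cast hn1
    have hnq : (n:ℝ) ≤ 2 * (L * R / (2 * ε)) := by
      rcases le_or_gt (L * R / (2 * ε)) 1 with h1 | h1
      · have hne : n ≤ 1 := Nat.ceil_le.mpr (by linarith)
        have hne' : n = 1 := le_antisymm hne hn1
        rw [hne']; push_cast; linarith
      · have := Nat.ceil_lt_add_one hq0.le
        rw [← hndef] at this
        linarith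
    have hm : ((n + n : ℕ) : ℝ) ≤ 2 * R * L / ε := by
      push_cast
      have heq : 2 * (2 * (L * R / (2 * ε))) = 2 * R * L / ε := by
        field_simp
      linarith
    set δ : ℝ := R / n with hδdef
    have hδ : 0 < δ := by positivity
    have hRn : (n:ℝ) * δ = R := by
      rw [hδdef]; field_simp
    have hεδ : L * δ / 2 ≤ ε := by
      have h1 : L * R / (2 * ε) ≤ (n:ℝ) := Nat.le_ceil _
      rw [div_le_iff₀ (by positivity : (0:ℝ) < 2 * ε)] at h1
      have h2 : L * ((n:ℝ) * δ) ≤ (n:ℝ) * (2 * ε) := by rw [hRn]; exact h1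
      nlinarith [h2, hnpos]
    set h₂ : ℝ → ℝ := fun t => f (-t) with hh2def
    have hlipf : ∀ u ∈ Set.Icc (0:ℝ) ((n:ℝ) * δ), ∀ v ∈ Set.Icc (0:ℝ) ((n:ℝ) * δ),
        |f u - f v| ≤ L * |u - v| := by
      rw [hRn]
      intro u hu v hv
      exact hf u ⟨by linarith [hu.1], hu.2⟩ v ⟨by linarith [hv.1], hv.2⟩
    have hlip2 : ∀ u ∈ Set.Icc (0:ℝ) ((n:ℝ) * δ), ∀ v ∈ Set.Icc (0:ℝ) ((n:ℝ) * δ),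
        |h₂ u - h₂ v| ≤ L * |u - v| := by
      rw [hRn]
      intro u hu v hv
      have h' := hf (-u) ⟨by linarith [hu.2], by linarith [hu.1]⟩
        (-v) ⟨by linarith [hv.2], by linarith [hv.1]⟩
      rw [show (-u) - (-v) = -(u - v) by ring, abs_neg] at h'
      simpa [hh2def] using h'
    have hsf : ∀ j < n, |slp f δ j| ≤ L := slp_bound f hδ hlipf
    have hs2 : ∀ j < n, |slp h₂ δ j| ≤ L := slp_bound h₂ hδ hlip2
    have hsum : ∀ x : ℝ,
        (∑ i : Fin (n + n),
          Fin.append (fun j : Fin n => coefA f δ j) (fun j : Fin n => coefA h₂ δ j) i *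
            max 0 (Fin.append (fun _ : Fin n => (1:ℝ)) (fun _ : Fin n => (-1:ℝ)) i * x -
              Fin.append (fun j : Fin n => ((j : ℕ) : ℝ) * δ)
                (fun j : Fin n => ((j : ℕ) : ℝ) * δ) i))
        = Ssum f δ n x + Ssum h₂ δ n (-x) := by
      intro x
      rw [Fin.sum_univ_add]
      congr 1
      · rw [Ssum, ← Fin.sum_univ_eq_sum_range (fun j => coefA f δ j * max 0 (x - j * δ)) n]
        apply Finset.sum_congr rfl
        intro j _
        rw [Fin.append_left, Fin.append_left, Fin.append_left, one_mul]
      · rw [Ssum, ← Fin.sum_univ_eq_sum_range (fun j => coefA h₂ δ j * max 0 (-x - j * δ)) n]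
        apply Finset.sum_congr rfl
        intro j _
        rw [Fin.append_right, Fin.append_right, Fin.append_right, neg_one_mul]
    refine ⟨n + n,
      Fin.append (fun j : Fin n => coefA f δ j) (fun j : Fin n => coefA h₂ δ j),
      Fin.append (fun j : Fin n => ((j : ℕ) : ℝ) * δ) (fun j : Fin n => ((j : ℕ) : ℝ) * δ),
      Fin.append (fun _ : Fin n => (1:ℝ)) (fun _ : Fin n => (-1:ℝ)),
      hm, ?_, ?_, ?_, ?_, ?_⟩
    · intro i
      refine Fin.addCases (fun j => ?_) (fun j => ?_) i
      · rw [Fin.append_left]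
        exact coefA_bound f hL.le hsf j j.isLt
      · rw [Fin.append_right]
        exact coefA_bound h₂ hL.le hs2 j j.isLt
    · intro i
      have hβ : ∀ j : Fin n, |((j : ℕ) : ℝ) * δ| ≤ R := by
        intro j
        have hj : ((j : ℕ) : ℝ) ≤ (n : ℝ) := by exact_mod_cast j.isLt.le
        rw [abs_of_nonneg (by positivity)]
        nlinarith
      refine Fin.addCases (fun j => ?_) (fun j => ?_) i
      · rw [Fin.append_left]; exact hβ j
      · rw [Fin.append_right]; exact hβ j
    · intro i
      refine Fin.addCases (fun j => ?_) (fun j => ?_) i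
      · rw [Fin.append_left]; right; rfl
      · rw [Fin.append_right]; left; rfl
    · -- approximation
      intro x hx
      rw [hsum x]
      rcases le_or_gt 0 x with hx0 | hx0
      · rw [Ssum_of_nonpos h₂ hδ.le n (neg_nonpos.mpr hx0), add_zero]
        have happ := Ssum_approx f hδ hL.le hn1 hlipf
          (x := x) ⟨hx0, by rw [hRn]; exact hx.2⟩
        exact happ.trans hεδ
      · rw [Ssum_of_nonpos f hδ.le n hx0.le, zero_add]
        have hmx : -x ∈ Set.Icc (0:ℝ) ((n:ℝ) * δ) :=
          ⟨by linarith, by rw [hRn]; linarith [hx.1]⟩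
        have happ := Ssum_approx h₂ hδ hL.le hn1 hlip2 hmx
        simp only [hh2def, neg_zero, neg_neg] at happ
        exact happ.trans hεδ
    · -- Lipschitz
      have key : ∀ x y : ℝ, x ≤ y →
          |(Ssum f δ n y + Ssum h₂ δ n (-y)) - (Ssum f δ n x + Ssum h₂ δ n (-x))|
            ≤ L * (y - x) := by
        intro x y hxy
        rcases le_or_gt 0 x with hx0 | hx0
        · rw [Ssum_of_nonpos h₂ hδ.le n (by linarith : -y ≤ 0),
            Ssum_of_nonpos h₂ hδ.le n (by linarith : -x ≤ 0), add_zero, add_zero]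
          exact Ssum_lipschitz f hδ hL.le hn1 hsf x y hxy
        · rcases le_or_gt y 0 with hy0 | hy0
          · rw [Ssum_of_nonpos f hδ.le n hy0, Ssum_of_nonpos f hδ.le n (by linarith),
              zero_add, zero_add]
            have hl := Ssum_lipschitz h₂ hδ hL.le hn1 hs2 (-y) (-x) (by linarith)
            rw [abs_sub_comm]
            calc |Ssum h₂ δ n (-x) - Ssum h₂ δ n (-y)| ≤ L * (-x - -y) := hl
              _ = L * (y - x) := by ring
          · rw [Ssum_of_nonpos f hδ.le n hx0.le,
              Ssum_of_nonpos h₂ hδ.le n (by linarith : -y ≤ 0), add_zero, zero_add]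
            have h1 := Ssum_lipschitz f hδ hL.le hn1 hsf 0 y hy0.le
            have h2 := Ssum_lipschitz h₂ hδ hL.le hn1 hs2 0 (-x) (by linarith)
            have e1 : Ssum f δ n 0 = 0 := Ssum_of_nonpos f hδ.le n le_rfl
            have e2 : Ssum h₂ δ n 0 = 0 := Ssum_of_nonpos h₂ hδ.le n le_rfl
            rw [e1, sub_zero] at h1
            rw [e2, sub_zero] at h2
            calc |Ssum f δ n y - Ssum h₂ δ n (-x)|
                ≤ |Ssum f δ n y| + |Ssum h₂ δ n (-x)| := abs_sub _ _
              _ ≤ L * (y - 0) + L * (-x - 0) := by linarith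
              _ = L * (y - x) := by ring
      intro x y
      rw [hsum x, hsum y,
        show ∀ a b : ℝ, (f 0 + a) - (f 0 + b) = a - b from fun a b => by ring]
      rcases le_total x y with hxy | hxy
      · calc |(Ssum f δ n x + Ssum h₂ δ n (-x)) - (Ssum f δ n y + Ssum h₂ δ n (-y))|
            = |(Ssum f δ n y + Ssum h₂ δ n (-y)) - (Ssum f δ n x + Ssum h₂ δ n (-x))| :=
              abs_sub_comm _ _
          _ ≤ L * (y - x) := key x y hxy
          _ = L * |x - y| := by rw [abs_of_nonpos (by linarith : x - y ≤ 0)]; ring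
      · calc |(Ssum f δ n x + Ssum h₂ δ n (-x)) - (Ssum f δ n y + Ssum h₂ δ n (-y))|
            ≤ L * (x - y) := key y x hxy
          _ = L * |x - y| := by rw [abs_of_nonneg (by linarith : (0:ℝ) ≤ x - y)]
end

section
/- Let d ≥ 2, let f : [−1,1] → [−1,1] be L-Lipschitz with L > 0, let ε > 0, and define F : S^{d−1} × S^{d−1} → ℝ by F(x,x') = f(⟨x,x'⟩). Then there exists a function G : S^{d−1} × S^{d−1} → ℝ implemented by a depth-3 ReLU network of width at most 16 d² L / ε with weights bounded by max(4, 2L), such that |F(x,x') − G(x,x')| ≤ ε for all x, x' ∈ S^{d−1}. -/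
open MeasureTheory Real
open scoped RealInnerProductSpace

/-- `G` is implemented by a depth-3 `σ`-network of width `r` with weights bounded by `B`:
`G(x,x') = w₃ᵀ σ(W₂ σ(W₁ x + W₁' x' + b₁) + b₂) + b₃`. -/
def IsDepth3Net (d r : ℕ) (B : ℝ) (σ : ℝ → ℝ) (G : Sph d → Sph d → ℝ) : Prop :=
  ∃ (W₁ W₁' : Matrix (Fin r) (Fin d) ℝ) (W₂ : Matrix (Fin r) (Fin r) ℝ)
    (w₃ b₁ b₂ : Fin r → ℝ) (b₃ : ℝ),
    (∀ i j, |W₁ i j| ≤ B) ∧ (∀ i j, |W₁' i j| ≤ B) ∧ (∀ i j, |W₂ i j| ≤ B) ∧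
    (∀ i, |w₃ i| ≤ B) ∧ (∀ i, |b₁ i| ≤ B) ∧ (∀ i, |b₂ i| ≤ B) ∧ |b₃| ≤ B ∧
    ∀ x x' : Sph d, G x x' =
      (∑ i, w₃ i * σ ((∑ j, W₂ i j * σ ((∑ k, W₁ j k * (x : EuclideanSpace ℝ (Fin d)) k) +
        (∑ k, W₁' j k * (x' : EuclideanSpace ℝ (Fin d)) k) + b₁ j)) + b₂ i)) + b₃

open Finset



lemma sum_relu_local (c a : ℕ → ℝ) (len j : ℕ) (hj : j < len) (s : ℝ)
    (h1 : ∀ k ≤ j, a k ≤ s) (h2 : ∀ k < len, j < k → s ≤ a k) :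
    ∑ k ∈ range len, c k * max 0 (s - a k)
      = ∑ k ∈ range (j+1), c k * (s - a k) := by
  rw [Finset.range_eq_Ico, ← Finset.sum_Ico_consecutive _ (Nat.zero_le (j+1)) hj,
    ← Finset.range_eq_Ico]
  have h0 : ∑ k ∈ Finset.Ico (j+1) len, c k * max 0 (s - a k) = 0 := by
    apply Finset.sum_eq_zero
    intro k hk
    rw [Finset.mem_Ico] at hk
    have hs := h2 k hk.2 (Nat.lt_of_succ_le hk.1)
    have : max 0 (s - a k) = 0 := max_eq_left (by linarith)
    rw [this, mul_zero]
  rw [h0, add_zero]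
  apply Finset.sum_congr rfl
  intro k hk
  rw [Finset.mem_range] at hk
  have := h1 k (Nat.lt_succ_iff.mp hk)
  rw [max_eq_right (by linarith)]

noncomputable def sqNet (m : ℕ) (t : ℝ) : ℝ :=
  ∑ k ∈ Finset.range m, (if k = 0 then 2/(m:ℝ) else 4/m) *
    (max 0 (t - 2*k/m) + max 0 (-t - 2*k/m))

lemma sq_approx (m : ℕ) (hm : 1 ≤ m) (t : ℝ) (ht : |t| ≤ 2) :
    |sqNet m t - t^2| ≤ 1/m^2 := by
  have hm0 : (0:ℝ) < m := by exact_mod_cast hm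
  set u := |t| with hu
  have hu0 : 0 ≤ u := abs_nonneg t
  have hut : u^2 = t^2 := sq_abs t
  have key : sqNet m t = ∑ k ∈ range m, (if k = 0 then 2/(m:ℝ) else 4/m) *
      max 0 (u - 2*k/m) := by
    unfold sqNet
    apply Finset.sum_congr rfl
    intro k _
    congr 1
    have hk0 : (0:ℝ) ≤ 2*k/m := by positivity
    rcases abs_cases t with ⟨h1, _⟩ | ⟨h1, h2⟩
    · rw [← hu, h1] at *
      have : max 0 (-t - 2*k/m) = 0 := max_eq_left (by linarith)
      rw [this, add_zero, h1]
    · rw [← hu] at *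
      have : max 0 (t - 2*k/m) = 0 := max_eq_left (by linarith)
      rw [this, zero_add, h1]
  rw [key, ← hut]
  set j := min (m-1) ⌊u*m/2⌋₊ with hj
  have hjm : j < m := lt_of_le_of_lt (min_le_left _ _) (by omega)
  have hja : (2*(j:ℝ)/m) ≤ u := by
    have h1 : (j:ℝ) ≤ ⌊u*m/2⌋₊ := by exact_mod_cast min_le_right (m-1) ⌊u*m/2⌋₊
    have h2 : (⌊u*m/2⌋₊:ℝ) ≤ u*m/2 := Nat.floor_le (by positivity)
    rw [div_le_iff₀ hm0]
    nlinarith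
  have hjb : u ≤ 2*((j:ℝ)+1)/m := by
    rw [le_div_iff₀ hm0]
    rcases le_or_gt (m-1) ⌊u*m/2⌋₊ with h | h
    · have hje : j = m - 1 := by omega
      have hcast : ((j:ℝ)+1) = (m:ℝ) := by
        rw [hje]; push_cast [Nat.cast_sub hm]; ring
      rw [hcast]; nlinarith
    · have hje : j = ⌊u*m/2⌋₊ := by omega
      have h2 : u*m/2 < (⌊u*m/2⌋₊:ℝ) + 1 := Nat.lt_floor_add_one _
      rw [hje]; push_cast; nlinarith
  rw [sum_relu_local _ _ m j hjm u
    (by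
      intro k hk
      have hkk : (k:ℝ) ≤ j := by exact_mod_cast hk
      calc 2*(k:ℝ)/m ≤ 2*(j:ℝ)/m := by gcongr
        _ ≤ u := hja)
    (by
      intro k _ hjk
      have hkk : (j:ℝ) + 1 ≤ k := by exact_mod_cast hjk
      calc u ≤ 2*((j:ℝ)+1)/m := hjb
        _ ≤ 2*k/m := by gcongr)]
  -- now compute the finite sum
  have hsum : ∑ k ∈ range (j+1), (if k = 0 then 2/(m:ℝ) else 4/m) * (u - 2*k/m)
      = (2*(j:ℝ)+1)*(2/m)*u - (j:ℝ)*((j:ℝ)+1)*(2/m)^2 := by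
    have e1 : ∀ k ∈ range (j+1), (if k = 0 then 2/(m:ℝ) else 4/m) * (u - 2*k/m)
        = (4/m*u - (8/m^2)*k) - (if k = 0 then (2/(m:ℝ))*u else 0) := by
      intro k _
      rcases eq_or_ne k 0 with h | h
      · subst h; simp; ring
      · rw [if_neg h, if_neg h]; ring
    rw [Finset.sum_congr rfl e1, Finset.sum_sub_distrib, Finset.sum_ite_eq' (range (j+1)) 0
      (fun _ => (2/(m:ℝ))*u)]
    rw [if_pos (Finset.mem_range.mpr (Nat.succ_pos j)), Finset.sum_sub_distrib,
      Finset.sum_const, ← Finset.mul_sum]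
    have gauss : ∑ k ∈ range (j+1), (k:ℝ) = (j:ℝ)*((j:ℝ)+1)/2 := by
      have := Finset.sum_range_id_mul_two (j+1)
      have : ((∑ i ∈ range (j+1), i : ℕ) : ℝ) * 2 = ((j+1):ℕ) * (j:ℕ) := by
        exact_mod_cast congrArg (Nat.cast : ℕ → ℝ) this
      push_cast at this
      push_cast
      linarith
    rw [gauss, Finset.card_range, nsmul_eq_mul]
    push_cast
    field_simp
    ring
  rw [hsum]
  have key2 : (2*(j:ℝ)+1)*(2/m)*u - (j:ℝ)*((j:ℝ)+1)*(2/m)^2 - u^2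
      = (u - 2*j/m) * (2*((j:ℝ)+1)/m - u) := by field_simp; ring
  rw [key2, abs_of_nonneg (by nlinarith)]
  have hXY : (u - 2*(j:ℝ)/m) + (2*((j:ℝ)+1)/m - u) = 2/m := by field_simp; ring
  calc (u - 2*(j:ℝ)/m) * (2*((j:ℝ)+1)/m - u)
      ≤ ((u - 2*(j:ℝ)/m) + (2*((j:ℝ)+1)/m - u))^2/4 := by
        nlinarith [sq_nonneg ((u - 2*(j:ℝ)/m) - (2*((j:ℝ)+1)/m - u))]
    _ = 1/m^2 := by rw [hXY]; field_simp; ring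

noncomputable def innerNet (d m : ℕ) (x x' : EuclideanSpace ℝ (Fin d)) : ℝ :=
  ((∑ j : Fin d, sqNet m (x j + x' j)) - 2)/2

lemma coord_abs_le (d : ℕ) (x : EuclideanSpace ℝ (Fin d)) (hx : ‖x‖ = 1) (j : Fin d) :
    |x j| ≤ 1 := by
  have h := EuclideanSpace.norm_eq x
  rw [hx] at h
  have h2 : ∑ i, x i ^ 2 = 1 := by
    have hs : ∑ i, ‖x i‖ ^ 2 = 1 := Real.sqrt_eq_one.mp h.symm
    rw [← hs]
    exact Finset.sum_congr rfl fun i _ => by simp [Real.norm_eq_abs, sq_abs]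
  have h3 : x j ^ 2 ≤ 1 := by
    rw [← h2]
    exact Finset.single_le_sum (f := fun i => x i ^ 2) (fun i _ => sq_nonneg _) (mem_univ j)
  nlinarith [abs_nonneg (x j), sq_abs (x j)]

lemma innerNet_approx (d m : ℕ) (hm : 1 ≤ m) (x x' : EuclideanSpace ℝ (Fin d))
    (hx : ‖x‖ = 1) (hx' : ‖x'‖ = 1) :
    |innerNet d m x x' - ⟪x, x'⟫| ≤ d/(2*m^2) := by
  have hsq : ∀ y : EuclideanSpace ℝ (Fin d), ‖y‖ = 1 → ∑ j, y j ^ 2 = 1 := by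
    intro y hy
    have h := EuclideanSpace.norm_eq y
    rw [hy] at h
    have hs : ∑ i, ‖y i‖ ^ 2 = 1 := Real.sqrt_eq_one.mp h.symm
    rw [← hs]
    exact Finset.sum_congr rfl fun i _ => by simp [Real.norm_eq_abs, sq_abs]
  have hinner : ⟪x, x'⟫ = ∑ j, x j * x' j := by
    rw [PiLp.inner_apply]
    simp [RCLike.inner_apply, mul_comm]
  have hkey : ∑ j : Fin d, (x j + x' j)^2 = 2 + 2 * ⟪x, x'⟫ := by
    have e : ∀ j : Fin d, (x j + x' j)^2 = x j ^2 + x' j ^2 + 2*(x j * x' j) := fun j => by ring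
    rw [Finset.sum_congr rfl fun j _ => e j, Finset.sum_add_distrib, Finset.sum_add_distrib,
      hsq x hx, hsq x' hx', hinner, ← Finset.mul_sum]
    ring
  have hdiff : innerNet d m x x' - ⟪x, x'⟫
      = (∑ j : Fin d, (sqNet m (x j + x' j) - (x j + x' j)^2))/2 := by
    unfold innerNet
    rw [Finset.sum_sub_distrib, hkey]
    ring
  rw [hdiff, abs_div, abs_of_nonneg (by norm_num : (0:ℝ) ≤ 2)]
  have hb : |∑ j : Fin d, (sqNet m (x j + x' j) - (x j + x' j)^2)| ≤ d * (1/m^2) := by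
    calc |∑ j : Fin d, (sqNet m (x j + x' j) - (x j + x' j)^2)|
        ≤ ∑ j : Fin d, |sqNet m (x j + x' j) - (x j + x' j)^2| := Finset.abs_sum_le_sum_abs _ _
      _ ≤ ∑ _j : Fin d, 1/(m:ℝ)^2 := by
          apply Finset.sum_le_sum
          intro j _
          apply sq_approx m hm
          calc |x j + x' j| ≤ |x j| + |x' j| := abs_add_le _ _
            _ ≤ 2 := by
              have := coord_abs_le d x hx j
              have := coord_abs_le d x' hx' j
              linarith
      _ = d * (1/m^2) := by simp [Finset.card_univ, mul_comm]
  calc |∑ j : Fin d, (sqNet m (x j + x' j) - (x j + x' j)^2)|/2 ≤ (d * (1/m^2))/2 := by linarith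
    _ = d/(2*m^2) := by ring

noncomputable def fknot (n i : ℕ) : ℝ := -1 + 2*i/n
noncomputable def fslope (f : ℝ → ℝ) (n i : ℕ) : ℝ := (f (fknot n (i+1)) - f (fknot n i)) * n / 2
noncomputable def fw (f : ℝ → ℝ) (n i : ℕ) : ℝ :=
  fslope f n i - if i = 0 then 0 else fslope f n (i-1)

lemma fknot_mem (n i : ℕ) (hn : 1 ≤ n) (hi : i ≤ n) : fknot n i ∈ Set.Icc (-1:ℝ) 1 := by
  have hn0 : (0:ℝ) < n := by exact_mod_cast hn
  have hi' : (i:ℝ) ≤ n := by exact_mod_cast hi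
  unfold fknot
  constructor
  · have : 0 ≤ 2*(i:ℝ)/n := by positivity
    linarith
  · have : 2*(i:ℝ)/n ≤ 2 := by rw [div_le_iff₀ hn0]; nlinarith
    linarith
  
lemma fslope_abs (L : ℝ) (f : ℝ → ℝ) (n : ℕ) (hn : 1 ≤ n)
    (hlip : ∀ x ∈ Set.Icc (-1:ℝ) 1, ∀ y ∈ Set.Icc (-1:ℝ) 1, |f x - f y| ≤ L * |x - y|)
    (i : ℕ) (hi : i < n) : |fslope f n i| ≤ L := by
  have hn0 : (0:ℝ) < n := by exact_mod_cast hn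
  have h1 := hlip _ (fknot_mem n (i+1) hn hi) _ (fknot_mem n i hn (le_of_lt hi))
  have hgap : fknot n (i+1) - fknot n i = 2/n := by
    unfold fknot; push_cast; field_simp; ring
  rw [hgap, abs_of_pos (div_pos two_pos hn0)] at h1
  unfold fslope
  rw [abs_div, abs_mul, abs_of_pos hn0, abs_of_pos (by norm_num : (0:ℝ) < 2)]
  rw [div_le_iff₀ (by norm_num : (0:ℝ) < 2)]
  calc |f (fknot n (i+1)) - f (fknot n i)| * (n:ℝ) ≤ (L * (2/n)) * n :=
        mul_le_mul_of_nonneg_right h1 (le_of_lt hn0)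
    _ = L * 2 := by field_simp

lemma fw_telescope (f : ℝ → ℝ) (n : ℕ) (hn : 1 ≤ n) (s : ℝ) (j : ℕ) :
    ∑ i ∈ range (j+1), fw f n i * (s - fknot n i)
      = (f (fknot n j) - f (fknot n 0)) + fslope f n j * (s - fknot n j) := by
  have hn0 : (0:ℝ) < n := by exact_mod_cast hn
  induction j with
  | zero => simp [fw]
  | succ j ih =>
    rw [Finset.sum_range_succ, ih]
    have hgap : fknot n (j+1) - fknot n j = 2/n := by
      unfold fknot; push_cast; field_simp; ring
    have hsl : fslope f n j * (fknot n (j+1) - fknot n j) = f (fknot n (j+1)) - f (fknot n j) := by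
      rw [hgap]; unfold fslope; field_simp
    have hw : fw f n (j+1) = fslope f n (j+1) - fslope f n j := by
      unfold fw; simp
    rw [hw]
    nlinarith [hsl]

lemma mid_bound (L g x A B : ℝ) (hL : 0 ≤ L) (hg : 0 < g) (hx0 : 0 ≤ x) (hxg : x ≤ g)
    (hA : |A| ≤ L*x) (hB : |B| ≤ L*(g - x)) :
    |A + (B - A)*(x/g)| ≤ L*g/2 := by
  rw [abs_le] at *
  have hgx : 0 ≤ g - x := by linarith
  have t3 : 0 ≤ L*(g - 2*x)^2/2 := by positivity
  constructor
  · have key : (A + (B - A)*(x/g) + L*g/2) * g = (A + L*x)*(g - x) + (B + L*(g-x))*x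
        + L*(g - 2*x)^2/2 := by field_simp; ring
    have t1 : 0 ≤ (A + L*x)*(g - x) := mul_nonneg (by linarith [hA.1]) hgx
    have t2 : 0 ≤ (B + L*(g-x))*x := mul_nonneg (by linarith [hB.1]) hx0
    have hpos : 0 ≤ (A + (B - A)*(x/g) + L*g/2) * g := by rw [key]; linarith
    nlinarith [hpos]
  · have key : (L*g/2 - (A + (B - A)*(x/g))) * g = (L*x - A)*(g - x) + (L*(g-x) - B)*x
        + L*(g - 2*x)^2/2 := by field_simp; ring
    have t1 : 0 ≤ (L*x - A)*(g - x) := mul_nonneg (by linarith [hA.2]) hgx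
    have t2 : 0 ≤ (L*(g-x) - B)*x := mul_nonneg (by linarith [hB.2]) hx0
    have hpos : 0 ≤ (L*g/2 - (A + (B - A)*(x/g))) * g := by rw [key]; linarith
    nlinarith [hpos]

lemma lip_interp (L : ℝ) (hL : 0 < L) (f : ℝ → ℝ)
    (hlip : ∀ x ∈ Set.Icc (-1:ℝ) 1, ∀ y ∈ Set.Icc (-1:ℝ) 1, |f x - f y| ≤ L * |x - y|)
    (n : ℕ) (hn : 1 ≤ n) (s t : ℝ) (ht : t ∈ Set.Icc (-1:ℝ) 1) :
    |f (-1) + (∑ i ∈ range n, fw f n i * max 0 (s - fknot n i)) - f t|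
      ≤ L/n + L*|s - t| := by
  have hn0 : (0:ℝ) < n := by exact_mod_cast hn
  have hLn : 0 ≤ L/n := by positivity
  have hknot0 : fknot n 0 = -1 := by unfold fknot; simp
  rcases lt_or_ge s (-1) with hs | hs
  · -- s below all knots
    have hzero : ∑ i ∈ range n, fw f n i * max 0 (s - fknot n i) = 0 := by
      apply Finset.sum_eq_zero
      intro i _
      have hki : (-1:ℝ) ≤ fknot n i := by
        unfold fknot
        have : 0 ≤ 2*(i:ℝ)/n := by positivity
        linarith
      have : max 0 (s - fknot n i) = 0 := max_eq_left (by linarith)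
      rw [this, mul_zero]
    rw [hzero, add_zero]
    have h1 := hlip (-1) (by constructor <;> norm_num) t ht
    have h2 : |(-1:ℝ) - t| ≤ |s - t| := by
      rw [abs_of_nonpos (by linarith [ht.1]), abs_of_nonpos (by linarith [ht.1])]
      linarith
    calc |f (-1) - f t| ≤ L * |(-1) - t| := h1
      _ ≤ L * |s - t| := by nlinarith
      _ ≤ L/n + L*|s - t| := by linarith
  · -- s ≥ -1
    set j := min (n-1) ⌊(s+1)*n/2⌋₊ with hjdef
    have hjn : j < n := lt_of_le_of_lt (min_le_left _ _) (by omega)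
    have hja : fknot n j ≤ s := by
      have h1 : (j:ℝ) ≤ ⌊(s+1)*n/2⌋₊ := by exact_mod_cast min_le_right (n-1) ⌊(s+1)*n/2⌋₊
      have h2 : (⌊(s+1)*n/2⌋₊:ℝ) ≤ (s+1)*n/2 := Nat.floor_le (by nlinarith)
      unfold fknot
      rw [← sub_nonneg]
      have : 2*(j:ℝ)/n ≤ s + 1 := by rw [div_le_iff₀ hn0]; nlinarith
      linarith
    have hjb : ∀ k < n, j < k → s ≤ fknot n k := by
      intro k hk hjk
      have hje : j = ⌊(s+1)*n/2⌋₊ := by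
        rcases le_or_gt (n-1) ⌊(s+1)*n/2⌋₊ with h | h
        · exfalso; omega
        · omega
      have h2 : (s+1)*n/2 < (⌊(s+1)*n/2⌋₊:ℝ) + 1 := Nat.lt_floor_add_one _
      have hkk : (j:ℝ) + 1 ≤ k := by exact_mod_cast hjk
      unfold fknot
      rw [← sub_nonneg]
      have hs1 : s + 1 ≤ 2*((j:ℝ)+1)/n := by
        rw [le_div_iff₀ hn0]; rw [hje] at *; push_cast at *; nlinarith
      have : 2*((j:ℝ)+1)/n ≤ 2*(k:ℝ)/n := by gcongr
      linarith
    rw [sum_relu_local _ _ n j hjn s (fun k hk => by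
        have hkk : (k:ℝ) ≤ j := by exact_mod_cast hk
        calc fknot n k ≤ fknot n j := by unfold fknot; gcongr
          _ ≤ s := hja) hjb,
      fw_telescope f n hn s j, hknot0]
    -- now the error analysis
    set u := min s (fknot n (j+1)) with hudef
    have hvj1 : fknot n (j+1) ≤ 1 := (fknot_mem n (j+1) hn (by omega)).2
    have hvjm : fknot n j ∈ Set.Icc (-1:ℝ) 1 := fknot_mem n j hn (by omega)
    have hvj1m : fknot n (j+1) ∈ Set.Icc (-1:ℝ) 1 := fknot_mem n (j+1) hn (by omega)
    have hgap : fknot n (j+1) - fknot n j = 2/n := by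
      unfold fknot; push_cast; field_simp; ring
    have hgap0 : (0:ℝ) ≤ 2/(n:ℝ) := by positivity
    have hu1 : fknot n j ≤ u := le_min hja (by linarith)
    have hu2 : u ≤ fknot n (j+1) := min_le_right _ _
    have hu3 : u ≤ s := min_le_left _ _
    have hum : u ∈ Set.Icc (-1:ℝ) 1 := ⟨le_trans hvjm.1 hu1, le_trans hu2 hvj1⟩
    have hC1 : (s - u) + |u - t| ≤ |s - t| := by
      rcases le_or_gt s (fknot n (j+1)) with h | h
      · rw [hudef, min_eq_left h]; simp
      · have hjn1 : j = n - 1 := by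
          by_contra hne
          have : j + 1 < n := by omega
          exact absurd (hjb (j+1) this (Nat.lt_succ_self j)) (by linarith)
        have hv1 : fknot n (j+1) = 1 := by
          unfold fknot
          rw [hjn1]
          have hc : ((n - 1 + 1 : ℕ):ℝ) = n := by
            have : n - 1 + 1 = n := by omega
            rw [this]
          rw [hc]
          field_simp
          norm_num
        rw [hudef, hv1, min_eq_right (by linarith)]
        rw [abs_of_nonneg (by linarith [ht.2]), abs_of_nonneg (by linarith [ht.2])]
        linarith
    -- decompose
    have hxg : u - fknot n j ≤ 2/n := by linarith
    have hx0 : 0 ≤ u - fknot n j := by linarith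
    have hAb : |f (fknot n j) - f u| ≤ L * (u - fknot n j) := by
      have h := hlip _ hvjm _ hum
      calc |f (fknot n j) - f u| ≤ L * |fknot n j - u| := h
        _ = L * (u - fknot n j) := by rw [abs_of_nonpos (by linarith), neg_sub]
    have hBb : |f (fknot n (j+1)) - f u| ≤ L * (2/n - (u - fknot n j)) := by
      have h := hlip _ hvj1m _ hum
      calc |f (fknot n (j+1)) - f u| ≤ L * |fknot n (j+1) - u| := h
        _ = L * (2/n - (u - fknot n j)) := by
            rw [abs_of_nonneg (by linarith)]
            congr 1
            linarith
    have hmid := mid_bound L (2/n) (u - fknot n j) (f (fknot n j) - f u)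
      (f (fknot n (j+1)) - f u) (le_of_lt hL) (by positivity) hx0 hxg hAb hBb
    have hmid_eq : (f (fknot n j) - f u) + ((f (fknot n (j+1)) - f u) - (f (fknot n j) - f u))
          * ((u - fknot n j)/(2/n))
        = f (fknot n j) + fslope f n j * (u - fknot n j) - f u := by
      unfold fslope
      field_simp
      ring
    rw [hmid_eq] at hmid
    have hslb : |fslope f n j| ≤ L := fslope_abs L f n hn hlip j hjn
    have hft : |f u - f t| ≤ L * |u - t| := hlip _ hum _ ht
    have hsplit : f (-1) + (f (fknot n j) - f (-1) + fslope f n j * (s - fknot n j)) - f t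
        = fslope f n j * (s - u) + (f (fknot n j) + fslope f n j * (u - fknot n j) - f u)
          + (f u - f t) := by ring
    rw [hsplit]
    have hterm1 : |fslope f n j * (s - u)| ≤ L * (s - u) := by
      rw [abs_mul, abs_of_nonneg (show (0:ℝ) ≤ s - u by linarith)]
      exact mul_le_mul_of_nonneg_right hslb (by linarith)
    have habs1 := abs_add_le (fslope f n j * (s - u))
      (f (fknot n j) + fslope f n j * (u - fknot n j) - f u)
    have habs2 := abs_add_le (fslope f n j * (s - u)
      + (f (fknot n j) + fslope f n j * (u - fknot n j) - f u)) (f u - f t)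
    have h1 : L*(2/n)/2 = L/n := by ring
    have h2 : L * (s - u) + L * |u - t| ≤ L * |s - t| := by
      rw [← mul_add]
      exact mul_le_mul_of_nonneg_left hC1 (le_of_lt hL)
    linarith


lemma fw_abs (L : ℝ) (hL : 0 < L) (f : ℝ → ℝ) (n : ℕ) (hn : 1 ≤ n)
    (hlip : ∀ x ∈ Set.Icc (-1:ℝ) 1, ∀ y ∈ Set.Icc (-1:ℝ) 1, |f x - f y| ≤ L * |x - y|)
    (i : ℕ) (hi : i < n) : |fw f n i| ≤ 2*L := by
  unfold fw
  rcases Nat.eq_zero_or_pos i with h0 | hpos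
  · subst h0
    rw [if_pos rfl, sub_zero]
    have := fslope_abs L f n hn hlip 0 (by omega)
    linarith
  · rw [if_neg (by omega)]
    have h1 := fslope_abs L f n hn hlip i hi
    have h2 := fslope_abs L f n hn hlip (i-1) (by omega)
    have h3 := abs_add_le (fslope f n i) (-fslope f n (i-1))
    rw [abs_neg] at h3
    have h4 : fslope f n i - fslope f n (i-1) = fslope f n i + -fslope f n (i-1) := by ring
    rw [h4]
    linarith

lemma sum_range_mul' (g : ℕ → ℝ) (a M : ℕ) :
    ∑ i ∈ range (a*M), g i = ∑ j ∈ range a, ∑ p ∈ range M, g (M*j + p) := by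
  induction a with
  | zero => simp
  | succ a ih =>
    rw [Nat.succ_mul, Finset.sum_range_add, ih, Finset.sum_range_succ]
    simp [mul_comm]

lemma depth3_realize (d m n : ℕ) (hd : 1 ≤ d) (hm : 1 ≤ m) (hn : 1 ≤ n)
    (B : ℝ) (hB : 4 ≤ B) (wc : ℕ → ℝ) (hw : ∀ i < n, |wc i| ≤ B) (b3 : ℝ) (hb3 : |b3| ≤ B) :
    IsDepth3Net d (max (2*d*m) n) B (fun x => max 0 x)
      (fun x x' => b3 + ∑ i ∈ Finset.range n,
        wc i * max 0 (innerNet d m (x : EuclideanSpace ℝ (Fin d))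
          (x' : EuclideanSpace ℝ (Fin d)) - fknot n i)) := by
  set r := max (2*d*m) n with hr
  have hm0 : (0:ℝ) < m := by exact_mod_cast hm
  have hn0 : (0:ℝ) < n := by exact_mod_cast hn
  have hM0 : 0 < 2*m := by omega
  refine ⟨fun i l => if (i:ℕ) < 2*d*m ∧ (l:ℕ) = (i:ℕ)/(2*m)
      then (if (i:ℕ) % 2 = 0 then 1 else -1) else 0,
    fun i l => if (i:ℕ) < 2*d*m ∧ (l:ℕ) = (i:ℕ)/(2*m)
      then (if (i:ℕ) % 2 = 0 then 1 else -1) else 0,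
    fun i i' => if (i:ℕ) < n ∧ (i':ℕ) < 2*d*m
      then (if ((i':ℕ)%(2*m))/2 = 0 then 1/(m:ℝ) else 2/m) else 0,
    fun i => if (i:ℕ) < n then wc i else 0,
    fun i => if (i:ℕ) < 2*d*m then -(2*(((((i:ℕ)%(2*m))/2 : ℕ)):ℝ)/m) else 0,
    fun i => if (i:ℕ) < n then -(2*((i:ℕ):ℝ)/n) else 0,
    b3, ?_, ?_, ?_, ?_, ?_, ?_, hb3, ?_⟩
  · intro i l; dsimp only; split_ifs <;> simp <;> linarith
  · intro i l; dsimp only; split_ifs <;> simp <;> linarith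
  · intro i i'; dsimp only
    have hm1 : (1:ℝ) ≤ (m:ℝ) := by exact_mod_cast hm
    have hBm : B * 1 ≤ B * m := mul_le_mul_of_nonneg_left hm1 (by linarith)
    split_ifs with h1 h2
    · rw [abs_of_nonneg (by positivity), div_le_iff₀ hm0]; linarith
    · rw [abs_of_nonneg (by positivity), div_le_iff₀ hm0]; linarith
    · simp; linarith
  · intro i; dsimp only; split_ifs with h
    · exact hw i h
    · simp; linarith
  · intro i; dsimp only; split_ifs with h1
    · have hmod := Nat.mod_lt (i:ℕ) hM0
      have hk : ((i:ℕ)%(2*m))/2 < m := by omega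
      have hk' : ((((i:ℕ)%(2*m))/2 : ℕ):ℝ) ≤ (m:ℝ) - 1 := by
        have : (((i:ℕ)%(2*m))/2 : ℕ) ≤ m - 1 := by omega
        have h2 := Nat.cast_le (α := ℝ).mpr this
        push_cast [Nat.cast_sub hm] at h2
        linarith
      rw [abs_neg, abs_of_nonneg (by positivity), div_le_iff₀ hm0]
      nlinarith
    · simp; linarith
  · intro i; dsimp only; split_ifs with h1
    · have hk' : ((i:ℕ):ℝ) ≤ (n:ℝ) - 1 := by
        have : (i:ℕ) ≤ n - 1 := by omega
        have h2 := Nat.cast_le (α := ℝ).mpr this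
        push_cast [Nat.cast_sub hn] at h2
        linarith
      rw [abs_neg, abs_of_nonneg (by positivity), div_le_iff₀ hn0]
      nlinarith
    · simp; linarith
  · intro x x'
    dsimp only
    set xv := (x : EuclideanSpace ℝ (Fin d)) with hxv
    set xv' := (x' : EuclideanSpace ℝ (Fin d)) with hxv'
    set X : ℕ → ℝ := fun q => if h : q < d then xv ⟨q, h⟩ else 0 with hX
    set X' : ℕ → ℝ := fun q => if h : q < d then xv' ⟨q, h⟩ else 0 with hX'
    set P1 : ℕ → ℝ := fun q => if q < 2*d*m then
        (if q % 2 = 0 then 1 else -1) * (X (q/(2*m)) + X' (q/(2*m)))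
          - 2*(((q%(2*m))/2 : ℕ):ℝ)/m else 0 with hP1
    set F2 : ℕ → ℝ := fun q => if q < 2*d*m then
        (if ((q%(2*m))/2) = 0 then 1/(m:ℝ) else 2/m) * max 0 (P1 q) else 0 with hF2
    have h2dm : 2*d*m = d*(2*m) := by ring
    have hsingle : ∀ (y : EuclideanSpace ℝ (Fin d)) (c : ℕ) (hc : c < d) (e : ℝ),
        (∑ l : Fin d, (if (l:ℕ) = c then e else 0) * y l) = e * y ⟨c, hc⟩ := by
      intro y c hc e
      rw [Finset.sum_eq_single (⟨c, hc⟩ : Fin d)]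
      · simp
      · intro l _ hne
        have : (l:ℕ) ≠ c := fun h => hne (Fin.ext h)
        simp [this]
      · intro h; exact absurd (Finset.mem_univ _) h
    -- Step A : first layer preactivations
    have hpre : ∀ i : Fin r,
        (∑ l : Fin d, (if (i:ℕ) < 2*d*m ∧ (l:ℕ) = (i:ℕ)/(2*m)
            then (if (i:ℕ) % 2 = 0 then (1:ℝ) else -1) else 0) * xv l)
        + (∑ l : Fin d, (if (i:ℕ) < 2*d*m ∧ (l:ℕ) = (i:ℕ)/(2*m)
            then (if (i:ℕ) % 2 = 0 then (1:ℝ) else -1) else 0) * xv' l)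
        + (if (i:ℕ) < 2*d*m then -(2*(((((i:ℕ)%(2*m))/2 : ℕ)):ℝ)/m) else 0) = P1 (i:ℕ) := by
      intro i
      by_cases hq : (i:ℕ) < 2*d*m
      · have hq' : (i:ℕ) < d*(2*m) := by rw [← h2dm]; exact hq
        have hcol : (i:ℕ)/(2*m) < d := (Nat.div_lt_iff_lt_mul hM0).mpr hq'
        have e1 : (∑ l : Fin d, (if (i:ℕ) < 2*d*m ∧ (l:ℕ) = (i:ℕ)/(2*m)
            then (if (i:ℕ) % 2 = 0 then (1:ℝ) else -1) else 0) * xv l)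
            = (if (i:ℕ) % 2 = 0 then (1:ℝ) else -1) * xv ⟨(i:ℕ)/(2*m), hcol⟩ := by
          rw [← hsingle xv ((i:ℕ)/(2*m)) hcol]
          exact Finset.sum_congr rfl fun l _ => by simp [hq]
        have e2 : (∑ l : Fin d, (if (i:ℕ) < 2*d*m ∧ (l:ℕ) = (i:ℕ)/(2*m)
            then (if (i:ℕ) % 2 = 0 then (1:ℝ) else -1) else 0) * xv' l)
            = (if (i:ℕ) % 2 = 0 then (1:ℝ) else -1) * xv' ⟨(i:ℕ)/(2*m), hcol⟩ := by
          rw [← hsingle xv' ((i:ℕ)/(2*m)) hcol]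
          exact Finset.sum_congr rfl fun l _ => by simp [hq]
        rw [e1, e2, if_pos hq, hP1]
        simp only [if_pos hq]
        rw [hX, hX']
        simp only [dif_pos hcol]
        ring
      · rw [hP1]
        simp only [hq, if_false, and_false, false_and]
        simp
    -- Step B : core second-layer sum
    have hB2core : ∑ q ∈ range (2*d*m), F2 q = (∑ j ∈ range d, sqNet m (X j + X' j))/2 := by
      rw [show (2*d*m) = d*(2*m) from h2dm, sum_range_mul' F2 d (2*m), Finset.sum_div]
      apply Finset.sum_congr rfl
      intro j hj
      rw [Finset.mem_range] at hj
      have hsplit2 := sum_range_mul' (fun p => F2 (2*m*j + p)) m 2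
      rw [show m*2 = 2*m from by ring] at hsplit2
      rw [hsplit2]
      rw [sqNet]
      rw [Finset.sum_div]
      apply Finset.sum_congr rfl
      intro k hk
      rw [Finset.mem_range] at hk
      rw [Finset.sum_range_succ, Finset.sum_range_one]
      -- two terms : b = 0 and b = 1
      have hp0 : 2*k + 0 < 2*m := by omega
      have hp1 : 2*k + 1 < 2*m := by omega
      have hqlt : ∀ p, p < 2*m → 2*m*j + p < 2*d*m := by
        intro p hp
        have h1 : 2*m*j + p < 2*m*(j+1) := by
          have := Nat.add_lt_add_left hp (2*m*j)
          calc 2*m*j + p < 2*m*j + 2*m := this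
            _ = 2*m*(j+1) := by ring
        have h2 : 2*m*(j+1) ≤ 2*m*d := Nat.mul_le_mul_left (2*m) (by omega)
        calc 2*m*j + p < 2*m*(j+1) := h1
          _ ≤ 2*m*d := h2
          _ = 2*d*m := by ring
      have hdivp : ∀ p, p < 2*m → (2*m*j + p)/(2*m) = j := by
        intro p hp
        rw [show 2*m*j + p = (2*m)*j + p from rfl, Nat.mul_add_div hM0,
          Nat.div_eq_of_lt hp, Nat.add_zero]
      have hmodp : ∀ p, p < 2*m → (2*m*j + p)%(2*m) = p := by
        intro p hp
        rw [show 2*m*j + p = (2*m)*j + p from rfl, Nat.mul_add_mod, Nat.mod_eq_of_lt hp]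
      have hmod20 : (2*m*j + (2*k + 0)) % 2 = 0 := by
        rw [show 2*m*j + (2*k+0) = 2*(m*j+k) from by ring, Nat.mul_mod_right]
      have hmod21 : (2*m*j + (2*k + 1)) % 2 = 1 := by
        rw [show 2*m*j + (2*k+1) = 2*(m*j+k) + 1 from by ring, Nat.mul_add_mod]
      have hk20 : (2*k + 0)/2 = k := by omega
      have hk21 : (2*k + 1)/2 = k := by omega
      rw [hF2, hP1]
      simp only [if_pos (hqlt _ hp0), if_pos (hqlt _ hp1), hdivp _ hp0, hdivp _ hp1,
        hmodp _ hp0, hmodp _ hp1, hmod20, hmod21, hk20, hk21]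
      split_ifs <;> first | contradiction | ring
    -- convert range-d sum to Fin-d sum
    have hTsum : ∑ j ∈ range d, sqNet m (X j + X' j) = ∑ j : Fin d, sqNet m (xv j + xv' j) := by
      rw [← Fin.sum_univ_eq_sum_range (fun q => sqNet m (X q + X' q)) d]
      apply Finset.sum_congr rfl
      intro j _
      simp [hX, hX']
    -- Step C : per-output-neuron terms
    set H : ℕ → ℝ := fun q => if q < n then
        wc q * max 0 (innerNet d m xv xv' - fknot n q) else 0 with hH
    have hterm : ∀ i : Fin r,
        (if (i:ℕ) < n then wc (i:ℕ) else 0) *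
          max 0 ((∑ i' : Fin r, (if (i:ℕ) < n ∧ (i':ℕ) < 2*d*m
              then (if (((i':ℕ)%(2*m))/2) = 0 then 1/(m:ℝ) else 2/m) else 0) * max 0 (P1 (i':ℕ)))
            + (if (i:ℕ) < n then -(2*((i:ℕ):ℝ)/n) else 0)) = H (i:ℕ) := by
      intro i
      by_cases hi : (i:ℕ) < n
      · have hrow : (∑ i' : Fin r, (if (i:ℕ) < n ∧ (i':ℕ) < 2*d*m
            then (if (((i':ℕ)%(2*m))/2) = 0 then 1/(m:ℝ) else 2/m) else 0) * max 0 (P1 (i':ℕ)))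
            = ∑ q ∈ range (2*d*m), F2 q := by
          have e1 : ∀ i' : Fin r, (if (i:ℕ) < n ∧ (i':ℕ) < 2*d*m
              then (if (((i':ℕ)%(2*m))/2) = 0 then 1/(m:ℝ) else 2/m) else 0) * max 0 (P1 (i':ℕ))
              = F2 (i':ℕ) := by
            intro i'
            rw [hF2]
            by_cases hq : (i':ℕ) < 2*d*m <;> simp [hi, hq]
          rw [Finset.sum_congr rfl fun i' _ => e1 i',
            Fin.sum_univ_eq_sum_range F2 r]
          symm
          apply Finset.sum_subset (Finset.range_subset_range.mpr (le_max_left (2*d*m) n))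
          intro q _ hq
          rw [Finset.mem_range] at hq
          rw [hF2]
          simp only [if_neg (by omega : ¬ q < 2*d*m)]
        rw [hrow, hB2core, hTsum, if_pos hi, if_pos hi, hH]
        simp only [if_pos hi]
        congr 2
        rw [innerNet, fknot]
        ring
      · rw [if_neg hi, if_neg hi, hH]
        simp only [if_neg hi]
        simp
    symm
    have hstep : ∀ i : Fin r,
        (if (i:ℕ) < n then wc (i:ℕ) else 0) *
          max 0 ((∑ i' : Fin r, (if (i:ℕ) < n ∧ (i':ℕ) < 2*d*m
              then (if (((i':ℕ)%(2*m))/2) = 0 then 1/(m:ℝ) else 2/m) else 0) *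
              max 0 ((∑ l : Fin d, (if (i':ℕ) < 2*d*m ∧ (l:ℕ) = (i':ℕ)/(2*m)
                  then (if (i':ℕ) % 2 = 0 then (1:ℝ) else -1) else 0) * xv l)
                + (∑ l : Fin d, (if (i':ℕ) < 2*d*m ∧ (l:ℕ) = (i':ℕ)/(2*m)
                  then (if (i':ℕ) % 2 = 0 then (1:ℝ) else -1) else 0) * xv' l)
                + (if (i':ℕ) < 2*d*m then -(2*(((((i':ℕ)%(2*m))/2 : ℕ)):ℝ)/m) else 0)))
            + (if (i:ℕ) < n then -(2*((i:ℕ):ℝ)/n) else 0)) = H (i:ℕ) := by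
      intro i
      rw [← hterm i]
      congr 2
      · congr 1
        apply Finset.sum_congr rfl
        intro i' _
        rw [hpre i']
    rw [Finset.sum_congr rfl fun i _ => hstep i, Fin.sum_univ_eq_sum_range H r,
      ← Finset.sum_subset (Finset.range_subset_range.mpr (le_max_right (2*d*m) n))
        (fun q _ hq => by
          rw [Finset.mem_range] at hq
          rw [hH]
          simp only [if_neg (by omega : ¬ q < n)])]
    rw [add_comm]
    congr 1
    apply Finset.sum_congr rfl
    intro q hq
    rw [Finset.mem_range] at hq
    rw [hH]
    simp only [if_pos hq]


set_option maxHeartbeats 1600000 in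
/-- Any inner product function `F(x,x') = f(⟨x,x'⟩)` with `f : [-1,1] → [-1,1]`
`L`-Lipschitz can be uniformly `ε`-approximated by a depth-3 ReLU network of width at most
`16 d² L / ε` with weights bounded by `max 4 (2L)`. -/
theorem depth_three_approximates_inner_product
    (d : ℕ) (hd : 2 ≤ d) (L ε : ℝ) (hL : 0 < L) (hε : 0 < ε) (f : ℝ → ℝ)
    (hmap : ∀ x ∈ Set.Icc (-1 : ℝ) 1, f x ∈ Set.Icc (-1 : ℝ) 1)
    (hlip : ∀ x ∈ Set.Icc (-1 : ℝ) 1, ∀ y ∈ Set.Icc (-1 : ℝ) 1, |f x - f y| ≤ L * |x - y|) :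
    ∃ (r : ℕ) (G : Sph d → Sph d → ℝ), (r : ℝ) ≤ 16 * d ^ 2 * L / ε ∧
      IsDepth3Net d r (max 4 (2 * L)) (fun x => max 0 x) G ∧
      ∀ x x' : Sph d,
        |f ⟪(x : EuclideanSpace ℝ (Fin d)), (x' : EuclideanSpace ℝ (Fin d))⟫ - G x x'| ≤ ε := by
  have hd0 : (0:ℝ) < d := by exact_mod_cast (by omega : 0 < d)
  have hd2 : (2:ℝ) ≤ d := by exact_mod_cast hd
  have hB4 : (4:ℝ) ≤ max 4 (2*L) := le_max_left _ _
  have hmem1 : ((-1:ℝ)) ∈ Set.Icc (-1:ℝ) 1 := by constructor <;> norm_num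
  have hmem0 : ((0:ℝ)) ∈ Set.Icc (-1:ℝ) 1 := by constructor <;> norm_num
  have hinner_mem : ∀ x x' : Sph d,
      (⟪(x : EuclideanSpace ℝ (Fin d)), (x' : EuclideanSpace ℝ (Fin d))⟫ : ℝ)
        ∈ Set.Icc (-1:ℝ) 1 := by
    intro x x'
    have hx1 : ‖(x : EuclideanSpace ℝ (Fin d))‖ = 1 := mem_sphere_zero_iff_norm.mp x.2
    have hx1' : ‖(x' : EuclideanSpace ℝ (Fin d))‖ = 1 := mem_sphere_zero_iff_norm.mp x'.2
    have h := abs_real_inner_le_norm (x : EuclideanSpace ℝ (Fin d)) (x' : EuclideanSpace ℝ (Fin d))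
    rw [hx1, hx1', mul_one, abs_le] at h
    exact ⟨h.1, h.2⟩
  rcases le_or_gt ε L with hle | hgt
  · -- main case : ε ≤ L
    set n := ⌈2*L/ε⌉₊ with hn_def
    set m := ⌈Real.sqrt (d*L/ε)⌉₊ with hm_def
    have hXpos : (0:ℝ) < d*L/ε := div_pos (mul_pos hd0 hL) hε
    have hn1 : 1 ≤ n := by
      have : (0:ℝ) < 2*L/ε := by positivity
      have := Nat.ceil_pos.mpr this
      omega
    have hm1 : 1 ≤ m := by
      have := Nat.ceil_pos.mpr (Real.sqrt_pos.mpr hXpos)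
      omega
    have hn0 : (0:ℝ) < n := by exact_mod_cast hn1
    have hm0' : (0:ℝ) < m := by exact_mod_cast hm1
    have hwb : ∀ i, i < n → |fw f n i| ≤ max 4 (2*L) := fun i hi =>
      le_trans (fw_abs L hL f n hn1 hlip i hi) (le_max_right _ _)
    have hb3 : |f (-1)| ≤ max 4 (2*L) := by
      have h0 := hmap (-1) hmem1
      have h1 : |f (-1)| ≤ 1 := abs_le.mpr ⟨h0.1, h0.2⟩
      linarith
    have hnet := depth3_realize d m n (by omega) hm1 hn1 (max 4 (2*L)) hB4 (fw f n) hwb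
      (f (-1)) hb3
    refine ⟨max (2*d*m) n, _, ?_, hnet, ?_⟩
    · -- width bound
      rw [Nat.cast_max]
      have hLε : (1:ℝ) ≤ L/ε := by rw [le_div_iff₀ hε]; linarith
      have hc0 : (0:ℝ) ≤ L/ε := by positivity
      have hgoal_eq : 16*(d:ℝ)^2*L/ε = 16*(d:ℝ)^2*(L/ε) := by ring
      apply max_le
      · -- first-layer width
        set s := Real.sqrt (d*L/ε) with hs_def
        have hX1 : (1:ℝ) ≤ d*L/ε := by
          rw [show (d:ℝ)*L/ε = d*(L/ε) from by ring]
          nlinarith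
        have hs1 : 1 ≤ s := by
          rw [hs_def, show (1:ℝ) = Real.sqrt 1 from Real.sqrt_one.symm]
          exact Real.sqrt_le_sqrt hX1
        have hs2 : s^2 = d*L/ε := Real.sq_sqrt hXpos.le
        have hm_ub : (m:ℝ) ≤ s + 1 := le_of_lt (Nat.ceil_lt_add_one (Real.sqrt_nonneg _))
        push_cast
        rw [hgoal_eq]
        have key1 : 2*(d:ℝ)*m ≤ 2*d*(2*s) := by nlinarith
        have key2 : (0:ℝ) ≤ d * (s * (4*s - 1)) :=
          mul_nonneg hd0.le (mul_nonneg (by linarith) (by linarith))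
        have key3 : 16*(d:ℝ)^2*(L/ε) = 16*d*(s^2) := by rw [hs2]; ring
        nlinarith [key1, key2, key3]
      · -- second-layer width
        have hceil_n : (n:ℝ) ≤ 2*L/ε + 1 := le_of_lt (Nat.ceil_lt_add_one (by positivity))
        have hd4 : (4:ℝ) ≤ (d:ℝ)^2 := by nlinarith
        have h64 : 64*(L/ε) ≤ 16*(d:ℝ)^2*(L/ε) := by
          nlinarith [mul_le_mul_of_nonneg_right hd4 hc0]
        have hn3 : (n:ℝ) ≤ 3*(L/ε) := by
          have : 2*L/ε = 2*(L/ε) := by ring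
          linarith
        rw [hgoal_eq]
        linarith
    · -- approximation bound
      intro x x'
      have hx1 : ‖(x : EuclideanSpace ℝ (Fin d))‖ = 1 := mem_sphere_zero_iff_norm.mp x.2
      have hx1' : ‖(x' : EuclideanSpace ℝ (Fin d))‖ = 1 := mem_sphere_zero_iff_norm.mp x'.2
      have ht := hinner_mem x x'
      have happ := innerNet_approx d m hm1 (x : EuclideanSpace ℝ (Fin d))
        (x' : EuclideanSpace ℝ (Fin d)) hx1 hx1'
      have hli := lip_interp L hL f hlip n hn1
        (innerNet d m (x : EuclideanSpace ℝ (Fin d)) (x' : EuclideanSpace ℝ (Fin d)))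
        (⟪(x : EuclideanSpace ℝ (Fin d)), (x' : EuclideanSpace ℝ (Fin d))⟫ : ℝ) ht
      rw [abs_sub_comm]
      refine le_trans hli ?_
      have h1 : L/n ≤ ε/2 := by
        have hceil : 2*L/ε ≤ (n:ℝ) := Nat.le_ceil _
        rw [div_le_iff₀ hn0]
        have h2 := mul_le_mul_of_nonneg_left hceil (le_of_lt (half_pos hε))
        have heq : ε/2 * (2*L/ε) = L := by field_simp
        linarith
      have h2 : L * |innerNet d m (x : EuclideanSpace ℝ (Fin d)) (x' : EuclideanSpace ℝ (Fin d))
          - (⟪(x : EuclideanSpace ℝ (Fin d)), (x' : EuclideanSpace ℝ (Fin d))⟫ : ℝ)| ≤ ε/2 := by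
        have hs2 : d*L/ε ≤ (m:ℝ)^2 := by
          have hle_s : Real.sqrt (d*L/ε) ≤ (m:ℝ) := Nat.le_ceil _
          calc d*L/ε = (Real.sqrt (d*L/ε))^2 := (Real.sq_sqrt hXpos.le).symm
            _ ≤ (m:ℝ)^2 := by nlinarith [Real.sqrt_nonneg ((d:ℝ)*L/ε)]
        calc L * |innerNet d m (x : EuclideanSpace ℝ (Fin d)) (x' : EuclideanSpace ℝ (Fin d))
              - (⟪(x : EuclideanSpace ℝ (Fin d)), (x' : EuclideanSpace ℝ (Fin d))⟫ : ℝ)|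
            ≤ L * ((d:ℝ)/(2*m^2)) := mul_le_mul_of_nonneg_left happ hL.le
          _ ≤ ε/2 := by
              rw [show L*((d:ℝ)/(2*(m:ℝ)^2)) = L*d/(2*(m:ℝ)^2) from by ring,
                div_le_iff₀ (by positivity)]
              have hde := (div_le_iff₀ hε).mp hs2
              nlinarith
      linarith
  · -- easy case : ε > L, constant network of width 0
    refine ⟨0, fun _ _ => f 0, ?_, ?_, ?_⟩
    · rw [Nat.cast_zero]
      apply div_nonneg _ hε.le
      have : (0:ℝ) ≤ (d:ℝ)^2 := sq_nonneg _
      nlinarith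
    · refine ⟨fun i _ => 0, fun i _ => 0, fun i _ => 0, fun i => 0, fun i => 0, fun i => 0,
        f 0, ?_, ?_, ?_, ?_, ?_, ?_, ?_, ?_⟩
      · intro i; exact i.elim0
      · intro i; exact i.elim0
      · intro i; exact i.elim0
      · intro i; exact i.elim0
      · intro i; exact i.elim0
      · intro i; exact i.elim0
      · have h0 := hmap 0 hmem0
        have : |f 0| ≤ 1 := abs_le.mpr ⟨h0.1, h0.2⟩
        linarith
      · intro x x'; simp
    · intro x x'
      have ht := hinner_mem x x'
      have h := hlip _ ht _ hmem0
      have habs : |(⟪(x : EuclideanSpace ℝ (Fin d)), (x' : EuclideanSpace ℝ (Fin d))⟫ : ℝ) - 0|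
          ≤ 1 := by rw [sub_zero, abs_le]; exact ⟨ht.1, ht.2⟩
      calc |f ⟪(x : EuclideanSpace ℝ (Fin d)), (x' : EuclideanSpace ℝ (Fin d))⟫ - f 0|
          ≤ L * |(⟪(x : EuclideanSpace ℝ (Fin d)), (x' : EuclideanSpace ℝ (Fin d))⟫ : ℝ) - 0| := h
        _ ≤ L * 1 := by nlinarith [abs_nonneg ((⟪(x : EuclideanSpace ℝ (Fin d)), (x' : EuclideanSpace ℝ (Fin d))⟫ : ℝ) - 0)]
        _ ≤ ε := by linarith
end

section
/- There exists a universal constant d₀ > 0 such that for all integers d ≥ d₀ and every nonnegative measurable function f : [−1,1] → ℝ: ∫_{−1}^{1} f(x) dμ_d(x) ≥ (1/(2 e π)) · ∫_{−1}^{1} f(t/√d) dt, where the right-hand integral is with respect to Lebesgue measure. -/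
set_option maxHeartbeats 1000000

open MeasureTheory Real ENNReal

lemma my_cov (s : ℝ) (hs : 0 < s) (g : ℝ → ℝ≥0∞) (hg : Measurable g) :
    ∫⁻ t in Set.Icc (-1 : ℝ) 1, g (t / s) =
      ENNReal.ofReal s * ∫⁻ x in Set.Icc (-(1/s)) (1/s), g x := by
  have hsne : s ≠ 0 := hs.ne'
  set h : ℝ → ℝ≥0∞ := (Set.Icc (-(1/s)) (1/s)).indicator g with hh
  have hhm : Measurable h := hg.indicator measurableSet_Icc
  have key : ∀ t : ℝ, (Set.Icc (-1:ℝ) 1).indicator (fun t => g (t / s)) t = h (s⁻¹ * t) := by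
    intro t
    have hmem : t ∈ Set.Icc (-1:ℝ) 1 ↔ s⁻¹ * t ∈ Set.Icc (-(1/s)) (1/s) := by
      simp only [Set.mem_Icc]
      rw [show -(1/s) = (-1)/s by ring, inv_mul_eq_div]
      exact and_congr (div_le_div_iff_of_pos_right hs).symm (div_le_div_iff_of_pos_right hs).symm
    by_cases ht : t ∈ Set.Icc (-1:ℝ) 1
    · rw [Set.indicator_of_mem ht, hh, Set.indicator_of_mem (hmem.mp ht)]
      rw [inv_mul_eq_div]
    · rw [Set.indicator_of_notMem ht, hh, Set.indicator_of_notMem (fun c => ht (hmem.mpr c))]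
  calc ∫⁻ t in Set.Icc (-1:ℝ) 1, g (t / s)
      = ∫⁻ t, (Set.Icc (-1:ℝ) 1).indicator (fun t => g (t / s)) t := by
        rw [lintegral_indicator measurableSet_Icc]
    _ = ∫⁻ t, h (s⁻¹ * t) := by simp_rw [key]
    _ = ∫⁻ y, h y ∂(Measure.map (s⁻¹ * ·) volume) := (lintegral_map hhm (measurable_const_mul _)).symm
    _ = ENNReal.ofReal s * ∫⁻ y, h y := by
        rw [Real.map_volume_mul_left (inv_ne_zero hsne), inv_inv, abs_of_pos hs,
          lintegral_smul_measure, smul_eq_mul]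
    _ = ENNReal.ofReal s * ∫⁻ x in Set.Icc (-(1/s)) (1/s), g x := by
        rw [hh, lintegral_indicator measurableSet_Icc]

lemma my_gamma_ratio {a : ℝ} (ha : 3 ≤ a) :
    Real.sqrt ((a-2)/2) * Real.Gamma ((a-1)/2) ≤ Real.Gamma (a/2) := by
  set u : ℝ := a/2 - 1 with hu_def
  have hu : 0 < u := by simp only [hu_def]; linarith
  have hGu : 0 < Real.Gamma u := Real.Gamma_pos_of_pos hu
  have hGa : 0 < Real.Gamma (a/2) := Real.Gamma_pos_of_pos (by linarith)
  have hGm : 0 < Real.Gamma ((a-1)/2) := Real.Gamma_pos_of_pos (by linarith)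
  have hc := Real.convexOn_log_Gamma
  have h := hc.2 (Set.mem_Ioi.mpr hu) (Set.mem_Ioi.mpr (by linarith : (0:ℝ) < a/2))
    (by norm_num : (0:ℝ) ≤ 1/2) (by norm_num : (0:ℝ) ≤ 1/2) (by norm_num)
  simp only [Function.comp_apply, smul_eq_mul] at h
  have hmid : (1/2 : ℝ) * u + (1/2 : ℝ) * (a/2) = (a-1)/2 := by simp only [hu_def]; ring
  rw [hmid] at h
  have h2 : Real.log (Real.Gamma ((a-1)/2)) ≤ Real.log (Real.Gamma u * Real.Gamma (a/2)) / 2 := by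
    rw [Real.log_mul hGu.ne' hGa.ne']; linarith
  have h3 : Real.Gamma ((a-1)/2) ≤ Real.sqrt (Real.Gamma u * Real.Gamma (a/2)) := by
    have := Real.exp_le_exp.mpr h2
    rwa [Real.exp_log hGm, Real.exp_half, Real.exp_log (by positivity)] at this
  have hadd : Real.Gamma (a/2) = u * Real.Gamma u := by
    have := Real.Gamma_add_one hu.ne'
    rw [show u + 1 = a/2 by simp only [hu_def]; ring] at this
    exact this
  have hGueq : Real.Gamma u = Real.Gamma (a/2) / u := by
    rw [hadd]; field_simp
  have h4 : Real.sqrt (Real.Gamma u * Real.Gamma (a/2)) = Real.Gamma (a/2) / Real.sqrt u := by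
    rw [hGueq, div_mul_eq_mul_div, ← sq, Real.sqrt_div (by positivity), Real.sqrt_sq hGa.le]
  have h5 : Real.Gamma ((a-1)/2) ≤ Real.Gamma (a/2) / Real.sqrt u := h4 ▸ h3
  have hsu : 0 < Real.sqrt u := Real.sqrt_pos.mpr hu
  have : Real.sqrt u * Real.Gamma ((a-1)/2) ≤ Real.Gamma (a/2) := by
    calc Real.sqrt u * Real.Gamma ((a-1)/2) ≤ Real.sqrt u * (Real.Gamma (a/2) / Real.sqrt u) :=
          by exact mul_le_mul_of_nonneg_left h5 hsu.le
      _ = Real.Gamma (a/2) := by field_simp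
  rwa [show (a-2)/2 = u by simp only [hu_def]; ring]

lemma my_dens_lb (d : ℕ) (hd : 3 ≤ d) (x : ℝ)
    (hx : x ∈ Set.Icc (-(1/Real.sqrt d)) (1/Real.sqrt d)) :
    Real.sqrt d / (2 * Real.exp 1 * π) ≤
      Real.Gamma ((d:ℝ)/2) / (Real.sqrt π * Real.Gamma (((d:ℝ)-1)/2)) *
        (1 - x^2) ^ (((d:ℝ)-3)/2) := by
  set a : ℝ := (d : ℝ) with ha_def
  have ha : 3 ≤ a := by simp only [ha_def]; exact_mod_cast hd
  have ha0 : 0 < a := by linarith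
  have hE : (0:ℝ) < Real.exp 1 := Real.exp_pos 1
  have he2 : (2:ℝ) ≤ Real.exp 1 := by
    have := Real.add_one_le_exp 1; linarith
  have hπ3 : (3:ℝ) ≤ π := Real.pi_gt_three.le
  -- x² ≤ 1/a
  have hsa : 0 < Real.sqrt a := Real.sqrt_pos.mpr ha0
  have hx2 : x^2 ≤ 1/a := by
    obtain ⟨h1, h2⟩ := hx
    have habs : |x| ≤ 1/Real.sqrt a := abs_le.mpr ⟨h1, h2⟩
    have := sq_le_sq' h1 h2
    calc x^2 ≤ (1/Real.sqrt a)^2 := this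
      _ = 1/a := by rw [div_pow, one_pow, Real.sq_sqrt ha0.le]
  have hbase : 0 < 1 - 1/a := by
    rw [sub_pos, div_lt_one ha0]; linarith
  have hbx : 1 - 1/a ≤ 1 - x^2 := by linarith
  have hexp0 : 0 ≤ (a-3)/2 := by linarith
  -- rpow chain
  have hB1 : (1 - 1/a) ^ ((a-3)/2) ≤ (1 - x^2) ^ ((a-3)/2) :=
    Real.rpow_le_rpow hbase.le hbx hexp0
  have hB2 : (1 - 1/a) ^ ((a-1)/2) ≤ (1 - 1/a) ^ ((a-3)/2) :=
    Real.rpow_le_rpow_of_exponent_ge hbase (by linarith [one_div_pos.mpr ha0] : 1 - 1/a ≤ 1)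
      (by linarith)
  have ha1 : a - 1 ≠ 0 := by linarith
  have hinv : Real.exp (-(1/(a-1))) ≤ 1 - 1/a := by
    rw [Real.exp_neg]
    rw [inv_le_comm₀ (Real.exp_pos _) hbase]
    have heq : (1 - 1/a)⁻¹ = 1 + 1/(a-1) := by
      rw [show 1 - 1/a = (a-1)/a by field_simp]
      rw [inv_div]
      field_simp
      ring
    rw [heq]
    have := Real.add_one_le_exp (1/(a-1)); linarith
  have hB3 : Real.exp (-(1/2)) ≤ (1 - 1/a) ^ ((a-1)/2) := by
    have h := Real.rpow_le_rpow (Real.exp_pos _).le hinv (by linarith : (0:ℝ) ≤ (a-1)/2)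
    rw [← Real.exp_mul] at h
    rw [show -(1/(a-1)) * ((a-1)/2) = -(1/2) by field_simp] at h
    exact h
  have hB : Real.exp (-(1/2)) ≤ (1 - x^2) ^ (((d:ℝ)-3)/2) := by
    exact hB3.trans (hB2.trans hB1)
  -- gamma ratio bound
  have hGm : 0 < Real.Gamma ((a-1)/2) := Real.Gamma_pos_of_pos (by linarith)
  have hsπ : 0 < Real.sqrt π := Real.sqrt_pos.mpr Real.pi_pos
  have hA : Real.sqrt ((a-2)/2) / Real.sqrt π ≤
      Real.Gamma (a/2) / (Real.sqrt π * Real.Gamma ((a-1)/2)) := by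
    rw [div_le_div_iff₀ hsπ (by positivity)]
    calc Real.sqrt ((a-2)/2) * (Real.sqrt π * Real.Gamma ((a-1)/2))
        = (Real.sqrt ((a-2)/2) * Real.Gamma ((a-1)/2)) * Real.sqrt π := by ring
      _ ≤ Real.Gamma (a/2) * Real.sqrt π :=
          mul_le_mul_of_nonneg_right (my_gamma_ratio ha) hsπ.le
  -- numeric bound
  have hnum : Real.sqrt a / (2 * Real.exp 1 * π) ≤
      Real.sqrt ((a-2)/2) / Real.sqrt π * Real.exp (-(1/2)) := by
    have hLnn : 0 ≤ Real.sqrt a / (2 * Real.exp 1 * π) := by positivity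
    have hRnn : 0 ≤ Real.sqrt ((a-2)/2) / Real.sqrt π * Real.exp (-(1/2)) := by positivity
    have hsq : (Real.sqrt a / (2 * Real.exp 1 * π))^2 ≤
        (Real.sqrt ((a-2)/2) / Real.sqrt π * Real.exp (-(1/2)))^2 := by
      have e1 : (Real.sqrt a)^2 = a := Real.sq_sqrt ha0.le
      have e2 : (Real.sqrt ((a-2)/2))^2 = (a-2)/2 := Real.sq_sqrt (by linarith)
      have e3 : (Real.sqrt π)^2 = π := Real.sq_sqrt Real.pi_pos.le
      have e4 : (Real.exp (-(1/2)))^2 = (Real.exp 1)⁻¹ := by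
        rw [sq, ← Real.exp_add, show (-(1/2) : ℝ) + -(1/2) = -1 by ring, Real.exp_neg]
      rw [mul_pow, div_pow, div_pow, e1, e2, e3, e4]
      have h12 : (12:ℝ) ≤ 2 * Real.exp 1 * π := by nlinarith
      have hkey : a ≤ (a-2) * (2 * Real.exp 1 * π) := by
        nlinarith [mul_le_mul_of_nonneg_left h12 (by linarith : (0:ℝ) ≤ a - 2)]
      rw [show (a-2)/2/π * (Real.exp 1)⁻¹ = (a-2)/(2 * π * Real.exp 1) by
        field_simp]
      rw [div_le_div_iff₀ (by positivity) (by positivity)]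
      nlinarith [mul_le_mul_of_nonneg_right hkey (by positivity : (0:ℝ) ≤ 2 * π * Real.exp 1)]
    calc Real.sqrt a / (2 * Real.exp 1 * π)
        = Real.sqrt ((Real.sqrt a / (2 * Real.exp 1 * π))^2) := (Real.sqrt_sq hLnn).symm
      _ ≤ Real.sqrt ((Real.sqrt ((a-2)/2) / Real.sqrt π * Real.exp (-(1/2)))^2) :=
          Real.sqrt_le_sqrt hsq
      _ = _ := Real.sqrt_sq hRnn
  calc Real.sqrt a / (2 * Real.exp 1 * π)
      ≤ Real.sqrt ((a-2)/2) / Real.sqrt π * Real.exp (-(1/2)) := hnum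
    _ ≤ Real.Gamma (a/2) / (Real.sqrt π * Real.Gamma ((a-1)/2)) * ((1 - x^2) ^ (((d:ℝ)-3)/2)) := by
        apply mul_le_mul hA hB (Real.exp_pos _).le
        positivity

/-- For large enough `d` and every nonnegative measurable `f`,
`∫ f dμ_d ≥ (1/(2eπ)) ∫_{-1}^{1} f(t/√d) dt`. -/
theorem muD_integral_lower_bound :
    ∃ d₀ : ℕ, 0 < d₀ ∧ ∀ d : ℕ, d₀ ≤ d → ∀ f : ℝ → ℝ, Measurable f → (∀ x, 0 ≤ f x) →
      (∫⁻ x, ENNReal.ofReal (f x) ∂ muD d) ≥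
        ENNReal.ofReal (1 / (2 * Real.exp 1 * π)) *
          ∫⁻ t in Set.Icc (-1 : ℝ) 1, ENNReal.ofReal (f (t / Real.sqrt d)) := by
  refine ⟨3, by norm_num, fun d hd f hf hf0 => ?_⟩
  have hd1 : (1:ℝ) ≤ (d:ℝ) := by exact_mod_cast Nat.one_le_of_lt (by omega : 1 < d)
  set s : ℝ := Real.sqrt d with hs_def
  have hs : 0 < s := Real.sqrt_pos.mpr (by linarith)
  have hs1 : 1 ≤ s := by
    rw [hs_def, show (1:ℝ) = Real.sqrt 1 by simp]
    exact Real.sqrt_le_sqrt hd1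
  set g : ℝ → ℝ≥0∞ := fun x => ENNReal.ofReal (f x) with hg_def
  have hg : Measurable g := hf.ennreal_ofReal
  set ρ : ℝ → ℝ≥0∞ := fun x =>
    ENNReal.ofReal (Real.Gamma ((d : ℝ) / 2) / (Real.sqrt π * Real.Gamma (((d : ℝ) - 1) / 2)) *
      (1 - x ^ 2) ^ (((d : ℝ) - 3) / 2)) with hρ_def
  have hρ : Measurable ρ := by
    apply Measurable.ennreal_ofReal
    fun_prop
  have hsub : Set.Icc (-(1/s)) (1/s) ⊆ Set.Icc (-1:ℝ) 1 := by
    apply Set.Icc_subset_Icc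
    · rw [neg_le_neg_iff]; exact (div_le_one hs).mpr hs1
    · exact (div_le_one hs).mpr hs1
  rw [ge_iff_le]
  calc ENNReal.ofReal (1 / (2 * Real.exp 1 * π)) *
        ∫⁻ t in Set.Icc (-1 : ℝ) 1, ENNReal.ofReal (f (t / Real.sqrt d))
      = ENNReal.ofReal (1 / (2 * Real.exp 1 * π)) *
          (ENNReal.ofReal s * ∫⁻ x in Set.Icc (-(1/s)) (1/s), g x) := by
        rw [← my_cov s hs g hg]
    _ = ∫⁻ x in Set.Icc (-(1/s)) (1/s), ENNReal.ofReal (s / (2 * Real.exp 1 * π)) * g x := by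
        rw [lintegral_const_mul' _ _ ENNReal.ofReal_ne_top, ← mul_assoc,
          ← ENNReal.ofReal_mul (by positivity),
          show 1 / (2 * Real.exp 1 * π) * s = s / (2 * Real.exp 1 * π) by ring]
    _ ≤ ∫⁻ x in Set.Icc (-(1/s)) (1/s), ρ x * g x := by
        refine setLIntegral_mono' measurableSet_Icc fun x hx => ?_
        exact mul_le_mul' (ENNReal.ofReal_le_ofReal
          (my_dens_lb d hd x (by rwa [hs_def] at hx))) (le_refl (g x))
    _ ≤ ∫⁻ x in Set.Icc (-1:ℝ) 1, ρ x * g x := lintegral_mono_set hsub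
    _ = ∫⁻ x, ENNReal.ofReal (f x) ∂ muD d := by
        rw [muD, lintegral_withDensity_eq_lintegral_mul _ hρ hg]
        rfl
end

section
/- Let m be a positive integer, let k be a nonnegative integer with k ≤ m, and let q : ℝ → ℝ be a real polynomial of degree at most k. Then ∫_{−1}^{1} ( sin(π m x) − q(x) )² dx ≥ (m − k)/(2m), where the integral is with respect to Lebesgue measure. -/
open MeasureTheory Real intervalIntegral

-- sine is zero at integer multiples of π/m-grid
lemma aux_sin_zero (m : ℕ) (hm : 0 < m) (n : ℤ) :
    Real.sin (π * m * ((n : ℝ) / m)) = 0 := by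
  have hm' : (m : ℝ) ≠ 0 := by exact_mod_cast hm.ne'
  have : π * m * ((n : ℝ) / m) = (n : ℝ) * π := by field_simp
  rw [this]
  exact_mod_cast Real.sin_int_mul_pi n

-- sign of sin on [n/m, (n+1)/m]
lemma aux_sin_sign (m : ℕ) (hm : 0 < m) (n : ℤ) {x : ℝ}
    (hx : x ∈ Set.Icc ((n : ℝ) / m) (((n : ℝ) + 1) / m)) :
    0 ≤ (-1 : ℝ) ^ n * Real.sin (π * m * x) := by
  have hm' : (0:ℝ) < m := by exact_mod_cast hm
  have h1 : (n : ℝ) * π ≤ π * m * x := by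
    have := hx.1
    have : (n : ℝ) ≤ m * x := by
      rw [div_le_iff₀ hm'] at this; linarith [this]
    nlinarith [Real.pi_pos]
  have h2 : π * m * x ≤ ((n : ℝ) + 1) * π := by
    have := hx.2
    have : m * x ≤ (n : ℝ) + 1 := by
      rw [le_div_iff₀ hm'] at this; linarith [this]
    nlinarith [Real.pi_pos]
  have key : Real.sin (π * m * x) = (-1 : ℝ) ^ n * Real.sin (π * m * x - n * π) := by
    have := Real.sin_add_int_mul_pi (π * m * x - n * π) n
    simpa using this
  rw [key]
  have : ((-1 : ℝ) ^ n) * ((-1 : ℝ) ^ n) = 1 := by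
    rw [← zpow_add₀ (by norm_num : (-1:ℝ) ≠ 0)]
    exact Even.neg_one_zpow ⟨n, rfl⟩
  rw [← mul_assoc, this, one_mul]
  exact Real.sin_nonneg_of_nonneg_of_le_pi (by linarith) (by linarith)

-- integral of sin^2 over a half period
lemma aux_halfint (m : ℕ) (hm : 0 < m) (n : ℤ) :
    ∫ x in ((n : ℝ) / m)..(((n : ℝ) + 1) / m), Real.sin (π * m * x) ^ 2 = 1 / (2 * m) := by
  have hm' : (m : ℝ) ≠ 0 := by exact_mod_cast hm.ne'
  have hc : (π * m : ℝ) ≠ 0 := by positivity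
  have := intervalIntegral.integral_comp_mul_left (fun y => Real.sin y ^ 2)
      (a := (n : ℝ) / m) (b := ((n : ℝ) + 1) / m) hc
  rw [this]
  have e1 : π * (m : ℝ) * ((n : ℝ) / m) = (n : ℝ) * π := by field_simp
  have e2 : π * (m : ℝ) * (((n : ℝ) + 1) / m) = ((n : ℝ) + 1) * π := by field_simp
  rw [e1, e2, integral_sin_sq]
  have s1 : Real.sin ((n : ℝ) * π) = 0 := by exact_mod_cast Real.sin_int_mul_pi n
  have s2 : Real.sin (((n : ℝ) + 1) * π) = 0 := by
    have := Real.sin_int_mul_pi (n + 1); push_cast at this ⊢; linarith [this]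
  rw [s1, s2]
  rw [smul_eq_mul]
  field_simp
  ring

lemma aux_cont (m : ℕ) (q : Polynomial ℝ) :
    Continuous (fun x : ℝ => (Real.sin (π * m * x) - q.eval x) ^ 2) := by
  fun_prop

-- lower bound over a half period where sin * q ≤ 0 in the interior
lemma aux_half_bound (m : ℕ) (hm : 0 < m) (q : Polynomial ℝ) (h : ℤ)
    (hs : ∀ x ∈ Set.Ioo ((h : ℝ) / m) (((h : ℝ) + 1) / m),
      Real.sin (π * m * x) * q.eval x ≤ 0) :
    1 / (2 * m) ≤ ∫ x in ((h : ℝ) / m)..(((h : ℝ) + 1) / m),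
      (Real.sin (π * m * x) - q.eval x) ^ 2 := by
  have hm' : (0:ℝ) < m := by exact_mod_cast hm
  have hle : (h : ℝ) / m ≤ ((h : ℝ) + 1) / m := by
    gcongr <;> linarith
  rw [← aux_halfint m hm h]
  apply intervalIntegral.integral_mono_on hle
  · exact ((Real.continuous_sin.comp (by fun_prop)).pow 2).intervalIntegrable _ _
  · exact (aux_cont m q).intervalIntegrable _ _
  · intro x hx
    have hsq : Real.sin (π * m * x) * q.eval x ≤ 0 := by
      rcases eq_or_lt_of_le hx.1 with h1 | h1
      · rw [← h1, aux_sin_zero m hm h, zero_mul]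
      · rcases eq_or_lt_of_le hx.2 with h2 | h2
        · have : Real.sin (π * m * x) = 0 := by
            rw [h2]
            have := aux_sin_zero m hm (h + 1)
            push_cast at this
            exact this
          rw [this, zero_mul]
        · exact hs x ⟨h1, h2⟩
    nlinarith [sq_nonneg (q.eval x)]

-- full period lower bound under a constant-sign hypothesis on the interior
lemma aux_period (m : ℕ) (hm : 0 < m) (q : Polynomial ℝ) (n : ℤ)
    (hsign : (∀ x ∈ Set.Ioo ((n : ℝ) / m) (((n : ℝ) + 2) / m), 0 ≤ q.eval x) ∨
             (∀ x ∈ Set.Ioo ((n : ℝ) / m) (((n : ℝ) + 2) / m), q.eval x ≤ 0)) :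
    1 / (2 * m) ≤ ∫ x in ((n : ℝ) / m)..(((n : ℝ) + 2) / m),
      (Real.sin (π * m * x) - q.eval x) ^ 2 := by
  have hm' : (0:ℝ) < m := by exact_mod_cast hm
  have hint : ∀ a b : ℝ, IntervalIntegrable
      (fun x => (Real.sin (π * m * x) - q.eval x) ^ 2) volume a b :=
    fun a b => (aux_cont m q).intervalIntegrable a b
  have hsplit : (∫ x in ((n : ℝ) / m)..(((n : ℝ) + 2) / m),
        (Real.sin (π * m * x) - q.eval x) ^ 2)
      = (∫ x in ((n : ℝ) / m)..(((n : ℝ) + 1) / m),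
          (Real.sin (π * m * x) - q.eval x) ^ 2)
      + (∫ x in (((n : ℝ) + 1) / m)..(((n : ℝ) + 2) / m),
          (Real.sin (π * m * x) - q.eval x) ^ 2) :=
    (intervalIntegral.integral_add_adjacent_intervals (hint _ _) (hint _ _)).symm
  -- nonnegativity of each half
  have hnn : ∀ a b : ℝ, a ≤ b → 0 ≤ ∫ x in a..b, (Real.sin (π * m * x) - q.eval x) ^ 2 :=
    fun a b hab => intervalIntegral.integral_nonneg hab (fun u _ => sq_nonneg _)
  have hle1 : (n : ℝ) / m ≤ ((n : ℝ) + 1) / m := by gcongr; · linarith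
  have hle2 : ((n : ℝ) + 1) / m ≤ ((n : ℝ) + 2) / m := by gcongr; · linarith
  -- the interior of each half is inside the interior of the full period
  have hsub1 : Set.Ioo ((n : ℝ) / m) (((n : ℝ) + 1) / m)
      ⊆ Set.Ioo ((n : ℝ) / m) (((n : ℝ) + 2) / m) := Set.Ioo_subset_Ioo le_rfl hle2
  have hsub2 : Set.Ioo (((n : ℝ) + 1) / m) (((n : ℝ) + 2) / m)
      ⊆ Set.Ioo ((n : ℝ) / m) (((n : ℝ) + 2) / m) := Set.Ioo_subset_Ioo hle1 le_rfl
  -- key: on one of the two halves, sin * q ≤ 0 in the interior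
  have key : (∀ x ∈ Set.Ioo ((n : ℝ) / m) (((n : ℝ) + 1) / m),
        Real.sin (π * m * x) * q.eval x ≤ 0) ∨
      (∀ x ∈ Set.Ioo (((n : ℝ) + 1) / m) (((n : ℝ) + 2) / m),
        Real.sin (π * m * x) * q.eval x ≤ 0) := by
    rcases Int.even_or_odd n with hpar | hpar
    · -- n even : sin ≥ 0 on first half, sin ≤ 0 on second half
      rcases hsign with hq | hq
      · right
        intro x hx
        have hsin : Real.sin (π * m * x) ≤ 0 := by
          have := aux_sin_sign m hm (n + 1) (x := x)
            ⟨by push_cast; exact hx.1.le, by push_cast; convert hx.2.le using 2; ring⟩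
          have hodd : ((-1 : ℝ)) ^ (n + 1) = -1 := Odd.neg_one_zpow (by exact hpar.add_one)
          rw [hodd] at this; linarith
        exact mul_nonpos_of_nonpos_of_nonneg hsin (hq x (hsub2 hx))
      · left
        intro x hx
        have hsin : 0 ≤ Real.sin (π * m * x) := by
          have := aux_sin_sign m hm n (x := x) ⟨hx.1.le, hx.2.le⟩
          have heven : ((-1 : ℝ)) ^ n = 1 := Even.neg_one_zpow hpar
          rw [heven, one_mul] at this; exact this
        exact mul_nonpos_of_nonneg_of_nonpos hsin (hq x (hsub1 hx))
    · -- n odd : sin ≤ 0 on first half, sin ≥ 0 on second half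
      rcases hsign with hq | hq
      · left
        intro x hx
        have hsin : Real.sin (π * m * x) ≤ 0 := by
          have := aux_sin_sign m hm n (x := x) ⟨hx.1.le, hx.2.le⟩
          have hodd : ((-1 : ℝ)) ^ n = -1 := Odd.neg_one_zpow hpar
          rw [hodd] at this; linarith
        exact mul_nonpos_of_nonpos_of_nonneg hsin (hq x (hsub1 hx))
      · right
        intro x hx
        have hsin : 0 ≤ Real.sin (π * m * x) := by
          have := aux_sin_sign m hm (n + 1) (x := x)
            ⟨by push_cast; exact hx.1.le, by push_cast; convert hx.2.le using 2; ring⟩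
          have heven : ((-1 : ℝ)) ^ (n + 1) = 1 := Even.neg_one_zpow (by exact hpar.add_one)
          rw [heven, one_mul] at this; exact this
        exact mul_nonpos_of_nonneg_of_nonpos hsin (hq x (hsub2 hx))
  rw [hsplit]
  rcases key with hk | hk
  · have := aux_half_bound m hm q n hk
    have h2 := hnn (((n : ℝ) + 1) / m) (((n : ℝ) + 2) / m) hle2
    linarith
  · have h1 := hnn ((n : ℝ) / m) (((n : ℝ) + 1) / m) hle1
    have hb : 1 / (2 * m) ≤ ∫ x in (((n : ℝ) + 1) / m)..(((n : ℝ) + 2) / m),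
        (Real.sin (π * m * x) - q.eval x) ^ 2 := by
      have := aux_half_bound m hm q (n + 1) (by
        intro x hx
        apply hk x
        constructor
        · convert hx.1 using 2; push_cast; ring
        · convert hx.2 using 2; push_cast; ring)
      push_cast at this
      convert this using 3 <;> push_cast <;> ring
    linarith

/-- For `k ≤ m`, every polynomial of degree at most `k` is far from
`x ↦ sin(π m x)` in `L²([-1,1])`: `∫_{-1}^{1} (sin(π m x) - q(x))² dx ≥ (m-k)/(2m)`. -/
theorem sine_far_from_polynomials_lebesgue
    (m k : ℕ) (hm : 0 < m) (hk : k ≤ m) (q : Polynomial ℝ) (hq : q.natDegree ≤ k) :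
    (∫ x in Set.Icc (-1 : ℝ) 1, (Real.sin (π * m * x) - q.eval x) ^ 2) ≥
      ((m : ℝ) - k) / (2 * m) := by
  classical
  have hm' : (0:ℝ) < m := by exact_mod_cast hm
  set f : ℝ → ℝ := fun x => (Real.sin (π * m * x) - q.eval x) ^ 2 with hf
  set φ : ℕ → ℝ := fun i => (2 * (i:ℝ) - m) / m with hφ
  have hφmono : ∀ i j : ℕ, i ≤ j → φ i ≤ φ j := by
    intro i j hij
    simp only [hφ]
    have h : (i:ℝ) ≤ j := by exact_mod_cast hij
    gcongr
  have hφlt : ∀ i j : ℕ, i < j → φ i < φ j := by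
    intro i j hij
    simp only [hφ]
    have h : (i:ℝ) < j := by exact_mod_cast hij
    rw [div_lt_div_iff₀ hm' hm']
    nlinarith
  -- rewrite as an interval integral
  have hIcc : (∫ x in Set.Icc (-1 : ℝ) 1, f x) = ∫ x in (-1 : ℝ)..1, f x := by
    rw [MeasureTheory.integral_Icc_eq_integral_Ioc,
      ← intervalIntegral.integral_of_le (by norm_num : (-1:ℝ) ≤ 1)]
  have hφ0 : φ 0 = -1 := by simp only [hφ]; field_simp; simp
  have hφm : φ m = 1 := by simp only [hφ]; field_simp; ring
  have hsum : ∑ i ∈ Finset.range m, (∫ x in φ i..φ (i+1), f x) = ∫ x in (-1:ℝ)..1, f x := by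
    rw [← hφ0, ← hφm]
    exact intervalIntegral.sum_integral_adjacent_intervals
      (fun i _ => (aux_cont m q).intervalIntegrable _ _)
  -- good indices: q has constant sign on the interior of the i-th period
  set G : ℕ → Prop := fun i =>
    (∀ x ∈ Set.Ioo (φ i) (φ (i+1)), 0 ≤ q.eval x) ∨
    (∀ x ∈ Set.Ioo (φ i) (φ (i+1)), q.eval x ≤ 0) with hG
  set Bad : Finset ℕ := (Finset.range m).filter (fun i => ¬ G i) with hBad
  set Good : Finset ℕ := (Finset.range m).filter G with hGood
  -- on a bad interval, q has a root in the open interval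
  have hroot : ∀ i ∈ Bad, ∃ z ∈ Set.Ioo (φ i) (φ (i+1)), q.eval z = 0 ∧ q ≠ 0 := by
    intro i hi
    have hiG : ¬ G i := (Finset.mem_filter.mp hi).2
    simp only [hG, not_or, not_forall] at hiG
    obtain ⟨⟨x, hx, hxneg⟩, ⟨y, hy, hypos⟩⟩ := hiG
    rw [not_le] at hxneg hypos
    have hqne : q ≠ 0 := fun h => by simp [h] at hypos
    have hcont : ContinuousOn (fun t => q.eval t) (Set.uIcc x y) :=
      (Polynomial.continuous q).continuousOn
    rcases lt_or_ge x y with hxy | hyx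
    · have := intermediate_value_Ioo hxy.le ((Polynomial.continuous q).continuousOn)
      have h0 : (0:ℝ) ∈ Set.Ioo (q.eval x) (q.eval y) := ⟨hxneg, hypos⟩
      obtain ⟨z, hz, hz0⟩ := this h0
      exact ⟨z, ⟨lt_trans hx.1 hz.1, lt_trans hz.2 hy.2⟩, hz0, hqne⟩
    · have := intermediate_value_Ioo' hyx ((Polynomial.continuous q).continuousOn)
      have h0 : (0:ℝ) ∈ Set.Ioo (q.eval x) (q.eval y) := ⟨hxneg, hypos⟩
      obtain ⟨z, hz, hz0⟩ := this h0
      exact ⟨z, ⟨lt_trans hy.1 hz.1, lt_trans hz.2 hx.2⟩, hz0, hqne⟩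
  choose! z hz hz0 using hroot
  have hBadcard : Bad.card ≤ k := by
    rcases Finset.eq_empty_or_nonempty Bad with hB | hB
    · simp [hB]
    · obtain ⟨i0, hi0⟩ := hB
      have hqne : q ≠ 0 := (hz0 i0 hi0).2
      have hinj : Set.InjOn z Bad := by
        intro i hi j hj hij
        by_contra hne
        rcases Nat.lt_or_ge i j with hlt | hge
        · have h1 := (hz i hi).2
          have h2 := (hz j hj).1
          have h3 := hφmono (i+1) j hlt
          rw [hij] at h1
          linarith
        · have hlt : j < i := by omega
          have h1 := (hz j hj).2
          have h2 := (hz i hi).1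
          have h3 := hφmono (j+1) i hlt
          rw [hij] at h2
          linarith
      have hmaps : ∀ i ∈ Bad, z i ∈ q.roots.toFinset := by
        intro i hi
        rw [Multiset.mem_toFinset, Polynomial.mem_roots']
        exact ⟨hqne, (hz0 i hi).1⟩
      calc Bad.card ≤ q.roots.toFinset.card := Finset.card_le_card_of_injOn z hmaps hinj
        _ ≤ Multiset.card q.roots := q.roots.toFinset_card_le
        _ ≤ q.natDegree := q.card_roots'
        _ ≤ k := hq
  have hgood : ∀ i, G i → 1/(2*(m:ℝ)) ≤ ∫ x in φ i..φ (i+1), f x := by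
    intro i hGi
    have e1 : (((2*(i:ℤ) - m : ℤ) : ℝ))/m = φ i := by push_cast [hφ]; ring
    have e2 : ((((2*(i:ℤ) - m : ℤ) : ℝ)) + 2)/m = φ (i+1) := by push_cast [hφ]; ring
    have := aux_period m hm q (2*(i:ℤ) - m) (by rw [e1, e2]; exact hGi)
    rwa [e1, e2] at this
  have hbound : ∑ i ∈ Finset.range m, (if G i then 1/(2*(m:ℝ)) else 0) ≤
      ∑ i ∈ Finset.range m, (∫ x in φ i..φ (i+1), f x) := by
    apply Finset.sum_le_sum
    intro i hi
    by_cases hGi : G i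
    · simpa [hGi] using hgood i hGi
    · simp only [hGi, if_false]
      exact intervalIntegral.integral_nonneg (hφmono i (i+1) (by omega)) (fun u _ => sq_nonneg _)
  have hsumif : ∑ i ∈ Finset.range m, (if G i then 1/(2*(m:ℝ)) else 0)
      = (Good.card : ℝ) * (1/(2*(m:ℝ))) := by
    rw [← Finset.sum_filter, Finset.sum_const, nsmul_eq_mul]
  have hcards : Good.card + Bad.card = m := by
    rw [hGood, hBad]
    simpa using Finset.card_filter_add_card_filter_not (s := Finset.range m) (p := G)
  have hGoodcard : (m:ℝ) - k ≤ Good.card := by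
    have : m ≤ Good.card + k := by omega
    have : (m:ℝ) ≤ Good.card + k := by exact_mod_cast this
    linarith
  have hfinal : ((m : ℝ) - k) / (2 * m) ≤ (Good.card : ℝ) * (1/(2*(m:ℝ))) := by
    rw [mul_one_div]
    exact div_le_div_of_nonneg_right hGoodcard (by positivity)
  rw [ge_iff_le, hIcc, ← hsum]
  calc ((m : ℝ) - k) / (2 * m) ≤ (Good.card : ℝ) * (1/(2*(m:ℝ))) := hfinal
    _ = ∑ i ∈ Finset.range m, (if G i then 1/(2*(m:ℝ)) else 0) := hsumif.symm
    _ ≤ _ := hbound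
end

section
/- Let d ≥ 1 and δ > 0. There exists a function N : S^{d−1} × S^{d−1} → ℝ implemented by a depth-2 ReLU network of width at most 8d²/δ with weights bounded by 4 such that |N(x,x') − ⟨x,x'⟩| ≤ δ for all x, x' ∈ S^{d−1}. -/
open MeasureTheory Real
open scoped RealInnerProductSpace

/-! ### Auxiliary material for the proof -/

noncomputable def reluCoef (m k : ℕ) : ℝ := if k = 0 then 4 / m - 4 else 8 / m
noncomputable def reluKnot (m k : ℕ) : ℝ := -2 + 4 * k / m
noncomputable def sqApprox (m : ℕ) (s : ℝ) : ℝ :=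
  ∑ k ∈ Finset.range m, reluCoef m k * max 0 (s - reluKnot m k)

lemma myGaussSum (j : ℕ) : ∑ i ∈ Finset.range j, ((i : ℝ) + 1) = j * (j + 1) / 2 := by
  induction j with
  | zero => simp
  | succ n ih => rw [Finset.sum_range_succ, ih]; push_cast; ring

lemma abs_reluCoef (m k : ℕ) (hm : 1 ≤ m) : |reluCoef m k| ≤ 8 := by
  have hM : (1 : ℝ) ≤ m := by exact_mod_cast hm
  have hM0 : (0 : ℝ) < m := by linarith
  rw [reluCoef]
  split_ifs
  · rw [abs_le]
    have h1 : 4 / (m : ℝ) ≤ 4 := by rw [div_le_iff₀ hM0]; nlinarith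
    have h2 : 0 < 4 / (m : ℝ) := by positivity
    constructor <;> nlinarith
  · rw [abs_le]
    have h1 : 8 / (m : ℝ) ≤ 8 := by rw [div_le_iff₀ hM0]; nlinarith
    have h2 : 0 < 8 / (m : ℝ) := by positivity
    constructor <;> nlinarith

lemma sqApprox_bound (m : ℕ) (hm : 1 ≤ m) (s : ℝ) (hs1 : -2 ≤ s) (hs2 : s ≤ 2) :
    0 ≤ sqApprox m s + 4 - s ^ 2 ∧ sqApprox m s + 4 - s ^ 2 ≤ 4 / (m : ℝ) ^ 2 := by
  have hM0 : (0 : ℝ) < m := by exact_mod_cast hm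
  set j : ℕ := min (m - 1) ⌊(s + 2) * m / 4⌋₊ with hjdef
  have hjm : j + 1 ≤ m := by
    have : j ≤ m - 1 := min_le_left _ _
    omega
  have hjmR : (j : ℝ) + 1 ≤ (m : ℝ) := by exact_mod_cast hjm
  have hfl : (j : ℝ) ≤ (s + 2) * m / 4 := by
    have h1 : (⌊(s + 2) * m / 4⌋₊ : ℝ) ≤ (s + 2) * m / 4 := by
      refine Nat.floor_le ?_
      have : (0:ℝ) ≤ s + 2 := by linarith
      positivity
    have h2 : j ≤ ⌊(s + 2) * m / 4⌋₊ := min_le_right _ _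
    calc (j : ℝ) ≤ (⌊(s + 2) * m / 4⌋₊ : ℝ) := by exact_mod_cast h2
      _ ≤ _ := h1
  have hlo' : 4 * (j : ℝ) / m ≤ s + 2 := by
    rw [div_le_iff₀ hM0]; nlinarith [hfl]
  have hlo : reluKnot m j ≤ s := by rw [reluKnot]; linarith
  have hhi' : s + 2 ≤ 4 * ((j : ℝ) + 1) / m := by
    by_cases hc : ⌊(s + 2) * m / 4⌋₊ ≤ m - 1
    · have hj : j = ⌊(s + 2) * m / 4⌋₊ := by omega
      have h3 : (s + 2) * (m:ℝ) / 4 < (j : ℝ) + 1 := by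
        rw [hj]; exact Nat.lt_floor_add_one _
      rw [le_div_iff₀ hM0]; nlinarith [h3]
    · have hj : j = m - 1 := by omega
      have hjm' : (j : ℝ) + 1 = (m : ℝ) := by
        rw [hj]; push_cast [Nat.cast_sub hm]; ring
      rw [hjm']
      have : 4 * (m:ℝ) / m = 4 := by field_simp
      rw [this]; linarith
  have hhi : s ≤ reluKnot m (j + 1) := by rw [reluKnot]; push_cast; linarith
  have hknot : ∀ k : ℕ, j + 1 ≤ k → s ≤ reluKnot m k := by
    intro k hk
    refine le_trans hhi ?_
    rw [reluKnot, reluKnot]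
    have h4 : ((j : ℝ) + 1) ≤ (k : ℝ) := by exact_mod_cast hk
    gcongr
  have hsplit : sqApprox m s = ∑ k ∈ Finset.range (j + 1), reluCoef m k * (s - reluKnot m k) := by
    rw [sqApprox, ← Finset.sum_range_add_sum_Ico _ hjm]
    have h0 : ∑ k ∈ Finset.Ico (j + 1) m, reluCoef m k * max 0 (s - reluKnot m k) = 0 := by
      refine Finset.sum_eq_zero fun k hk => ?_
      have : s ≤ reluKnot m k := hknot k (Finset.mem_Ico.mp hk).1
      rw [max_eq_left (by linarith)]
      ring
    rw [h0, add_zero]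
    refine Finset.sum_congr rfl fun k hk => ?_
    have hk' : k ≤ j := Nat.lt_succ_iff.mp (Finset.mem_range.mp hk)
    have : reluKnot m k ≤ s := by
      refine le_trans ?_ hlo
      rw [reluKnot, reluKnot]
      have : (k : ℝ) ≤ (j : ℝ) := by exact_mod_cast hk'
      gcongr
    rw [max_eq_right (by linarith)]
  have hval : sqApprox m s =
      (4 / m - 4) * (s + 2) + 8 / m * (j * (s + 2)) - 32 / (m:ℝ) ^ 2 * (j * (j + 1) / 2) := by
    rw [hsplit, Finset.sum_range_succ']
    simp only [reluCoef, reluKnot, if_neg (Nat.succ_ne_zero _), if_pos rfl]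
    push_cast
    have hterm : ∀ x ∈ Finset.range j,
        8 / (m:ℝ) * (s - (-2 + 4 * ((x:ℝ) + 1) / m)) =
        8 / (m:ℝ) * (s + 2) - 32 / (m:ℝ) ^ 2 * ((x:ℝ) + 1) := by
      intro x _
      field_simp
      ring
    rw [Finset.sum_congr rfl hterm, Finset.sum_sub_distrib, Finset.sum_const, ← Finset.mul_sum,
      myGaussSum]
    simp only [nsmul_eq_mul, Finset.card_range]
    field_simp
    ring
  have hid : sqApprox m s + 4 - s ^ 2 =
      (s + 2 - 4 * (j:ℝ) / m) * (4 * ((j:ℝ) + 1) / m - (s + 2)) := by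
    rw [hval]
    field_simp
    ring
  constructor
  · rw [hid]
    have h1 : 0 ≤ s + 2 - 4 * (j:ℝ) / m := by linarith
    have h2 : 0 ≤ 4 * ((j:ℝ) + 1) / m - (s + 2) := by linarith
    positivity
  · rw [hid]
    have key : ∀ a b : ℝ, a + b = 4 / (m:ℝ) → a * b ≤ 4 / (m:ℝ) ^ 2 := by
      intro a b hab
      calc a * b ≤ (a + b) ^ 2 / 4 := by nlinarith [sq_nonneg (a - b)]
        _ = 4 / (m:ℝ) ^ 2 := by rw [hab]; ring
    exact key _ _ (by field_simp; ring)

lemma coord_bound (d : ℕ) (x : Sph d) (j : Fin d) : |(x : EuclideanSpace ℝ (Fin d)) j| ≤ 1 := by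
  have hx : ‖(x : EuclideanSpace ℝ (Fin d))‖ = 1 := by
    have := x.2
    simpa [mem_sphere_iff_norm] using this
  have h2 : ∑ i, ((x : EuclideanSpace ℝ (Fin d)) i) ^ 2 = 1 := by
    have h := EuclideanSpace.norm_eq (x : EuclideanSpace ℝ (Fin d))
    rw [hx] at h
    have he : ∑ i, ‖(x : EuclideanSpace ℝ (Fin d)) i‖ ^ 2
        = ∑ i, ((x : EuclideanSpace ℝ (Fin d)) i) ^ 2 := by
      simp [Real.norm_eq_abs, sq_abs]
    rw [he] at h
    have := Real.sqrt_eq_one.mp h.symm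
    linarith
  have h3 : ((x : EuclideanSpace ℝ (Fin d)) j) ^ 2 ≤ 1 := by
    rw [← h2]
    exact Finset.single_le_sum (f := fun i => ((x : EuclideanSpace ℝ (Fin d)) i) ^ 2)
      (fun i _ => sq_nonneg _) (Finset.mem_univ j)
  nlinarith [abs_nonneg ((x : EuclideanSpace ℝ (Fin d)) j),
    sq_abs ((x : EuclideanSpace ℝ (Fin d)) j)]

/-- The inner product `⟨x,x'⟩` on `S^{d-1} × S^{d-1}` can be uniformly
`δ`-approximated by a depth-2 ReLU network of width at most `8d²/δ` with weights bounded
by `4`. -/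
theorem depth_two_approximates_inner_product
    (d : ℕ) (hd : 1 ≤ d) (δ : ℝ) (hδ : 0 < δ) :
    ∃ (r : ℕ) (N : Sph d → Sph d → ℝ), (r : ℝ) ≤ 8 * d ^ 2 / δ ∧
      IsDepth2Net d r 4 (fun x => max 0 x) N ∧
      ∀ x x' : Sph d,
        |N x x' - ⟪(x : EuclideanSpace ℝ (Fin d)), (x' : EuclideanSpace ℝ (Fin d))⟫| ≤ δ := by
  have hdR : (1 : ℝ) ≤ d := by exact_mod_cast hd
  have hinner : ∀ x x' : Sph d,
      ⟪(x : EuclideanSpace ℝ (Fin d)), (x' : EuclideanSpace ℝ (Fin d))⟫ =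
        ∑ j, (x : EuclideanSpace ℝ (Fin d)) j * (x' : EuclideanSpace ℝ (Fin d)) j := by
    intro x x'
    simp [PiLp.inner_apply, RCLike.inner_apply, conj_trivial]
    exact Finset.sum_congr rfl fun _ _ => mul_comm _ _
  by_cases hδ1 : 1 ≤ δ
  · -- trivial network of width 0
    refine ⟨0, fun _ _ => 0, by simp; positivity, ?_, ?_⟩
    · exact ⟨0, 0, 0, 0, 0, fun i => i.elim0, fun i => i.elim0, fun i => i.elim0,
        fun i => i.elim0, by simp, fun x x' => by simp⟩
    · intro x x'
      rw [hinner]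
      have h1 : ∀ j : Fin d, |(x : EuclideanSpace ℝ (Fin d)) j *
          (x' : EuclideanSpace ℝ (Fin d)) j| ≤ 1 := by
        intro j
        rw [abs_mul]
        calc |(x : EuclideanSpace ℝ (Fin d)) j| * |(x' : EuclideanSpace ℝ (Fin d)) j|
            ≤ 1 * 1 := by
              exact mul_le_mul (coord_bound d x j) (coord_bound d x' j)
                (abs_nonneg _) zero_le_one
          _ = 1 := by ring
      have := abs_real_inner_le_norm (x : EuclideanSpace ℝ (Fin d))
        (x' : EuclideanSpace ℝ (Fin d))
      have hx : ‖(x : EuclideanSpace ℝ (Fin d))‖ = 1 := by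
        have := x.2; simpa [mem_sphere_iff_norm] using this
      have hx' : ‖(x' : EuclideanSpace ℝ (Fin d))‖ = 1 := by
        have := x'.2; simpa [mem_sphere_iff_norm] using this
      rw [hx, hx', hinner] at this
      calc |0 - ∑ j, (x : EuclideanSpace ℝ (Fin d)) j * (x' : EuclideanSpace ℝ (Fin d)) j|
          = |∑ j, (x : EuclideanSpace ℝ (Fin d)) j * (x' : EuclideanSpace ℝ (Fin d)) j| := by
            rw [zero_sub, abs_neg]
        _ ≤ 1 * 1 := by rw [one_mul]; linarith [this]
        _ ≤ δ := by linarith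
  · -- real construction
    push_neg at hδ1
    set m : ℕ := ⌈Real.sqrt (d / δ)⌉₊ with hmdef
    have hu1 : (1 : ℝ) ≤ d / δ := by
      rw [le_div_iff₀ hδ]; linarith
    have hu0 : (0 : ℝ) ≤ d / δ := by linarith
    have hsq1 : 1 ≤ Real.sqrt (d / δ) := by
      rw [show (1:ℝ) = Real.sqrt 1 by simp]
      exact Real.sqrt_le_sqrt hu1
    have hm1 : 1 ≤ m := by
      rw [hmdef]
      exact Nat.one_le_ceil_iff.mpr (by linarith)
    have hM0 : (0 : ℝ) < m := by exact_mod_cast hm1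
    have hmlb : Real.sqrt (d / δ) ≤ (m : ℝ) := Nat.le_ceil _
    have hmub : (m : ℝ) ≤ Real.sqrt (d / δ) + 1 := by
      rw [hmdef]
      exact le_of_lt (Nat.ceil_lt_add_one (by linarith))
    have hm2 : (d : ℝ) / δ ≤ (m : ℝ) ^ 2 := by
      calc (d : ℝ) / δ = Real.sqrt (d / δ) ^ 2 := (Real.sq_sqrt hu0).symm
        _ ≤ (m : ℝ) ^ 2 := by nlinarith [Real.sqrt_nonneg ((d:ℝ) / δ)]
    refine ⟨d * (m * 2),
      fun x x' => ∑ j : Fin d,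
        (sqApprox m ((x : EuclideanSpace ℝ (Fin d)) j + (x' : EuclideanSpace ℝ (Fin d)) j)
          - sqApprox m ((x : EuclideanSpace ℝ (Fin d)) j - (x' : EuclideanSpace ℝ (Fin d)) j))
          / 4, ?_, ?_, ?_⟩
    · -- width bound
      push_cast
      have hs : Real.sqrt (d / δ) ≤ (d : ℝ) / δ := by
        nlinarith [Real.sq_sqrt hu0, Real.sqrt_nonneg ((d:ℝ)/δ), hsq1]
      have : (m : ℝ) ≤ 4 * ((d : ℝ) / δ) := by nlinarith
      rw [div_eq_mul_inv, show (8:ℝ) * (d:ℝ)^2 * δ⁻¹ = (d:ℝ) * ((8 * d) * δ⁻¹) by ring]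
      have h8 : (m : ℝ) * 2 ≤ 8 * (d:ℝ) * δ⁻¹ := by
        rw [div_eq_mul_inv] at this
        nlinarith [this]
      calc (d : ℝ) * ((m:ℝ) * 2) ≤ (d:ℝ) * (8 * (d:ℝ) * δ⁻¹) := by
            apply mul_le_mul_of_nonneg_left h8 (by positivity)
        _ = (d:ℝ) * (8 * (d:ℝ) * δ⁻¹) := rfl
    · -- is a depth-2 net
      set e : (Fin d × (Fin m × Fin 2)) ≃ Fin (d * (m * 2)) :=
        (Equiv.prodCongr (Equiv.refl (Fin d)) finProdFinEquiv).trans finProdFinEquiv with hedef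
      refine ⟨fun i j => if j = (e.symm i).1 then 1 else 0,
        fun i j => if j = (e.symm i).1 then (if (e.symm i).2.2 = 0 then 1 else -1) else 0,
        fun i => (if (e.symm i).2.2 = 0 then 1 else -1) * reluCoef m ((e.symm i).2.1 : ℕ) / 4,
        fun i => 2 - 4 * (((e.symm i).2.1 : ℕ) : ℝ) / m, 0, ?_, ?_, ?_, ?_, by simp, ?_⟩
      · intro i j; dsimp only; split_ifs <;> simp
      · intro i j; dsimp only; split_ifs <;> simp
      · intro i
        rw [abs_div, abs_mul]
        have h1 : |if (e.symm i).2.2 = 0 then (1:ℝ) else -1| = 1 := by split_ifs <;> simp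
        rw [h1, one_mul]
        have := abs_reluCoef m ((e.symm i).2.1 : ℕ) hm1
        rw [abs_of_pos (by norm_num : (0:ℝ) < 4)]
        linarith
      · intro i
        set k : ℕ := ((e.symm i).2.1 : ℕ)
        have hk : (k : ℝ) < m := by exact_mod_cast (e.symm i).2.1.isLt
        have hk0 : (0:ℝ) ≤ (k:ℝ) := Nat.cast_nonneg _
        have h1 : 0 ≤ 4 * (k:ℝ) / m := by positivity
        have h2 : 4 * (k:ℝ) / m ≤ 4 := by
          rw [div_le_iff₀ hM0]; nlinarith
        rw [abs_le]
        constructor <;> [linarith; linarith]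
      · intro x x'
        rw [add_zero, ← Equiv.sum_comp e]
        simp only [Equiv.symm_apply_apply]
        rw [Fintype.sum_prod_type]
        refine Finset.sum_congr rfl fun j _ => ?_
        set y := (x : EuclideanSpace ℝ (Fin d)) with hy
        set y' := (x' : EuclideanSpace ℝ (Fin d)) with hy'
        have hcol : ∀ (c : ℝ) (z : EuclideanSpace ℝ (Fin d)),
            ∑ j', (if j' = j then c else 0) * z j' = c * z j := by
          intro c z
          rw [Finset.sum_eq_single j]
          · simp
          · intro b _ hb; simp [hb]
          · intro hmem; exact absurd (Finset.mem_univ j) hmem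
        rw [Fintype.sum_prod_type]
        have hterm : ∀ (k : Fin m) (t : Fin 2),
            ((if t = 0 then (1:ℝ) else -1) * reluCoef m (k : ℕ) / 4) *
              max 0 ((∑ j', (if j' = j then (1:ℝ) else 0) * y j') +
                (∑ j', (if j' = j then (if t = 0 then (1:ℝ) else -1) else 0) * y' j') +
                (2 - 4 * ((k : ℕ) : ℝ) / m)) =
            (if t = 0 then (1:ℝ) else -1) * (reluCoef m (k : ℕ) *
              max 0 ((y j + (if t = 0 then (1:ℝ) else -1) * y' j) - reluKnot m (k : ℕ))) / 4 := by
          intro k t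
          rw [hcol, hcol, one_mul, reluKnot]
          ring_nf
        rw [Finset.sum_congr rfl fun k _ => Finset.sum_congr rfl fun t _ => hterm k t]
        have hsa : ∀ s : ℝ, sqApprox m s = ∑ k : Fin m,
            reluCoef m (k : ℕ) * max 0 (s - reluKnot m (k : ℕ)) := by
          intro s
          rw [sqApprox, ← Fin.sum_univ_eq_sum_range]
        have hkterm : ∀ k : Fin m, (∑ t : Fin 2,
            (if t = 0 then (1:ℝ) else -1) * (reluCoef m (k : ℕ) *
              max 0 ((y j + (if t = 0 then (1:ℝ) else -1) * y' j) - reluKnot m (k : ℕ))) / 4) =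
            reluCoef m (k : ℕ) * max 0 ((y j + y' j) - reluKnot m (k : ℕ)) / 4
              - reluCoef m (k : ℕ) * max 0 ((y j - y' j) - reluKnot m (k : ℕ)) / 4 := by
          intro k
          rw [Fin.sum_univ_two]
          norm_num
          ring_nf
        rw [Finset.sum_congr rfl fun k _ => hkterm k, Finset.sum_sub_distrib,
          ← Finset.sum_div, ← Finset.sum_div, hsa, hsa]
        ring
    · -- error bound
      intro x x'
      rw [hinner]
      set y := (x : EuclideanSpace ℝ (Fin d)) with hy
      set y' := (x' : EuclideanSpace ℝ (Fin d)) with hy'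
      have key : ∀ j : Fin d,
          |(sqApprox m (y j + y' j) - sqApprox m (y j - y' j)) / 4 - y j * y' j|
            ≤ 1 / (m : ℝ) ^ 2 := by
        intro j
        have hxj := abs_le.mp (coord_bound d x j)
        have hxj' := abs_le.mp (coord_bound d x' j)
        obtain ⟨hp1, hp2⟩ := sqApprox_bound m hm1 (y j + y' j)
          (by rw [hy, hy'] at *; linarith [hxj.1, hxj'.1])
          (by rw [hy, hy'] at *; linarith [hxj.2, hxj'.2])
        obtain ⟨hq1, hq2⟩ := sqApprox_bound m hm1 (y j - y' j)
          (by rw [hy, hy'] at *; linarith [hxj.1, hxj'.2])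
          (by rw [hy, hy'] at *; linarith [hxj.2, hxj'.1])
        have hreq : (sqApprox m (y j + y' j) - sqApprox m (y j - y' j)) / 4 - y j * y' j
            = ((sqApprox m (y j + y' j) + 4 - (y j + y' j) ^ 2)
              - (sqApprox m (y j - y' j) + 4 - (y j - y' j) ^ 2)) / 4 := by ring
        rw [show (4:ℝ) / (m:ℝ) ^ 2 = 4 * (1 / (m:ℝ) ^ 2) from by ring] at hp2 hq2
        rw [hreq, abs_le]
        constructor <;> [linarith; linarith]
      calc |(∑ j : Fin d, (sqApprox m (y j + y' j) - sqApprox m (y j - y' j)) / 4)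
            - ∑ j, y j * y' j|
          = |∑ j : Fin d, ((sqApprox m (y j + y' j) - sqApprox m (y j - y' j)) / 4
              - y j * y' j)| := by rw [← Finset.sum_sub_distrib]
        _ ≤ ∑ j : Fin d, |(sqApprox m (y j + y' j) - sqApprox m (y j - y' j)) / 4
              - y j * y' j| := Finset.abs_sum_le_sum_abs _ _
        _ ≤ ∑ _j : Fin d, 1 / (m : ℝ) ^ 2 := Finset.sum_le_sum fun j _ => key j
        _ = (d : ℝ) / (m : ℝ) ^ 2 := by
            rw [Finset.sum_const, Finset.card_univ, Fintype.card_fin, nsmul_eq_mul]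
            ring
        _ ≤ δ := by
            rw [div_le_iff₀ (by positivity)]
            have := (div_le_iff₀ hδ).mp hm2
            nlinarith
end
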